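/- arXiv:1101.5959 — 11 statements merged into one kernel-verified Lean document; each statement's English description precedes it below -/
import Mathlib

section
/- Let X, Y be Banach spaces, F : X ⇉ Y, L > 0, and (x̄, ȳ) ∈ Gr F. Then F is L-open at (x̄, ȳ) if and only if F⁻¹ is L⁻¹-pseudocalm at (ȳ, x̄). -/
open Set Metric Pointwise

/-- `F` is `L`-open at `(x₀, y₀)` iff `F⁻¹` is `L⁻¹`-pseudocalm at `(y₀, x₀)`. -/
theorem open_at_point_iff_inverse_pseudocalm
    {X Y : Type*} [NormedAddCommGroup X] [NormedSpace ℝ X] [CompleteSpace X]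
    [NormedAddCommGroup Y] [NormedSpace ℝ Y] [CompleteSpace Y]
    (F : X → Set Y) (x₀ : X) (y₀ : Y) (hxy : y₀ ∈ F x₀) (L : ℝ) (hL : 0 < L) :
    (∃ ε > 0, ∀ ρ ∈ Ioo (0:ℝ) ε, ball y₀ (ρ * L) ⊆ ⋃ x ∈ ball x₀ ρ, F x)
      ↔
    (∃ V ∈ nhds y₀, ∀ y ∈ V,
        EMetric.infEdist x₀ {x | y ∈ F x} ≤ ENNReal.ofReal (L⁻¹ * ‖y - y₀‖)) := by
  constructor
  · rintro ⟨ε, hε, hopen⟩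
    refine ⟨ball y₀ (ε / 2 * L), ball_mem_nhds _ (by positivity), ?_⟩
    intro y hy
    set r : ℝ := ‖y - y₀‖ with hr
    have hr0 : 0 ≤ r := norm_nonneg _
    have hrlt : r < ε / 2 * L := by simpa [hr, dist_eq_norm] using hy
    have hrL : r / L < ε / 2 := (div_lt_iff₀ hL).2 (by linarith [hrlt])
    have key : EMetric.infEdist x₀ {x | y ∈ F x} ≤ ENNReal.ofReal (r / L) := by
      refine ENNReal.le_of_forall_pos_le_add fun δ hδ _ => ?_
      set ρ : ℝ := min (r / L + δ) ((r / L + ε) / 2) with hρdef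
      have hρgt : r / L < ρ := lt_min (lt_add_of_pos_right _ (by exact_mod_cast hδ)) (by linarith)
      have hρlt : ρ < ε := (min_le_right _ _).trans_lt (by linarith)
      have hρ0 : 0 < ρ := lt_of_le_of_lt (by positivity) hρgt
      have hyball : y ∈ ball y₀ (ρ * L) := by
        simp only [mem_ball, dist_eq_norm, ← hr]
        calc r = r / L * L := by field_simp
        _ < ρ * L := by exact mul_lt_mul_of_pos_right hρgt hL
      obtain ⟨x, hx, hyx⟩ := mem_iUnion₂.1 (hopen ρ ⟨hρ0, hρlt⟩ hyball)
      calc EMetric.infEdist x₀ {x | y ∈ F x}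
          ≤ edist x₀ x := EMetric.infEdist_le_edist_of_mem hyx
        _ = ENNReal.ofReal (dist x₀ x) := by rw [edist_dist]
        _ ≤ ENNReal.ofReal ρ := ENNReal.ofReal_le_ofReal
            (le_of_lt (by simpa [dist_comm] using hx))
        _ ≤ ENNReal.ofReal (r / L + δ) := ENNReal.ofReal_le_ofReal (min_le_left _ _)
        _ ≤ ENNReal.ofReal (r / L) + δ := by
            rw [ENNReal.ofReal_add (by positivity) δ.coe_nonneg]
            simp
    calc EMetric.infEdist x₀ {x | y ∈ F x} ≤ ENNReal.ofReal (r / L) := key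
      _ = ENNReal.ofReal (L⁻¹ * r) := by rw [div_eq_inv_mul]
  · rintro ⟨V, hV, hcalm⟩
    obtain ⟨δ, hδ, hVb⟩ := Metric.mem_nhds_iff.1 hV
    refine ⟨δ / L, by positivity, fun ρ hρ y hy => ?_⟩
    have hylt : ‖y - y₀‖ < ρ * L := by simpa [dist_eq_norm] using hy
    have hyV : y ∈ V := by
      apply hVb
      simp only [mem_ball, dist_eq_norm]
      calc ‖y - y₀‖ < ρ * L := hylt
        _ < δ / L * L := mul_lt_mul_of_pos_right hρ.2 hL
        _ = δ := by field_simp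
    have h1 : EMetric.infEdist x₀ {x | y ∈ F x} < ENNReal.ofReal ρ := by
      calc EMetric.infEdist x₀ {x | y ∈ F x}
          ≤ ENNReal.ofReal (L⁻¹ * ‖y - y₀‖) := hcalm y hyV
        _ < ENNReal.ofReal ρ := by
            apply (ENNReal.ofReal_lt_ofReal_iff hρ.1).2
            calc L⁻¹ * ‖y - y₀‖ < L⁻¹ * (ρ * L) :=
                mul_lt_mul_of_pos_left hylt (by positivity)
              _ = ρ := by field_simp
    obtain ⟨x, hxS, hxd⟩ := EMetric.infEdist_lt_iff.1 h1
    refine mem_iUnion₂.2 ⟨x, ?_, hxS⟩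
    rw [mem_ball, dist_comm]
    exact edist_lt_ofReal.1 hxd
end

section
/- Let X be a metric space, P a metric space, Y a normed space, H : X × P ⇉ Y a set-valued map with 0 ∈ H(x̄, p̄), and S(p) := {x ∈ X : 0 ∈ H(x,p)}. If H is open at linear rate c > 0 with respect to x uniformly in p around (x̄, p̄, 0), then there exist α, β, γ > 0 such that for every (x,p) ∈ B(x̄,α) × B(p̄,β), d(x, S(p)) ≤ c⁻¹ d(0, H(x,p) ∩ B(0,γ)). -/
open Set Metric

/-- Implicit multifunction estimate from openness of `H` with respect to `x`
uniformly in `p` around `(x₀, p₀, 0)`. -/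
theorem implicit_multifunction_estimate
    {X P Y : Type*} [MetricSpace X] [MetricSpace P]
    [NormedAddCommGroup Y] [NormedSpace ℝ Y]
    (H : X → P → Set Y) (x₀ : X) (p₀ : P) (h0 : (0:Y) ∈ H x₀ p₀) (c : ℝ) (hc : 0 < c)
    (hopen : ∃ ε > 0, ∃ U ∈ nhds x₀, ∃ V ∈ nhds p₀, ∃ W ∈ nhds (0:Y),
      ∀ ρ ∈ Ioo (0:ℝ) ε, ∀ p ∈ V, ∀ x ∈ U, ∀ y ∈ W, y ∈ H x p →
        ball y (ρ * c) ⊆ ⋃ x' ∈ ball x ρ, H x' p) :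
    ∃ α > 0, ∃ β > 0, ∃ γ > 0, ∀ x ∈ ball x₀ α, ∀ p ∈ ball p₀ β,
      EMetric.infEdist x {x' | (0:Y) ∈ H x' p} ≤
        ENNReal.ofReal c⁻¹ * EMetric.infEdist (0:Y) (H x p ∩ ball (0:Y) γ) := by
  obtain ⟨ε, hε, U, hU, V, hV, W, hW, hkey⟩ := hopen
  obtain ⟨α, hα, hαU⟩ := Metric.mem_nhds_iff.mp hU
  obtain ⟨β, hβ, hβV⟩ := Metric.mem_nhds_iff.mp hV
  obtain ⟨γ₀, hγ₀, hγW⟩ := Metric.mem_nhds_iff.mp hW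
  refine ⟨α, hα, β, hβ, min γ₀ (c * ε / 2), lt_min hγ₀ (by positivity), ?_⟩
  intro x hx p hp
  set γ := min γ₀ (c * ε / 2) with hγdef
  by_cases hne : (H x p ∩ ball (0:Y) γ).Nonempty
  · have hd_lt : EMetric.infEdist (0:Y) (H x p ∩ ball 0 γ) < ⊤ := by
      obtain ⟨y, hy⟩ := hne
      exact lt_of_le_of_lt (EMetric.infEdist_le_edist_of_mem hy) (edist_lt_top _ _)
    refine ENNReal.le_of_forall_pos_le_add (fun η hη _ => ?_)
    have hη' : (0:ℝ) < (η:ℝ) := hη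
    set δ : ℝ := min (c * ε / 4) (c * η / 2) with hδdef
    have hδ : 0 < δ := lt_min (by positivity) (by positivity)
    have hlt : EMetric.infEdist (0:Y) (H x p ∩ ball 0 γ) <
        EMetric.infEdist (0:Y) (H x p ∩ ball 0 γ) + ENNReal.ofReal δ :=
      ENNReal.lt_add_right hd_lt.ne (by simpa using hδ)
    obtain ⟨y, ⟨hyH, hyB⟩, hy_edist⟩ := EMetric.infEdist_lt_iff.mp hlt
    have hynorm : ‖y‖ < γ := by simpa [dist_eq_norm] using mem_ball.mp hyB
    set ρ : ℝ := c⁻¹ * (‖y‖ + δ) with hρdef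
    have hρpos : 0 < ρ := by positivity
    have hyγ : ‖y‖ < c * ε / 2 := lt_of_lt_of_le hynorm (min_le_right _ _)
    have hρlt : ρ < ε := by
      have h1 : ‖y‖ + δ < c * ε := by
        have := min_le_left (c * ε / 4) (c * η / 2)
        nlinarith
      rw [hρdef, inv_mul_lt_iff₀ hc]
      linarith [h1]
    have hρc : ρ * c = ‖y‖ + δ := by
      rw [hρdef, mul_comm, mul_inv_cancel_left₀ hc.ne']
    have h0mem : (0:Y) ∈ ball y (ρ * c) := by
      rw [mem_ball, hρc, dist_zero_left]
      linarith
    have := hkey ρ ⟨hρpos, hρlt⟩ p (hβV hp) x (hαU hx) y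
      (hγW (mem_ball.mpr (lt_of_lt_of_le (mem_ball.mp hyB) (min_le_left _ _)))) hyH h0mem
    obtain ⟨x', hx'ball, hx'H⟩ := by simpa [mem_iUnion] using this
    have hS : x' ∈ {x' | (0:Y) ∈ H x' p} := hx'H
    have step1 : EMetric.infEdist x {x' | (0:Y) ∈ H x' p} ≤ ENNReal.ofReal ρ :=
      le_trans (EMetric.infEdist_le_edist_of_mem hS)
        (by rw [edist_dist]; exact ENNReal.ofReal_le_ofReal (mem_ball'.mp hx'ball).le)
    have hedist : edist (0:Y) y = ENNReal.ofReal ‖y‖ := by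
      rw [edist_dist, dist_zero_left]
    calc EMetric.infEdist x {x' | (0:Y) ∈ H x' p} ≤ ENNReal.ofReal ρ := step1
      _ = ENNReal.ofReal c⁻¹ * (ENNReal.ofReal ‖y‖ + ENNReal.ofReal δ) := by
          rw [hρdef, ENNReal.ofReal_mul (by positivity),
            ENNReal.ofReal_add (norm_nonneg _) hδ.le]
      _ ≤ ENNReal.ofReal c⁻¹ *
            (EMetric.infEdist (0:Y) (H x p ∩ ball 0 γ) + ENNReal.ofReal δ + ENNReal.ofReal δ) := by
          gcongr
          rw [← hedist]
          exact hy_edist.le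
      _ = ENNReal.ofReal c⁻¹ * EMetric.infEdist (0:Y) (H x p ∩ ball 0 γ) +
            ENNReal.ofReal c⁻¹ * ENNReal.ofReal (2 * δ) := by
          rw [ENNReal.ofReal_mul (by norm_num : (0:ℝ) ≤ 2)]
          rw [ENNReal.ofReal_ofNat]
          ring
      _ ≤ ENNReal.ofReal c⁻¹ * EMetric.infEdist (0:Y) (H x p ∩ ball 0 γ) + η := by
          gcongr
          rw [← ENNReal.ofReal_mul (by positivity), ← ENNReal.ofReal_coe_nnreal]
          apply ENNReal.ofReal_le_ofReal
          have h2 : δ ≤ c * η / 2 := min_le_right _ _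
          calc c⁻¹ * (2 * δ) ≤ c⁻¹ * (2 * (c * η / 2)) := by
                gcongr
            _ = η := by field_simp
  · rw [not_nonempty_iff_eq_empty] at hne
    rw [hne, EMetric.infEdist, EMetric.infEdist, EMetric.infEdist_empty, ENNReal.mul_top (by simp [hc, inv_pos.mpr hc] : ENNReal.ofReal c⁻¹ ≠ 0)]
    exact le_top
end

section
/- Let X, P be metric spaces, Y a normed space, H : X × P ⇉ Y with 0 ∈ H(x̄,p̄), and S(p) := {x : 0 ∈ H(x,p)}. If H is open at linear rate c > 0 with respect to x uniformly in p around (x̄,p̄,0) and Lipschitz-like with respect to p uniformly in x around (x̄,p̄,0) with constant l, then the implicit multifunction S is Lipschitz-like around (p̄, x̄) with constant c⁻¹ l. -/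
open Set Metric Pointwise

/-- If `H` is open at linear rate `c` with respect to `x` uniformly in `p` and
Lipschitz-like with respect to `p` uniformly in `x` with constant `l` around
`(x₀, p₀, 0)`, then the implicit multifunction `S` is Lipschitz-like around
`(p₀, x₀)` with constant `c⁻¹ * l`. -/
theorem implicit_multifunction_lipschitz_like
    {X P Y : Type*} [MetricSpace X] [MetricSpace P]
    [NormedAddCommGroup Y] [NormedSpace ℝ Y]
    (H : X → P → Set Y) (x₀ : X) (p₀ : P) (h0 : (0:Y) ∈ H x₀ p₀)
    (c l : ℝ) (hc : 0 < c) (hl : 0 < l)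
    (hopen : ∃ ε > 0, ∃ U ∈ nhds x₀, ∃ V ∈ nhds p₀, ∃ W ∈ nhds (0:Y),
      ∀ ρ ∈ Ioo (0:ℝ) ε, ∀ p ∈ V, ∀ x ∈ U, ∀ y ∈ W, y ∈ H x p →
        ball y (ρ * c) ⊆ ⋃ x' ∈ ball x ρ, H x' p)
    (hlip : ∃ U ∈ nhds x₀, ∃ V ∈ nhds p₀, ∃ W ∈ nhds (0:Y),
      ∀ x ∈ U, ∀ p₁ ∈ V, ∀ p₂ ∈ V,
        H x p₁ ∩ W ⊆ H x p₂ + (l * dist p₁ p₂) • Metric.closedBall (0:Y) 1) :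
    ∃ V' ∈ nhds p₀, ∃ U' ∈ nhds x₀, ∀ p₁ ∈ V', ∀ p₂ ∈ V',
      ∀ x ∈ {x' | (0:Y) ∈ H x' p₁} ∩ U',
        EMetric.infEdist x {x' | (0:Y) ∈ H x' p₂} ≤
          ENNReal.ofReal (c⁻¹ * l * dist p₁ p₂) := by
  obtain ⟨ε, hε, U₁, hU₁, V₁, hV₁, W₁, hW₁, hop⟩ := hopen
  obtain ⟨U₂, hU₂, V₂, hV₂, W₂, hW₂, hli⟩ := hlip
  obtain ⟨r, hr, hrU⟩ := Metric.mem_nhds_iff.1 (Filter.inter_mem hU₁ hU₂)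
  obtain ⟨δ₀, hδ₀, hδV⟩ := Metric.mem_nhds_iff.1 (Filter.inter_mem hV₁ hV₂)
  obtain ⟨η, hη, hηW⟩ := Metric.mem_nhds_iff.1 (Filter.inter_mem hW₁ hW₂)
  set δ : ℝ := min δ₀ (min (η / (4 * l)) (c * ε / (4 * l))) with hδdef
  have hδpos : 0 < δ := by
    apply lt_min hδ₀
    apply lt_min <;> positivity
  refine ⟨ball p₀ δ, ball_mem_nhds _ hδpos, ball x₀ r, ball_mem_nhds _ hr, ?_⟩
  intro p₁ hp₁ p₂ hp₂ x hx
  obtain ⟨hxS, hxU⟩ := hx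
  have hxU' := hrU hxU
  have hp₁V : p₁ ∈ V₁ ∩ V₂ := hδV (mem_ball.2 (lt_of_lt_of_le (mem_ball.1 hp₁) (min_le_left _ _)))
  have hp₂V : p₂ ∈ V₁ ∩ V₂ := hδV (mem_ball.2 (lt_of_lt_of_le (mem_ball.1 hp₂) (min_le_left _ _)))
  have hd : dist p₁ p₂ < 2 * δ := by
    calc dist p₁ p₂ ≤ dist p₁ p₀ + dist p₂ p₀ := dist_triangle_right _ _ _
    _ < δ + δ := add_lt_add (mem_ball.1 hp₁) (mem_ball.1 hp₂)
    _ = 2 * δ := by ring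
  have hW2mem : (0:Y) ∈ W₂ := (hηW (mem_ball_self hη)).2
  have h0in : (0:Y) ∈ H x p₂ + (l * dist p₁ p₂) • Metric.closedBall (0:Y) 1 :=
    hli x hxU'.2 p₁ hp₁V.2 p₂ hp₂V.2 ⟨hxS, hW2mem⟩
  obtain ⟨a, ha, b, hb, hab⟩ := h0in
  obtain ⟨z, hz, rfl⟩ := hb
  have hznorm : ‖z‖ ≤ 1 := mem_closedBall_zero_iff.1 hz
  have hanorm : ‖a‖ ≤ l * dist p₁ p₂ := by
    have haeq : a = -((l * dist p₁ p₂) • z) := by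
      exact eq_neg_of_add_eq_zero_left hab
    rw [haeq, norm_neg, norm_smul, Real.norm_eq_abs,
      abs_of_nonneg (by positivity)]
    exact mul_le_of_le_one_right (by positivity) hznorm
  have hld : l * dist p₁ p₂ < 2 * l * δ := by
    nlinarith
  have hldη : 2 * l * δ ≤ η / 2 := by
    have : δ ≤ η / (4 * l) := le_trans (min_le_right _ _) (min_le_left _ _)
    rw [le_div_iff₀ (by positivity)] at this
    nlinarith
  have hldε : 2 * l * δ ≤ c * ε / 2 := by
    have : δ ≤ c * ε / (4 * l) := le_trans (min_le_right _ _) (min_le_right _ _)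
    rw [le_div_iff₀ (by positivity)] at this
    nlinarith
  have haW₁ : a ∈ W₁ := by
    refine (hηW ?_).1
    rw [mem_ball_zero_iff]
    linarith
  set t : ℝ := c⁻¹ * l * dist p₁ p₂ with htdef
  have htnonneg : 0 ≤ t := by positivity
  have hct : c * t = l * dist p₁ p₂ := by
    rw [htdef, ← mul_assoc, ← mul_assoc, mul_inv_cancel₀ hc.ne', one_mul]
  have htε : t < ε / 2 := by
    have : c * t < c * (ε / 2) := by rw [hct]; linarith
    exact lt_of_mul_lt_mul_left this hc.le
  refine ENNReal.le_of_forall_pos_le_add fun e he _ => ?_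
  set s : ℝ := min (e : ℝ) (ε / 4) with hsdef
  have hspos : 0 < s := lt_min (by exact_mod_cast he) (by linarith)
  set ρ : ℝ := t + s with hρdef
  have hρIoo : ρ ∈ Ioo (0:ℝ) ε := by
    have hs4 : s ≤ ε / 4 := min_le_right (e:ℝ) (ε / 4)
    exact ⟨by positivity, by linarith⟩
  have h0ball : (0:Y) ∈ ball a (ρ * c) := by
    rw [mem_ball, dist_zero_left]
    have hrc : ρ * c = c * t + c * s := by rw [hρdef]; ring
    rw [hrc, hct]
    nlinarith [mul_pos hc hspos]
  have := hop ρ hρIoo p₂ hp₂V.1 x hxU'.1 a haW₁ ha h0ball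
  rw [mem_iUnion₂] at this
  obtain ⟨x', hx'ball, hx'H⟩ := this
  calc EMetric.infEdist x {x' | (0:Y) ∈ H x' p₂}
      ≤ edist x x' := EMetric.infEdist_le_edist_of_mem hx'H
    _ = ENNReal.ofReal (dist x x') := by rw [edist_dist]
    _ ≤ ENNReal.ofReal ρ := ENNReal.ofReal_le_ofReal
        (le_of_lt (by rw [dist_comm]; exact mem_ball.1 hx'ball))
    _ ≤ ENNReal.ofReal t + ENNReal.ofReal s := ENNReal.ofReal_add_le
    _ ≤ ENNReal.ofReal t + e := by
        refine add_le_add le_rfl ?_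
        rw [← ENNReal.ofReal_coe_nnreal]
        exact ENNReal.ofReal_le_ofReal (min_le_left _ _)
end

section
/- Let X, P be metric spaces, Y a normed space, H : X × P ⇉ Y with 0 ∈ H(x̄,p̄), S(p) := {x : 0 ∈ H(x,p)}. If H is open at linear rate c > 0 with respect to p uniformly in x around (x̄,p̄,0), then there exist α, β, γ > 0 such that for every (x,p) ∈ B(x̄,α) × B(p̄,β), d(p, S⁻¹(x)) ≤ c⁻¹ d(0, H(x,p) ∩ B(0,γ)). -/
open Set Metric

/-- Implicit multifunction estimate from openness of `H` with respect to `p`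
uniformly in `x` around `(x₀, p₀, 0)`. -/
theorem implicit_multifunction_estimate_inverse
    {X P Y : Type*} [MetricSpace X] [MetricSpace P]
    [NormedAddCommGroup Y] [NormedSpace ℝ Y]
    (H : X → P → Set Y) (x₀ : X) (p₀ : P) (h0 : (0:Y) ∈ H x₀ p₀) (c : ℝ) (hc : 0 < c)
    (hopen : ∃ ε > 0, ∃ U ∈ nhds x₀, ∃ V ∈ nhds p₀, ∃ W ∈ nhds (0:Y),
      ∀ ρ ∈ Ioo (0:ℝ) ε, ∀ x ∈ U, ∀ p ∈ V, ∀ y ∈ W, y ∈ H x p →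
        ball y (ρ * c) ⊆ ⋃ p' ∈ ball p ρ, H x p') :
    ∃ α > 0, ∃ β > 0, ∃ γ > 0, ∀ x ∈ ball x₀ α, ∀ p ∈ ball p₀ β,
      EMetric.infEdist p {p' | (0:Y) ∈ H x p'} ≤
        ENNReal.ofReal c⁻¹ * EMetric.infEdist (0:Y) (H x p ∩ ball (0:Y) γ) := by
  obtain ⟨ε, hε, U, hU, V, hV, W, hW, hkey⟩ := hopen
  obtain ⟨α, hα, hαU⟩ := Metric.mem_nhds_iff.1 hU
  obtain ⟨β, hβ, hβV⟩ := Metric.mem_nhds_iff.1 hV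
  obtain ⟨γ', hγ', hγW⟩ := Metric.mem_nhds_iff.1 hW
  refine ⟨α, hα, β, hβ, min γ' (c * ε / 2), lt_min hγ' (by positivity), ?_⟩
  intro x hx p hp
  -- reduce to a pointwise claim
  have key : ∀ y ∈ H x p ∩ ball (0:Y) (min γ' (c * ε / 2)),
      EMetric.infEdist p {p' | (0:Y) ∈ H x p'} ≤ ENNReal.ofReal c⁻¹ * edist (0:Y) y := by
    intro y hy
    obtain ⟨hyH, hyb⟩ := hy
    have hyn : ‖y‖ < min γ' (c * ε / 2) := by
      simpa [dist_eq_norm] using (mem_ball.1 hyb)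
    have hyγ' : ‖y‖ < γ' := lt_of_lt_of_le hyn (min_le_left _ _)
    have hyε : ‖y‖ < c * ε / 2 := lt_of_lt_of_le hyn (min_le_right _ _)
    have hyW : y ∈ W := hγW (by simpa [dist_eq_norm] using hyγ')
    have hedist : edist (0:Y) y = ENNReal.ofReal ‖y‖ := by
      rw [edist_comm, edist_dist, dist_zero_right]
    rw [hedist, ← ENNReal.ofReal_mul (by positivity)]
    refine ENNReal.le_of_forall_pos_le_add fun η hη _ => ?_
    set δ : ℝ := min (c * η) (c * ε / 4) with hδdef
    have hδ : 0 < δ := lt_min (by positivity) (by positivity)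
    set ρ : ℝ := (‖y‖ + δ) / c with hρdef
    have hρ0 : 0 < ρ := by positivity
    have hρε : ρ < ε := by
      rw [hρdef, div_lt_iff₀ hc]
      have h1 : δ ≤ c * ε / 4 := min_le_right _ _
      nlinarith [norm_nonneg y]
    have hmem : (0:Y) ∈ ball y (ρ * c) := by
      rw [mem_ball, dist_comm, dist_eq_norm, sub_zero, hρdef, div_mul_cancel₀ _ (ne_of_gt hc)]
      linarith
    have := hkey ρ ⟨hρ0, hρε⟩ x (hαU hx) p (hβV hp) y hyW hyH hmem
    simp only [mem_iUnion, exists_prop] at this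
    obtain ⟨p', hp', h0p'⟩ := this
    calc EMetric.infEdist p {p' | (0:Y) ∈ H x p'}
        ≤ edist p p' := EMetric.infEdist_le_edist_of_mem h0p'
      _ ≤ ENNReal.ofReal ρ := by
          rw [edist_dist]
          exact ENNReal.ofReal_le_ofReal (le_of_lt (by rw [dist_comm]; exact mem_ball.1 hp'))
      _ ≤ ENNReal.ofReal (c⁻¹ * ‖y‖) + ↑η := by
          have h2 : δ / c ≤ (η : ℝ) := by
            rw [div_le_iff₀ hc]
            calc δ ≤ c * η := min_le_left _ _
              _ = ↑η * c := mul_comm _ _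
          have h3 : ρ ≤ c⁻¹ * ‖y‖ + (η : ℝ) := by
            rw [hρdef, div_eq_inv_mul, mul_add]
            have : c⁻¹ * δ = δ / c := (div_eq_inv_mul _ _).symm
            linarith [h2, this ▸ le_refl (c⁻¹ * δ)]
          calc ENNReal.ofReal ρ ≤ ENNReal.ofReal (c⁻¹ * ‖y‖ + (η:ℝ)) :=
                ENNReal.ofReal_le_ofReal h3
            _ ≤ ENNReal.ofReal (c⁻¹ * ‖y‖) + ENNReal.ofReal (η:ℝ) := ENNReal.ofReal_add_le
            _ = ENNReal.ofReal (c⁻¹ * ‖y‖) + ↑η := by rw [ENNReal.ofReal_coe_nnreal]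
  -- now push the infimum
  rcases (H x p ∩ ball (0:Y) (min γ' (c * ε / 2))).eq_empty_or_nonempty with hS | hS
  · simp only [EMetric.infEdist]
    rw [hS, Metric.infEDist_empty, ENNReal.mul_top (ENNReal.ofReal_pos.2 (inv_pos.2 hc)).ne']
    exact le_top
  · have hk0 : ENNReal.ofReal c⁻¹ ≠ 0 := (ENNReal.ofReal_pos.2 (inv_pos.2 hc)).ne'
    rw [mul_comm, ← ENNReal.div_le_iff_le_mul (Or.inl hk0) (Or.inl ENNReal.ofReal_ne_top)]
    simp only [EMetric.infEdist]
    rw [Metric.le_infEDist]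
    intro y hy
    rw [ENNReal.div_le_iff_le_mul (Or.inl hk0) (Or.inl ENNReal.ofReal_ne_top), mul_comm]
    exact key y hy
end

section
/- Let X, P be metric spaces, Y a normed space, H : X × P ⇉ Y with 0 ∈ H(x̄,p̄), S(p) := {x : 0 ∈ H(x,p)}. If H is open at linear rate c > 0 with respect to p uniformly in x around (x̄,p̄,0) and Lipschitz-like with respect to x uniformly in p around (x̄,p̄,0) with constant l, then S is metrically regular around (p̄, x̄) with constant c⁻¹ l, i.e., there exist neighborhoods V of p̄, U of x̄ such that for all (p,x) ∈ V × U, d(p, S⁻¹(x)) ≤ c⁻¹ l · d(x, S(p)). -/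
open Set Metric Pointwise

set_option maxHeartbeats 1600000 in
/-- If `H` is open at linear rate `c` with respect to `p` uniformly in `x` and
Lipschitz-like with respect to `x` uniformly in `p` with constant `l` around
`(x₀, p₀, 0)`, then the implicit multifunction `S` is metrically regular around
`(p₀, x₀)` with constant `c⁻¹ * l`. -/
theorem implicit_multifunction_metrically_regular
    {X P Y : Type*} [MetricSpace X] [MetricSpace P]
    [NormedAddCommGroup Y] [NormedSpace ℝ Y]
    (H : X → P → Set Y) (x₀ : X) (p₀ : P) (h0 : (0:Y) ∈ H x₀ p₀)
    (c l : ℝ) (hc : 0 < c) (hl : 0 < l)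
    (hopen : ∃ ε > 0, ∃ U ∈ nhds x₀, ∃ V ∈ nhds p₀, ∃ W ∈ nhds (0:Y),
      ∀ ρ ∈ Ioo (0:ℝ) ε, ∀ x ∈ U, ∀ p ∈ V, ∀ y ∈ W, y ∈ H x p →
        ball y (ρ * c) ⊆ ⋃ p' ∈ ball p ρ, H x p')
    (hlip : ∃ U ∈ nhds x₀, ∃ V ∈ nhds p₀, ∃ W ∈ nhds (0:Y),
      ∀ p ∈ V, ∀ x₁ ∈ U, ∀ x₂ ∈ U,
        H x₁ p ∩ W ⊆ H x₂ p + (l * dist x₁ x₂) • Metric.closedBall (0:Y) 1) :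
    ∃ V ∈ nhds p₀, ∃ U ∈ nhds x₀, ∀ p ∈ V, ∀ x ∈ U,
      EMetric.infEdist p {p' | (0:Y) ∈ H x p'} ≤
        ENNReal.ofReal (c⁻¹ * l) * EMetric.infEdist x {x' | (0:Y) ∈ H x' p} := by
  obtain ⟨ε, hε, U₁, hU₁, V₁, hV₁, W₁, hW₁, hop⟩ := hopen
  obtain ⟨U₂, hU₂, V₂, hV₂, W₂, hW₂, hli⟩ := hlip
  have hc0 : c ≠ 0 := hc.ne'
  have hl0 : l ≠ 0 := hl.ne'
  have hci : 0 < c⁻¹ := by positivity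
  have hli2 : 0 < l⁻¹ := by positivity
  have hcl1 : 0 < c * l⁻¹ := by positivity
  have hcl2 : 0 < c⁻¹ * l := by positivity
  -- a common radius for all the neighborhoods
  obtain ⟨r, hr, hrU₁, hrV₁, hrW₁, hrU₂, hrV₂⟩ :
      ∃ r > 0, ball x₀ r ⊆ U₁ ∧ ball p₀ r ⊆ V₁ ∧ ball (0:Y) r ⊆ W₁ ∧
        ball x₀ r ⊆ U₂ ∧ ball p₀ r ⊆ V₂ := by
    obtain ⟨r₁, h1, hs1⟩ := Metric.mem_nhds_iff.1 hU₁
    obtain ⟨r₂, h2, hs2⟩ := Metric.mem_nhds_iff.1 hV₁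
    obtain ⟨r₃, h3, hs3⟩ := Metric.mem_nhds_iff.1 hW₁
    obtain ⟨r₄, h4, hs4⟩ := Metric.mem_nhds_iff.1 hU₂
    obtain ⟨r₅, h5, hs5⟩ := Metric.mem_nhds_iff.1 hV₂
    refine ⟨min (min r₁ r₂) (min r₃ (min r₄ r₅)), by positivity, ?_, ?_, ?_, ?_, ?_⟩
    · exact (ball_subset_ball (by simp)).trans hs1
    · exact (ball_subset_ball (by simp)).trans hs2
    · exact (ball_subset_ball (by simp)).trans hs3
    · exact (ball_subset_ball (by simp)).trans hs4
    · exact (ball_subset_ball (by simp)).trans hs5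
  have h0W₂ : (0:Y) ∈ W₂ := mem_of_mem_nhds hW₂
  -- a sufficiently small scale s
  obtain ⟨s, hs, hs1r, hslr, hsclε, hscl3r, hsc2lr, hs2clε⟩ :
      ∃ s > 0, s ≤ r ∧ l * s ≤ r ∧ c⁻¹ * (l * s) < ε ∧
        c * l⁻¹ * s + 3 * s ≤ r ∧ c * s + 2 * (l * s) ≤ r ∧
        s + 2 * (c⁻¹ * (l * s)) < ε := by
    set K : ℝ := 3 + c * l⁻¹ + c + 2 * l + 2 * (c⁻¹ * l) with hKdef
    have hK : 0 < K := by positivity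
    refine ⟨min (r / K) (ε / (2 * K)), by positivity, ?_, ?_, ?_, ?_, ?_, ?_⟩ <;>
    · have h1 : min (r / K) (ε / (2 * K)) ≤ r / K := min_le_left _ _
      have h2 : min (r / K) (ε / (2 * K)) ≤ ε / (2 * K) := min_le_right _ _
      have h3 : 0 < min (r / K) (ε / (2 * K)) := by positivity
      have h4 : K * min (r / K) (ε / (2 * K)) ≤ r := by
        calc K * min (r / K) (ε / (2 * K)) ≤ K * (r / K) :=
              mul_le_mul_of_nonneg_left h1 hK.le
        _ = r := by field_simp
      have h5 : K * min (r / K) (ε / (2 * K)) ≤ ε / 2 := by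
        calc K * min (r / K) (ε / (2 * K)) ≤ K * (ε / (2 * K)) :=
              mul_le_mul_of_nonneg_left h2 hK.le
        _ = ε / 2 := by field_simp
      have h6 : K * min (r / K) (ε / (2 * K)) =
          3 * min (r / K) (ε / (2 * K)) + c * l⁻¹ * min (r / K) (ε / (2 * K)) +
          c * min (r / K) (ε / (2 * K)) + 2 * (l * min (r / K) (ε / (2 * K))) +
          2 * (c⁻¹ * (l * min (r / K) (ε / (2 * K)))) := by
        rw [hKdef]; ring
      have h7 : 0 < c * l⁻¹ * min (r / K) (ε / (2 * K)) := by positivity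
      have h8 : 0 < c * min (r / K) (ε / (2 * K)) := by positivity
      have h9 : 0 < l * min (r / K) (ε / (2 * K)) := by positivity
      have h10 : 0 < c⁻¹ * (l * min (r / K) (ε / (2 * K))) := by positivity
      linarith
  refine ⟨ball p₀ s, ball_mem_nhds _ hs, ball x₀ s, ball_mem_nhds _ hs, ?_⟩
  intro p hp x hx
  rw [mem_ball] at hp hx
  have hxU₂ : x ∈ U₂ := hrU₂ (mem_ball.2 (lt_of_lt_of_le hx hs1r))
  have hxU₁ : x ∈ U₁ := hrU₁ (mem_ball.2 (lt_of_lt_of_le hx hs1r))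
  -- Lipschitz step: from a solution x₁ near x₀ for parameter p', get a small element of H x p'
  have key : ∀ p', dist p' p₀ < r → ∀ x₁, dist x₁ x₀ < r → (0:Y) ∈ H x₁ p' →
      ∃ y ∈ H x p', ‖y‖ ≤ l * dist x₁ x := by
    intro p' hp' x₁ hx₁ h01
    have hmem : (0:Y) ∈ H x₁ p' ∩ W₂ := ⟨h01, h0W₂⟩
    have := hli p' (hrV₂ (mem_ball.2 hp')) x₁ (hrU₂ (mem_ball.2 hx₁)) x hxU₂ hmem
    rw [Set.mem_add] at this
    obtain ⟨z, hz, w, hw, hzw⟩ := this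
    obtain ⟨u, hu, huw⟩ := Set.mem_smul_set.1 hw
    refine ⟨z, hz, ?_⟩
    have hz' : z = -w := eq_neg_of_add_eq_zero_left hzw
    have hnu : ‖u‖ ≤ 1 := by simpa using mem_closedBall_iff_norm.1 hu
    have hnw : ‖w‖ ≤ l * dist x₁ x := by
      rw [← huw, norm_smul]
      have h1 : ‖(l * dist x₁ x : ℝ)‖ = l * dist x₁ x := by
        rw [Real.norm_eq_abs]; exact abs_of_nonneg (by positivity)
      rw [h1]
      calc l * dist x₁ x * ‖u‖ ≤ l * dist x₁ x * 1 :=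
            mul_le_mul_of_nonneg_left hnu (by positivity)
      _ = l * dist x₁ x := mul_one _
    rw [hz', norm_neg]; exact hnw
  -- openness step: from a small element of H x p', get a solution p'' near p'
  have op : ∀ p', dist p' p₀ < r → ∀ y ∈ H x p', ‖y‖ < r → ∀ ρ, ‖y‖ < ρ * c → ρ < ε →
      ∃ p'', dist p'' p' < ρ ∧ (0:Y) ∈ H x p'' := by
    intro p' hp' y hy hyr ρ hρc hρε
    have hρc0 : 0 < ρ * c := lt_of_le_of_lt (norm_nonneg y) hρc
    have hρ0 : 0 < ρ := by
      have h := mul_pos hρc0 hci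
      rwa [mul_assoc, mul_inv_cancel₀ hc0, mul_one] at h
    have hsub := hop ρ ⟨hρ0, hρε⟩ x hxU₁ p' (hrV₁ (mem_ball.2 hp')) y
      (hrW₁ (mem_ball.2 (by simpa using hyr))) hy
    have h0b : (0:Y) ∈ ball y (ρ * c) := by
      rw [mem_ball, dist_comm, dist_zero_right]; exact hρc
    obtain ⟨p'', hp'', h0H⟩ := Set.mem_iUnion₂.1 (hsub h0b)
    exact ⟨p'', mem_ball.1 hp'', h0H⟩
  -- a priori bound: there is a solution pA for x within s + c⁻¹ * l * s of p
  have apriori : ∃ pA, (0:Y) ∈ H x pA ∧ dist p pA < s + c⁻¹ * (l * s) := by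
    obtain ⟨y, hy, hny⟩ := key p₀ (by simpa using hr) x₀ (by simpa using hr) h0
    have hny' : ‖y‖ < l * s := by
      rw [dist_comm] at hx
      have h1 : l * dist x₀ x < l * s := mul_lt_mul_of_pos_left hx hl
      linarith
    have hrc : c⁻¹ * (l * s) * c = l * s := by field_simp
    obtain ⟨pA, hpA, h0A⟩ := op p₀ (by simpa using hr) y hy
      (by linarith) (c⁻¹ * (l * s)) (by rw [hrc]; exact hny') hsclε
    refine ⟨pA, h0A, ?_⟩
    calc dist p pA ≤ dist p p₀ + dist p₀ pA := dist_triangle _ _ _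
    _ < s + c⁻¹ * (l * s) := by rw [dist_comm p₀ pA]; linarith
  set D := EMetric.infEdist x {x' | (0:Y) ∈ H x' p} with hDdef
  set t : ℝ := c * l⁻¹ * s + s with htdef
  have ht : 0 < t := by positivity
  have hclt : c⁻¹ * l * t = s + c⁻¹ * (l * s) := by
    rw [htdef]; field_simp
  obtain ⟨pA, h0A, hdA⟩ := apriori
  have hLHS_A : EMetric.infEdist p {p' | (0:Y) ∈ H x p'} ≤
      ENNReal.ofReal (s + c⁻¹ * (l * s)) := by
    refine le_trans (EMetric.infEdist_le_edist_of_mem h0A) ?_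
    rw [edist_dist]
    exact ENNReal.ofReal_le_ofReal hdA.le
  rcases le_or_gt (ENNReal.ofReal t) D with hcase | hcase
  · -- far case: use the a priori bound
    calc EMetric.infEdist p {p' | (0:Y) ∈ H x p'}
        ≤ ENNReal.ofReal (s + c⁻¹ * (l * s)) := hLHS_A
    _ = ENNReal.ofReal (c⁻¹ * l * t) := by rw [hclt]
    _ = ENNReal.ofReal (c⁻¹ * l) * ENNReal.ofReal t := by
        rw [ENNReal.ofReal_mul (by positivity)]
    _ ≤ ENNReal.ofReal (c⁻¹ * l) * D := mul_le_mul_right hcase _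
  · -- near case
    have hDfin : D ≠ ⊤ := ne_top_of_lt hcase
    set d : ℝ := D.toReal with hddef
    have hd0 : 0 ≤ d := ENNReal.toReal_nonneg
    have hDd : D = ENNReal.ofReal d := (ENNReal.ofReal_toReal hDfin).symm
    have hdt : d < t := by
      have h1 := hcase
      rw [hDd, ENNReal.ofReal_lt_ofReal_iff ht] at h1
      exact h1
    refine ENNReal.le_of_forall_pos_le_add ?_
    intro ε' hε' _
    have hε'' : (0:ℝ) < ε' := hε'
    set η : ℝ := min s (c * (l⁻¹ * ((ε':ℝ) / 2))) with hηdef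
    have hη : 0 < η := lt_min hs (by positivity)
    have hηs : η ≤ s := min_le_left _ _
    -- find a near-minimizer x'
    have hDlt : D < ENNReal.ofReal (d + η) := by
      rw [hDd]
      exact (ENNReal.ofReal_lt_ofReal_iff (by linarith)).2 (by linarith)
    obtain ⟨x', hx', hex'⟩ := EMetric.infEdist_lt_iff.1 hDlt
    have hdx' : dist x x' < d + η := edist_lt_ofReal.1 hex'
    have hx'x₀ : dist x' x₀ < r := by
      have h1 : dist x' x₀ ≤ dist x' x + dist x x₀ := dist_triangle _ _ _
      rw [dist_comm x' x] at h1
      rw [htdef] at hdt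
      linarith
    obtain ⟨y, hy, hny⟩ := key p (lt_of_lt_of_le hp hs1r) x' hx'x₀ hx'
    have hny' : ‖y‖ < l * (d + η) := by
      rw [dist_comm x' x] at hny
      have h1 : l * dist x x' < l * (d + η) := mul_lt_mul_of_pos_left hdx' hl
      linarith
    have hlts : l * (t + s) = c * s + 2 * (l * s) := by
      rw [htdef]; field_simp; ring
    have hldη : l * (d + η) < l * (t + s) :=
      mul_lt_mul_of_pos_left (by linarith) hl
    have hyr : ‖y‖ < r := by linarith
    set ρ : ℝ := c⁻¹ * (l * (d + η)) with hρdef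
    have hρc : ‖y‖ < ρ * c := by
      have he : c⁻¹ * (l * (d + η)) * c = l * (d + η) := by field_simp
      rw [hρdef, he]; exact hny'
    have hρε : ρ < ε := by
      have h1 : ρ < c⁻¹ * (l * (t + s)) :=
        mul_lt_mul_of_pos_left hldη hci
      have h2 : c⁻¹ * (l * (t + s)) = s + 2 * (c⁻¹ * (l * s)) := by
        rw [htdef]; field_simp; ring
      linarith
    obtain ⟨p'', hp'', h0''⟩ := op p (lt_of_lt_of_le hp hs1r) y hy hyr ρ hρc hρε
    calc EMetric.infEdist p {p' | (0:Y) ∈ H x p'}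
        ≤ edist p p'' := EMetric.infEdist_le_edist_of_mem h0''
    _ = ENNReal.ofReal (dist p p'') := edist_dist _ _
    _ ≤ ENNReal.ofReal ρ := ENNReal.ofReal_le_ofReal (by rw [dist_comm]; exact hp''.le)
    _ = ENNReal.ofReal (c⁻¹ * l * d + c⁻¹ * l * η) := by rw [hρdef]; congr 1; ring
    _ ≤ ENNReal.ofReal (c⁻¹ * l * d) + ENNReal.ofReal (c⁻¹ * l * η) :=
        ENNReal.ofReal_add_le
    _ ≤ ENNReal.ofReal (c⁻¹ * l) * D + ε' := by
        refine add_le_add ?_ ?_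
        · rw [ENNReal.ofReal_mul (by positivity), ← hDd]
        · have hη2 : c⁻¹ * l * η ≤ (ε':ℝ) / 2 := by
            have h1 : η ≤ c * (l⁻¹ * ((ε':ℝ) / 2)) := min_le_right _ _
            have h2 : c⁻¹ * l * (c * (l⁻¹ * ((ε':ℝ) / 2))) = (ε':ℝ) / 2 := by
              field_simp
            have h3 : c⁻¹ * l * η ≤ c⁻¹ * l * (c * (l⁻¹ * ((ε':ℝ) / 2))) :=
              mul_le_mul_of_nonneg_left h1 hcl2.le
            linarith
          calc ENNReal.ofReal (c⁻¹ * l * η) ≤ ENNReal.ofReal ((ε':ℝ)/2) :=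
                ENNReal.ofReal_le_ofReal hη2
          _ ≤ ENNReal.ofReal (ε':ℝ) := ENNReal.ofReal_le_ofReal (by linarith)
          _ = (ε' : ENNReal) := ENNReal.ofReal_coe_nnreal
end

section
/- Let Y, Z, W be Banach spaces, G : Y × Z ⇉ W with w̄ ∈ G(ȳ,z̄), and Γ(z,w) := {y : w ∈ G(y,z)}. Suppose G is Lipschitz-like with respect to z uniformly in y around ((ȳ,z̄),w̄) with constant D ≥ 0, and G is open at linear rate with respect to y uniformly in z around ((ȳ,z̄),w̄) with constant C > 0. Then there exists γ > 0 such that for every (z,w),(z',w') ∈ D(z̄,γ) × D(w̄,γ) and every δ > 0, Γ(z,w) ∩ D(ȳ,γ) ⊆ Γ(z',w') + ((1+δ)/C)(D‖z−z'‖ + ‖w−w'‖)·D_Y. -/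
open Set Metric Pointwise

set_option maxHeartbeats 1600000 in
/-- Lipschitz-like behaviour of the implicit multifunction
`Γ(z,w) := {y : w ∈ G(y,z)}` under partial Lipschitz-likeness and partial openness of
`G` around `((y₀,z₀),w₀)`. -/
theorem implicit_gamma_lipschitz_like
    {Y Z W : Type*} [NormedAddCommGroup Y] [NormedSpace ℝ Y] [CompleteSpace Y]
    [NormedAddCommGroup Z] [NormedSpace ℝ Z] [CompleteSpace Z]
    [NormedAddCommGroup W] [NormedSpace ℝ W] [CompleteSpace W]
    (G : Y → Z → Set W) (y₀ : Y) (z₀ : Z) (w₀ : W) (hw : w₀ ∈ G y₀ z₀)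
    (D C : ℝ) (hD : 0 ≤ D) (hC : 0 < C)
    (hlip : ∃ a > 0, ∀ y ∈ ball y₀ a, ∀ z ∈ ball z₀ a, ∀ z' ∈ ball z₀ a,
      G y z ∩ Metric.closedBall w₀ a ⊆
        G y z' + (D * ‖z - z'‖) • Metric.closedBall (0:W) 1)
    (hopen : ∃ ε > 0, ∀ ρ ∈ Ioo (0:ℝ) ε, ∀ z ∈ ball z₀ ε,
      ∀ y ∈ ball y₀ ε, ∀ w' ∈ ball w₀ ε, w' ∈ G y z →
        ball w' (C * ρ) ⊆ ⋃ y' ∈ ball y ρ, G y' z) :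
    ∃ γ > 0, ∀ z ∈ Metric.closedBall z₀ γ, ∀ w ∈ Metric.closedBall w₀ γ,
      ∀ z' ∈ Metric.closedBall z₀ γ, ∀ w' ∈ Metric.closedBall w₀ γ, ∀ δ > 0,
        {y | w ∈ G y z} ∩ Metric.closedBall y₀ γ ⊆
          {y | w' ∈ G y z'} +
            ((1 + δ) / C * (D * ‖z - z'‖ + ‖w - w'‖)) • Metric.closedBall (0:Y) 1 := by
  obtain ⟨a, ha, hlip⟩ := hlip
  obtain ⟨ε, hε, hopen⟩ := hopen
  obtain ⟨γ, hγpos, hγa, hγε, hB1, hB2⟩ :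
      ∃ γ, 0 < γ ∧ γ < a ∧ γ < ε ∧ (4 * D + 4) * γ ≤ ε ∧ (8 * D + 10) * γ ≤ C * ε := by
    refine ⟨(min (min a ε) (min (ε / (2 * D + 2)) (C * ε / (4 * D + 5)))) / 2,
      by positivity, ?_, ?_, ?_, ?_⟩
    · have h1 : min (min a ε) (min (ε / (2 * D + 2)) (C * ε / (4 * D + 5))) ≤ a :=
        le_trans (min_le_left _ _) (min_le_left _ _)
      have h2 : (0:ℝ) < min (min a ε) (min (ε / (2 * D + 2)) (C * ε / (4 * D + 5))) := by
        positivity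
      linarith
    · have h1 : min (min a ε) (min (ε / (2 * D + 2)) (C * ε / (4 * D + 5))) ≤ ε :=
        le_trans (min_le_left _ _) (min_le_right _ _)
      have h2 : (0:ℝ) < min (min a ε) (min (ε / (2 * D + 2)) (C * ε / (4 * D + 5))) := by
        positivity
      linarith
    · have h1 : min (min a ε) (min (ε / (2 * D + 2)) (C * ε / (4 * D + 5))) ≤
          ε / (2 * D + 2) :=
        le_trans (min_le_right _ _) (min_le_left _ _)
      have h3 : (2 * D + 2) * (ε / (2 * D + 2)) = ε := by
        field_simp
      nlinarith [h1, h3]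
    · have h1 : min (min a ε) (min (ε / (2 * D + 2)) (C * ε / (4 * D + 5))) ≤
          C * ε / (4 * D + 5) :=
        le_trans (min_le_right _ _) (min_le_right _ _)
      have h3 : (4 * D + 5) * (C * ε / (4 * D + 5)) = C * ε := by
        field_simp
      nlinarith [h1, h3]
  refine ⟨γ, hγpos, ?_⟩
  intro z hz w hw' z' hz' w' hw'' δ hδ y hy
  obtain ⟨hyG, hyb⟩ := hy
  simp only [mem_closedBall, dist_eq_norm] at hz hw' hz' hw'' hyb
  -- Lipschitz step
  have hy_a : y ∈ ball y₀ a := by rw [mem_ball, dist_eq_norm]; linarith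
  have hz_a : z ∈ ball z₀ a := by rw [mem_ball, dist_eq_norm]; linarith
  have hz'_a : z' ∈ ball z₀ a := by rw [mem_ball, dist_eq_norm]; linarith
  have hwmem : w ∈ G y z ∩ Metric.closedBall w₀ a :=
    ⟨hyG, by rw [mem_closedBall, dist_eq_norm]; linarith⟩
  have hmem := hlip y hy_a z hz_a z' hz'_a hwmem
  rw [Set.mem_add] at hmem
  obtain ⟨w1, hw1, v, hv, hsum⟩ := hmem
  rw [Set.mem_smul_set] at hv
  obtain ⟨u, hu, rfl⟩ := hv
  rw [mem_closedBall_zero_iff] at hu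
  have hvnorm : ‖w - w1‖ ≤ D * ‖z - z'‖ := by
    have hx : w - w1 = (D * ‖z - z'‖) • u := by rw [← hsum]; abel
    rw [hx, norm_smul, Real.norm_eq_abs, abs_of_nonneg (by positivity)]
    exact mul_le_of_le_one_right (by positivity) hu
  set r : ℝ := D * ‖z - z'‖ + ‖w - w'‖ with hrdef
  have hrnonneg : 0 ≤ r := by positivity
  rcases eq_or_lt_of_le hrnonneg with hr0 | hrpos
  · -- r = 0 : w' = w = w1 ∈ G y z'
    have hww' : ‖w - w'‖ = 0 := by
      have h1 : 0 ≤ D * ‖z - z'‖ := by positivity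
      have h2 : 0 ≤ ‖w - w'‖ := norm_nonneg _
      nlinarith
    have hDz : D * ‖z - z'‖ = 0 := by
      have h2 : 0 ≤ ‖w - w'‖ := norm_nonneg _
      have h1 : 0 ≤ D * ‖z - z'‖ := by positivity
      nlinarith
    have hww1 : w = w1 := by
      have h3 : ‖w - w1‖ ≤ 0 := le_trans hvnorm (le_of_eq hDz)
      exact sub_eq_zero.mp (norm_le_zero_iff.mp h3)
    have hw'w : w' = w :=
      (sub_eq_zero.mp (norm_le_zero_iff.mp (le_of_eq hww'))).symm
    have hw'G : w' ∈ G y z' := by rw [hw'w, hww1]; exact hw1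
    rw [Set.mem_add]
    refine ⟨y, hw'G, 0, ?_, by simp⟩
    exact Set.zero_mem_smul_set (by simp)
  · -- r > 0 : use openness
    obtain ⟨δ', hδ'pos, hδ'le, hδ'1⟩ : ∃ d, 0 < d ∧ d ≤ δ ∧ d ≤ 1 :=
      ⟨min δ 1, lt_min hδ one_pos, min_le_left _ _, min_le_right _ _⟩
    set ρ : ℝ := (1 + δ') * r / C with hρdef
    have hρpos : 0 < ρ := by positivity
    have hzz' : ‖z - z'‖ ≤ 2 * γ := by
      have h1 : ‖z - z'‖ ≤ ‖z - z₀‖ + ‖z₀ - z'‖ := norm_sub_le_norm_sub_add_norm_sub z z₀ z'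
      have h2 : ‖z₀ - z'‖ = ‖z' - z₀‖ := norm_sub_rev _ _
      linarith
    have hww'b : ‖w - w'‖ ≤ 2 * γ := by
      have h1 : ‖w - w'‖ ≤ ‖w - w₀‖ + ‖w₀ - w'‖ := norm_sub_le_norm_sub_add_norm_sub w w₀ w'
      have h2 : ‖w₀ - w'‖ = ‖w' - w₀‖ := norm_sub_rev _ _
      linarith
    have hrbound : r ≤ 2 * D * γ + 2 * γ := by
      have h1 : D * ‖z - z'‖ ≤ D * (2 * γ) := by gcongr
      rw [hrdef]; linarith
    have hρε : ρ < ε := by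
      rw [hρdef, div_lt_iff₀ hC]
      have h1 : (1 + δ') * r ≤ 2 * r :=
        mul_le_mul_of_nonneg_right (by linarith) hrpos.le
      nlinarith [mul_pos (show (0:ℝ) < 4 * D + 6 by linarith) hγpos]
    have hw1ball : w1 ∈ ball w₀ ε := by
      rw [mem_ball, dist_eq_norm]
      have h1 : ‖w1 - w₀‖ ≤ ‖w1 - w‖ + ‖w - w₀‖ := norm_sub_le_norm_sub_add_norm_sub w1 w w₀
      have h2 : ‖w1 - w‖ = ‖w - w1‖ := norm_sub_rev _ _
      have h3 : D * ‖z - z'‖ ≤ 2 * (D * γ) := by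
        calc D * ‖z - z'‖ ≤ D * (2 * γ) := by gcongr
        _ = 2 * (D * γ) := by ring
      have hB1' : 4 * (D * γ) + 4 * γ ≤ ε := by
        have he : (4 * D + 4) * γ = 4 * (D * γ) + 4 * γ := by ring
        linarith
      have hp : 0 ≤ D * γ := mul_nonneg hD hγpos.le
      linarith
    have hsub := hopen ρ ⟨hρpos, hρε⟩ z'
      (by rw [mem_ball, dist_eq_norm]; linarith) y
      (by rw [mem_ball, dist_eq_norm]; linarith) w1 hw1ball hw1
    have hw'in : w' ∈ ball w1 (C * ρ) := by
      rw [mem_ball, dist_eq_norm]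
      have h1 : ‖w' - w1‖ ≤ ‖w' - w‖ + ‖w - w1‖ := norm_sub_le_norm_sub_add_norm_sub w' w w1
      have h2 : ‖w' - w‖ = ‖w - w'‖ := norm_sub_rev _ _
      have hCρ : C * ρ = (1 + δ') * r := by
        rw [hρdef]; field_simp
      rw [hCρ]
      have h3 : ‖w' - w1‖ ≤ r := by rw [hrdef]; linarith
      have he : (1 + δ') * r = r + δ' * r := by ring
      linarith [mul_pos hδ'pos hrpos]
    have hmem2 := hsub hw'in
    simp only [mem_iUnion, exists_prop] at hmem2
    obtain ⟨y', hy'ball, hy'G⟩ := hmem2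
    rw [mem_ball, dist_eq_norm] at hy'ball
    set c : ℝ := (1 + δ) / C * r with hcdef
    have hcpos : 0 < c := by positivity
    have hρc : ρ ≤ c := by
      rw [hρdef, hcdef, div_mul_eq_mul_div]
      gcongr
    have hyy' : ‖y - y'‖ ≤ c := by
      have h2 : ‖y - y'‖ = ‖y' - y‖ := norm_sub_rev _ _
      linarith
    rw [Set.mem_add]
    refine ⟨y', hy'G, y - y', ?_, by abel⟩
    rw [Set.mem_smul_set]
    refine ⟨c⁻¹ • (y - y'), ?_, smul_inv_smul₀ (ne_of_gt hcpos) _⟩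
    rw [mem_closedBall_zero_iff, norm_smul, Real.norm_eq_abs,
      abs_of_nonneg (by positivity)]
    rw [inv_mul_le_iff₀ hcpos]
    simpa using hyy'
end

section
/- Let X, Y, Z, W be Banach spaces, F₁ : X ⇉ Y, F₂ : X ⇉ Z, G : Y × Z ⇉ W, with ȳ ∈ F₁(x̄), z̄ ∈ F₂(x̄), w̄ ∈ G(ȳ,z̄), and define H(x) := G(F₁(x), F₂(x)) := ∪{G(y,z) : y ∈ F₁(x), z ∈ F₂(x)}. Assume: (i) Gr F₁, Gr F₂, Gr G are locally closed around the respective reference points; (ii) F₁ is open at linear rate L > 0 around (x̄,ȳ); (iii) F₂ is Lipschitz-like around (x̄,z̄) with constant M > 0; (iv) G is open at linear rate C > 0 with respect to y uniformly in z around ((ȳ,z̄),w̄); (v) G is Lipschitz-like with respect to z uniformly in y around ((ȳ,z̄),w̄) with constant D ≥ 0; (vi) LC − MD > 0. Then there exists ε > 0 such that for every ρ ∈ (0,ε), B(w̄, (LC−MD)ρ) ⊆ H(B(x̄,ρ)). -/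
open Set Metric Pointwise

set_option maxHeartbeats 1000000

/-- Openness at a linear rate of the composition `H(x) = G(F₁(x), F₂(x))` at the
reference point. -/
theorem openness_of_composition_at_point
    {X Y Z W : Type*} [NormedAddCommGroup X] [NormedSpace ℝ X] [CompleteSpace X]
    [NormedAddCommGroup Y] [NormedSpace ℝ Y] [CompleteSpace Y]
    [NormedAddCommGroup Z] [NormedSpace ℝ Z] [CompleteSpace Z]
    [NormedAddCommGroup W] [NormedSpace ℝ W] [CompleteSpace W]
    (F₁ : X → Set Y) (F₂ : X → Set Z) (G : Y → Z → Set W)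
    (x₀ : X) (y₀ : Y) (z₀ : Z) (w₀ : W)
    (hy : y₀ ∈ F₁ x₀) (hz : z₀ ∈ F₂ x₀) (hw : w₀ ∈ G y₀ z₀)
    (L M C D : ℝ) (hL : 0 < L) (hM : 0 < M) (hC : 0 < C) (hD : 0 ≤ D)
    -- (i) local closedness of the three graphs
    (hcl₁ : ∃ r > 0, IsClosed ({q : X × Y | q.2 ∈ F₁ q.1} ∩ Metric.closedBall (x₀, y₀) r))
    (hcl₂ : ∃ r > 0, IsClosed ({q : X × Z | q.2 ∈ F₂ q.1} ∩ Metric.closedBall (x₀, z₀) r))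
    (hclG : ∃ r > 0, IsClosed ({q : (Y × Z) × W | q.2 ∈ G q.1.1 q.1.2} ∩
      Metric.closedBall ((y₀, z₀), w₀) r))
    -- (ii) F₁ is L-open around (x₀, y₀)
    (hF₁ : ∃ ε > 0, ∃ U ∈ nhds x₀, ∃ V ∈ nhds y₀,
      ∀ ρ ∈ Ioo (0:ℝ) ε, ∀ x ∈ U, ∀ y ∈ V, y ∈ F₁ x →
        ball y (ρ * L) ⊆ ⋃ x' ∈ ball x ρ, F₁ x')
    -- (iii) F₂ is M-Lipschitz-like around (x₀, z₀)
    (hF₂ : ∃ U ∈ nhds x₀, ∃ V ∈ nhds z₀, ∀ x ∈ U, ∀ u ∈ U,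
      F₂ x ∩ V ⊆ F₂ u + (M * ‖x - u‖) • Metric.closedBall (0:Z) 1)
    -- (iv) G is C-open w.r.t. y uniformly in z around ((y₀,z₀),w₀)
    (hGo : ∃ ε > 0, ∃ V ∈ nhds y₀, ∃ V' ∈ nhds z₀, ∃ V'' ∈ nhds w₀,
      ∀ ρ ∈ Ioo (0:ℝ) ε, ∀ z ∈ V', ∀ y ∈ V, ∀ w ∈ V'', w ∈ G y z →
        ball w (ρ * C) ⊆ ⋃ y' ∈ ball y ρ, G y' z)
    -- (v) G is D-Lipschitz-like w.r.t. z uniformly in y around ((y₀,z₀),w₀)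
    (hGl : ∃ V ∈ nhds y₀, ∃ V' ∈ nhds z₀, ∃ V'' ∈ nhds w₀,
      ∀ y ∈ V, ∀ z ∈ V', ∀ z' ∈ V',
        G y z ∩ V'' ⊆ G y z' + (D * ‖z - z'‖) • Metric.closedBall (0:W) 1)
    -- (vi)
    (hrate : 0 < L * C - M * D) :
    ∃ ε > 0, ∀ ρ ∈ Ioo (0:ℝ) ε,
      ball w₀ ((L * C - M * D) * ρ) ⊆
        ⋃ x ∈ ball x₀ ρ, ⋃ y ∈ F₁ x, ⋃ z ∈ F₂ x, G y z := by
  classical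
  obtain ⟨r₁, hr₁pos, hc₁⟩ := hcl₁
  obtain ⟨r₂, hr₂pos, hc₂⟩ := hcl₂
  obtain ⟨r₃, hr₃pos, hc₃⟩ := hclG
  obtain ⟨ε₁, hε₁, U₁, hU₁, V₁, hV₁, hF₁⟩ := hF₁
  obtain ⟨U₂, hU₂, V₂, hV₂, hF₂⟩ := hF₂
  obtain ⟨ε₂, hε₂, Vy, hVy, Vz, hVz, Vw, hVw, hGo⟩ := hGo
  obtain ⟨V'y, hV'y, V'z, hV'z, V'w, hV'w, hGl⟩ := hGl
  obtain ⟨a, hapos, ha⟩ := Metric.nhds_basis_closedBall.mem_iff.1 (Filter.inter_mem hU₁ hU₂)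
  obtain ⟨b, hbpos, hb⟩ := Metric.nhds_basis_closedBall.mem_iff.1
    (Filter.inter_mem hV₁ (Filter.inter_mem hVy hV'y))
  obtain ⟨c, hcpos, hc⟩ := Metric.nhds_basis_closedBall.mem_iff.1
    (Filter.inter_mem hV₂ (Filter.inter_mem hVz hV'z))
  obtain ⟨d, hdpos, hd⟩ := Metric.nhds_basis_closedBall.mem_iff.1
    (Filter.inter_mem hVw hV'w)
  set N : ℝ := L * C - M * D with hNdef
  have hNpos : 0 < N := hrate
  have hLC : 0 < L * C := mul_pos hL hC
  have hMD : 0 ≤ M * D := mul_nonneg hM.le hD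
  have hNLC : N ≤ L * C := by rw [hNdef]; linarith
  clear_value N
  set η : ℝ := min (min a b) (min (min c d) (min r₁ (min r₂ r₃))) with hηdef
  have hηpos : 0 < η :=
    lt_min (lt_min hapos hbpos) (lt_min (lt_min hcpos hdpos)
      (lt_min hr₁pos (lt_min hr₂pos hr₃pos)))
  have hηa : η ≤ a := le_trans (min_le_left _ _) (min_le_left _ _)
  have hηb : η ≤ b := le_trans (min_le_left _ _) (min_le_right _ _)
  have hηc : η ≤ c := le_trans (min_le_right _ _) (le_trans (min_le_left _ _) (min_le_left _ _))
  have hηd : η ≤ d := le_trans (min_le_right _ _) (le_trans (min_le_left _ _) (min_le_right _ _))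
  have hηr₁ : η ≤ r₁ := le_trans (min_le_right _ _) (le_trans (min_le_right _ _) (min_le_left _ _))
  have hηr₂ : η ≤ r₂ := le_trans (min_le_right _ _)
    (le_trans (min_le_right _ _) (le_trans (min_le_right _ _) (min_le_left _ _)))
  have hηr₃ : η ≤ r₃ := le_trans (min_le_right _ _)
    (le_trans (min_le_right _ _) (le_trans (min_le_right _ _) (min_le_right _ _)))
  clear_value η
  have hmaxpos : (0:ℝ) < max 1 (max L M) := lt_of_lt_of_le one_pos (le_max_left _ _)
  set ε : ℝ := min (min ε₁ (ε₂ / L)) (min (η / (2 * N)) (η / max 1 (max L M))) with hεdef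
  have hεpos : 0 < ε := lt_min (lt_min hε₁ (div_pos hε₂ hL))
    (lt_min (div_pos hηpos (by linarith)) (div_pos hηpos hmaxpos))
  have hεε₁ : ε ≤ ε₁ := le_trans (min_le_left _ _) (min_le_left _ _)
  have hεε₂ : L * ε ≤ ε₂ := by
    have h : ε ≤ ε₂ / L := le_trans (min_le_left _ _) (min_le_right _ _)
    rw [le_div_iff₀ hL] at h
    linarith
  have hε2N : 2 * N * ε ≤ η := by
    have h : ε ≤ η / (2 * N) := le_trans (min_le_right _ _) (min_le_left _ _)
    rw [le_div_iff₀ (by linarith : (0:ℝ) < 2 * N)] at h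
    linarith
  have hεmax : max 1 (max L M) * ε ≤ η := by
    have h : ε ≤ η / max 1 (max L M) := le_trans (min_le_right _ _) (min_le_right _ _)
    rw [le_div_iff₀ hmaxpos] at h
    linarith
  clear_value ε
  have hεη : ε ≤ η := by
    have h1 : (1:ℝ) * ε ≤ max 1 (max L M) * ε :=
      mul_le_mul_of_nonneg_right (le_max_left _ _) hεpos.le
    linarith
  have hLεη : L * ε ≤ η := by
    have h1 : L * ε ≤ max 1 (max L M) * ε :=
      mul_le_mul_of_nonneg_right (le_trans (le_max_left _ _) (le_max_right _ _)) hεpos.le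
    linarith
  have hMεη : M * ε ≤ η := by
    have h1 : M * ε ≤ max 1 (max L M) * ε :=
      mul_le_mul_of_nonneg_right (le_trans (le_max_right _ _) (le_max_right _ _)) hεpos.le
    linarith
  refine ⟨ε, hεpos, ?_⟩
  intro ρ hρ w hwball
  have hρpos : 0 < ρ := hρ.1
  have hρε : ρ < ε := hρ.2
  have hww₀ : dist w w₀ < N * ρ := mem_ball.1 hwball
  set θ : ℝ := M * D / (L * C) with hθdef
  have hθ0 : 0 ≤ θ := div_nonneg hMD hLC.le
  have hθ1 : θ < 1 := (div_lt_one hLC).2 (by have := hNpos; rw [hNdef] at this; linarith)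
  clear_value θ
  set r'' : ℝ := (dist w w₀ + N * ρ) / 2 with hr''def
  clear_value r''
  have hdww₀ : 0 ≤ dist w w₀ := dist_nonneg
  have hr''pos : 0 < r'' := by rw [hr''def]; linarith [mul_pos hNpos hρpos]
  have hwr : dist w w₀ < r'' := by rw [hr''def]; linarith
  have hr''N : r'' < N * ρ := by rw [hr''def]; linarith
  set K : ℝ := r'' / N with hKdef
  clear_value K
  have hKpos : 0 < K := by rw [hKdef]; exact div_pos hr''pos hNpos
  have hKρ : K < ρ := by
    rw [hKdef, div_lt_iff₀ hNpos]
    linarith [hr''N, mul_comm ρ N]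
  set τ : ℝ := r'' / (L * C) with hτdef
  clear_value τ
  have hτpos : 0 < τ := by rw [hτdef]; exact div_pos hr''pos hLC
  have hτρ : τ < ρ := by
    rw [hτdef, div_lt_iff₀ hLC]
    have h1 : N * ρ ≤ L * C * ρ := mul_le_mul_of_nonneg_right hNLC hρpos.le
    linarith [hr''N]
  have hN0 : L * C - M * D ≠ 0 := by
    have := hNpos; rw [hNdef] at this; exact this.ne'
  have hτK : τ = (1 - θ) * K := by
    rw [hτdef, hθdef, hKdef, hNdef]
    field_simp [hLC.ne', hN0]
  have hLτC : L * τ * C = r'' := by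
    rw [hτdef]; field_simp [hLC.ne']
  have hDMτ : D * M * τ = θ * r'' := by
    rw [hτdef, hθdef]; field_simp [hLC.ne']
  have hKη : K ≤ η := by linarith
  have hLKη : L * K ≤ η := by
    have h1 : L * K < L * ρ := mul_lt_mul_of_pos_left hKρ hL
    have h2 : L * ρ < L * ε := mul_lt_mul_of_pos_left hρε hL
    linarith
  have hMKη : M * K ≤ η := by
    have h1 : M * K < M * ρ := mul_lt_mul_of_pos_left hKρ hM
    have h2 : M * ρ < M * ε := mul_lt_mul_of_pos_left hρε hM
    linarith
  have hwη : dist w w₀ ≤ η := by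
    have h1 : N * ρ < N * ε := mul_lt_mul_of_pos_left hρε hNpos
    have h2 : 0 ≤ N * ε := le_of_lt (mul_pos hNpos hεpos)
    linarith
  have hwmem : w ∈ Vw ∧ w ∈ V'w := hd (mem_closedBall.2 (le_trans hwη hηd))
  set A : ℕ → X × Y × Z × W → Prop := fun n p =>
    p.2.1 ∈ F₁ p.1 ∧ p.2.2.1 ∈ F₂ p.1 ∧ p.2.2.2 ∈ G p.2.1 p.2.2.1 ∧
    dist p.1 x₀ ≤ (1 - θ ^ n) * K ∧ dist p.2.1 y₀ ≤ (1 - θ ^ n) * (L * K) ∧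
    dist p.2.2.1 z₀ ≤ (1 - θ ^ n) * (M * K) ∧
    (p.2.2.2 = w ∨ dist w p.2.2.2 < θ ^ n * r'') with hAdef
  clear_value A
  have hbounds : ∀ n (p : X × Y × Z × W), A n p →
      dist p.1 x₀ ≤ K ∧ dist p.2.1 y₀ ≤ L * K ∧ dist p.2.2.1 z₀ ≤ M * K ∧
      dist p.2.2.2 w₀ ≤ η := by
    intro n p hp
    simp only [hAdef] at hp
    obtain ⟨h1, h2, h3, h4, h5, h6, h7⟩ := hp
    have hθn0 : (0:ℝ) ≤ θ ^ n := pow_nonneg hθ0 n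
    have hθn1 : θ ^ n ≤ 1 := pow_le_one₀ hθ0 hθ1.le
    have hx : dist p.1 x₀ ≤ K := h4.trans (by linarith [mul_nonneg hθn0 hKpos.le])
    have hy' : dist p.2.1 y₀ ≤ L * K := h5.trans (by linarith [mul_nonneg hθn0 (mul_pos hL hKpos).le])
    have hz' : dist p.2.2.1 z₀ ≤ M * K := h6.trans (by linarith [mul_nonneg hθn0 (mul_pos hM hKpos).le])
    have hwp : dist w p.2.2.2 ≤ r'' := by
      rcases h7 with h7 | h7
      · rw [h7]; simp [hr''pos.le]
      · linarith [mul_le_of_le_one_left hr''pos.le hθn1]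
    have hw' : dist p.2.2.2 w₀ ≤ η := by
      have := dist_triangle p.2.2.2 w w₀
      rw [dist_comm p.2.2.2 w] at this
      linarith [mul_lt_mul_of_pos_left hρε hNpos, hε2N, hr''N]
    exact ⟨hx, hy', hz', hw'⟩
  have hmem : ∀ n (p : X × Y × Z × W), A n p →
      (p.1 ∈ U₁ ∧ p.1 ∈ U₂) ∧ (p.2.1 ∈ V₁ ∧ p.2.1 ∈ Vy ∧ p.2.1 ∈ V'y) ∧
      (p.2.2.1 ∈ V₂ ∧ p.2.2.1 ∈ Vz ∧ p.2.2.1 ∈ V'z) ∧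
      (p.2.2.2 ∈ Vw ∧ p.2.2.2 ∈ V'w) := by
    intro n p hp
    obtain ⟨hx, hy', hz', hw'⟩ := hbounds n p hp
    have hxa := ha (mem_closedBall.2 (by linarith : dist p.1 x₀ ≤ a))
    have hyb := hb (mem_closedBall.2 (by linarith : dist p.2.1 y₀ ≤ b))
    have hzc := hc (mem_closedBall.2 (by linarith : dist p.2.2.1 z₀ ≤ c))
    have hwd := hd (mem_closedBall.2 (by linarith : dist p.2.2.2 w₀ ≤ d))
    exact ⟨⟨hxa.1, hxa.2⟩, ⟨hyb.1, hyb.2.1, hyb.2.2⟩, ⟨hzc.1, hzc.2.1, hzc.2.2⟩,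
      ⟨hwd.1, hwd.2⟩⟩
  have hstep : ∀ n (p : X × Y × Z × W), A n p →
      ∃ q : X × Y × Z × W, A (n + 1) q ∧ dist q.1 p.1 ≤ θ ^ n * τ ∧
        dist q.2.1 p.2.1 ≤ θ ^ n * (L * τ) ∧ dist q.2.2.1 p.2.2.1 ≤ θ ^ n * (M * τ) := by
    intro n p hp
    obtain ⟨⟨hpU₁, hpU₂⟩, ⟨hpV₁, hpVy, hpV'y⟩, ⟨hpV₂, hpVz, hpV'z⟩, ⟨hpVw, hpV'w⟩⟩ :=
      hmem n p hp
    simp only [hAdef] at hp ⊢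
    obtain ⟨h1, h2, h3, h4, h5, h6, h7⟩ := hp
    have hθn0 : (0:ℝ) ≤ θ ^ n := pow_nonneg hθ0 n
    have hθn1 : θ ^ n ≤ 1 := pow_le_one₀ hθ0 hθ1.le
    have hθs : θ ^ (n + 1) ≤ θ ^ n := pow_le_pow_of_le_one hθ0 hθ1.le (Nat.le_succ n)
    rcases h7 with h7 | h7
    · exact ⟨p, ⟨h1, h2, h3, h4.trans (by linarith [mul_le_mul_of_nonneg_right hθs hKpos.le]),
        h5.trans (by linarith [mul_le_mul_of_nonneg_right hθs (mul_pos hL hKpos).le]),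
        h6.trans (by linarith [mul_le_mul_of_nonneg_right hθs (mul_pos hM hKpos).le]), Or.inl h7⟩,
        by simp [mul_nonneg hθn0 hτpos.le],
        by simp [mul_nonneg hθn0 (by positivity : (0:ℝ) ≤ L * τ)],
        by simp [mul_nonneg hθn0 (by positivity : (0:ℝ) ≤ M * τ)]⟩
    · have hθnpos : 0 < θ ^ n := by
        rcases eq_or_lt_of_le hθn0 with h | h
        · exfalso
          rw [← h, zero_mul] at h7
          linarith [dist_nonneg (x := w) (y := p.2.2.2)]
        · exact h
      have hσpos : 0 < θ ^ n * (L * τ) := mul_pos hθnpos (by positivity)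
      have hσε₂ : θ ^ n * (L * τ) < ε₂ := by
        linarith [mul_le_of_le_one_left (mul_pos hL hτpos).le hθn1,
          mul_lt_mul_of_pos_left hτρ hL, mul_lt_mul_of_pos_left hρε hL]
      have hwpw : w ∈ ball p.2.2.2 (θ ^ n * (L * τ) * C) := by
        rw [mem_ball]
        calc dist w p.2.2.2 < θ ^ n * r'' := h7
        _ = θ ^ n * (L * τ) * C := by rw [mul_assoc, hLτC]
      have hGball := hGo (θ ^ n * (L * τ)) ⟨hσpos, hσε₂⟩ p.2.2.1 hpVz p.2.1 hpVy
        p.2.2.2 hpVw h3 hwpw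
      simp only [Set.mem_iUnion] at hGball
      obtain ⟨y₁, hy₁ball, hy₁G⟩ := hGball
      have hy₁dist : dist y₁ p.2.1 < θ ^ n * (L * τ) := mem_ball.1 hy₁ball
      have hτnpos : 0 < θ ^ n * τ := mul_pos hθnpos hτpos
      have hτnε₁ : θ ^ n * τ < ε₁ := by linarith [mul_le_of_le_one_left hτpos.le hθn1]
      have hy₁ball' : y₁ ∈ ball p.2.1 (θ ^ n * τ * L) := by
        rw [mem_ball]
        calc dist y₁ p.2.1 < θ ^ n * (L * τ) := hy₁dist
        _ = θ ^ n * τ * L := by ring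
      have hFball := hF₁ (θ ^ n * τ) ⟨hτnpos, hτnε₁⟩ p.1 hpU₁ p.2.1 hpV₁ h1 hy₁ball'
      simp only [Set.mem_iUnion] at hFball
      obtain ⟨x₁, hx₁ball, hx₁F⟩ := hFball
      have hx₁dist : dist x₁ p.1 < θ ^ n * τ := mem_ball.1 hx₁ball
      have hsumx : θ ^ n * τ + (1 - θ ^ n) * K = (1 - θ ^ (n + 1)) * K := by
        rw [hτK, pow_succ]; ring
      have hx₁x₀ : dist x₁ x₀ ≤ (1 - θ ^ (n + 1)) * K := by
        have := dist_triangle x₁ p.1 x₀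
        linarith
      have hsumy : θ ^ n * (L * τ) + (1 - θ ^ n) * (L * K) = (1 - θ ^ (n + 1)) * (L * K) := by
        rw [hτK, pow_succ]; ring
      have hy₁y₀ : dist y₁ y₀ ≤ (1 - θ ^ (n + 1)) * (L * K) := by
        have := dist_triangle y₁ p.2.1 y₀
        linarith
      have hθn10 : (0:ℝ) ≤ θ ^ (n + 1) := pow_nonneg hθ0 (n + 1)
      have hθn11 : θ ^ (n + 1) ≤ 1 := pow_le_one₀ hθ0 hθ1.le
      have hx₁K : dist x₁ x₀ ≤ K := by linarith [mul_nonneg hθn10 hKpos.le]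
      have hx₁U₂ : x₁ ∈ U₂ := (ha (mem_closedBall.2 (by linarith : dist x₁ x₀ ≤ a))).2
      have hz₂ := hF₂ p.1 hpU₂ x₁ hx₁U₂ ⟨h2, hpV₂⟩
      rw [Set.mem_add] at hz₂
      obtain ⟨z₁, hz₁F, v, hv, hvsum⟩ := hz₂
      rw [Set.mem_smul_set] at hv
      obtain ⟨u, hu, rfl⟩ := hv
      have hu1 : ‖u‖ ≤ 1 := by
        rw [mem_closedBall, dist_zero_right] at hu; exact hu
      have hdistz : dist p.2.2.1 z₁ ≤ M * dist p.1 x₁ := by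
        have hveq : p.2.2.1 - z₁ = (M * ‖p.1 - x₁‖) • u := by
          rw [← hvsum]; abel
        rw [dist_eq_norm, hveq, norm_smul, dist_eq_norm]
        have h0 : 0 ≤ M * ‖p.1 - x₁‖ := by positivity
        rw [Real.norm_eq_abs, abs_of_nonneg h0]
        linarith [mul_le_of_le_one_right h0 hu1]
      have hz₁dist : dist z₁ p.2.2.1 ≤ θ ^ n * (M * τ) := by
        rw [dist_comm]
        have hpx : dist p.1 x₁ < θ ^ n * τ := by rw [dist_comm]; exact hx₁dist
        calc dist p.2.2.1 z₁ ≤ M * dist p.1 x₁ := hdistz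
        _ ≤ M * (θ ^ n * τ) := mul_le_mul_of_nonneg_left hpx.le hM.le
        _ = θ ^ n * (M * τ) := by ring
      have hsumz : θ ^ n * (M * τ) + (1 - θ ^ n) * (M * K) = (1 - θ ^ (n + 1)) * (M * K) := by
        rw [hτK, pow_succ]; ring
      have hz₁z₀ : dist z₁ z₀ ≤ (1 - θ ^ (n + 1)) * (M * K) := by
        have := dist_triangle z₁ p.2.2.1 z₀
        linarith
      have hy₁V'y : y₁ ∈ V'y := by
        refine (hb (mem_closedBall.2 ?_)).2.2
        have h1θ : (1 - θ ^ (n + 1)) * (L * K) ≤ L * K := by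
          linarith [mul_nonneg hθn10 (mul_pos hL hKpos).le]
        linarith
      have hz₁V'z : z₁ ∈ V'z := by
        refine (hc (mem_closedBall.2 ?_)).2.2
        have h1θ : (1 - θ ^ (n + 1)) * (M * K) ≤ M * K := by
          linarith [mul_nonneg hθn10 (mul_pos hM hKpos).le]
        linarith
      have hw₂ := hGl y₁ hy₁V'y p.2.2.1 hpV'z z₁ hz₁V'z ⟨hy₁G, hwmem.2⟩
      rw [Set.mem_add] at hw₂
      obtain ⟨w₁, hw₁G, v', hv', hv'sum⟩ := hw₂
      rw [Set.mem_smul_set] at hv'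
      obtain ⟨u', hu', rfl⟩ := hv'
      have hu'1 : ‖u'‖ ≤ 1 := by
        rw [mem_closedBall, dist_zero_right] at hu'; exact hu'
      have hdistw : dist w w₁ ≤ D * dist p.2.2.1 z₁ := by
        have hveq : w - w₁ = (D * ‖p.2.2.1 - z₁‖) • u' := by
          rw [← hv'sum]; abel
        rw [dist_eq_norm, hveq, norm_smul, dist_eq_norm]
        have h0 : 0 ≤ D * ‖p.2.2.1 - z₁‖ := by positivity
        rw [Real.norm_eq_abs, abs_of_nonneg h0]
        linarith [mul_le_of_le_one_right h0 hu'1]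
      refine ⟨(x₁, y₁, z₁, w₁), ⟨hx₁F, hz₁F, hw₁G, hx₁x₀, hy₁y₀, hz₁z₀, ?_⟩,
        hx₁dist.le, hy₁dist.le, hz₁dist⟩
      rcases hD.lt_or_eq with hDpos | hDzero
      · right
        have hb1 : dist w w₁ ≤ D * (M * dist p.1 x₁) := by
          linarith [mul_le_mul_of_nonneg_left hdistz hD]
        have hpx : dist p.1 x₁ < θ ^ n * τ := by rw [dist_comm]; exact hx₁dist
        have hb2 : D * (M * dist p.1 x₁) < D * (M * (θ ^ n * τ)) :=
          mul_lt_mul_of_pos_left (mul_lt_mul_of_pos_left hpx hM) hDpos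
        have hb3 : D * (M * (θ ^ n * τ)) = θ ^ (n + 1) * r'' := by
          rw [pow_succ]
          calc D * (M * (θ ^ n * τ)) = θ ^ n * (D * M * τ) := by ring
          _ = θ ^ n * (θ * r'') := by rw [hDMτ]
          _ = θ ^ n * θ * r'' := by ring
        linarith
      · left
        have hb1 : dist w w₁ ≤ 0 := by
          rw [← hDzero] at hdistw
          simpa using hdistw
        exact (dist_le_zero.1 hb1).symm
  have hA0 : A 0 (x₀, y₀, z₀, w₀) := by
    simp only [hAdef]
    refine ⟨hy, hz, hw, by simp, by simp, by simp, Or.inr ?_⟩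
    simpa using hwr
  choose! g hg using hstep
  set f : ℕ → X × Y × Z × W := fun n =>
    Nat.rec (x₀, y₀, z₀, w₀) (fun k ih => g k ih) n with hfdef
  have hfA : ∀ n, A n (f n) := by
    intro n
    induction n with
    | zero => exact hA0
    | succ k ih => exact (hg k (f k) ih).1
  have hfx : ∀ n, dist ((f n).1) ((f (n + 1)).1) ≤ τ * θ ^ n := by
    intro n
    rw [dist_comm, mul_comm]
    exact (hg n (f n) (hfA n)).2.1
  have hfy : ∀ n, dist ((f n).2.1) ((f (n + 1)).2.1) ≤ (L * τ) * θ ^ n := by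
    intro n
    rw [dist_comm, mul_comm]
    exact (hg n (f n) (hfA n)).2.2.1
  have hfz : ∀ n, dist ((f n).2.2.1) ((f (n + 1)).2.2.1) ≤ (M * τ) * θ ^ n := by
    intro n
    rw [dist_comm, mul_comm]
    exact (hg n (f n) (hfA n)).2.2.2
  obtain ⟨xlim, hxlim⟩ := cauchySeq_tendsto_of_complete (cauchySeq_of_le_geometric θ τ hθ1 hfx)
  obtain ⟨ylim, hylim⟩ := cauchySeq_tendsto_of_complete
    (cauchySeq_of_le_geometric θ (L * τ) hθ1 hfy)
  obtain ⟨zlim, hzlim⟩ := cauchySeq_tendsto_of_complete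
    (cauchySeq_of_le_geometric θ (M * τ) hθ1 hfz)
  have hfA' : ∀ n, (f n).2.1 ∈ F₁ ((f n).1) ∧ (f n).2.2.1 ∈ F₂ ((f n).1) ∧
      (f n).2.2.2 ∈ G ((f n).2.1) ((f n).2.2.1) ∧
      dist ((f n).1) x₀ ≤ (1 - θ ^ n) * K ∧ dist ((f n).2.1) y₀ ≤ (1 - θ ^ n) * (L * K) ∧
      dist ((f n).2.2.1) z₀ ≤ (1 - θ ^ n) * (M * K) ∧
      ((f n).2.2.2 = w ∨ dist w ((f n).2.2.2) < θ ^ n * r'') := by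
    intro n
    have := hfA n
    simpa only [hAdef] using this
  have hfw : ∀ n, dist ((f n).2.2.2) w ≤ r'' * θ ^ n := by
    intro n
    rcases (hfA' n).2.2.2.2.2.2 with h7 | h7
    · rw [h7]; simp [mul_nonneg hr''pos.le (pow_nonneg hθ0 n)]
    · rw [dist_comm]; linarith [h7]
  have hwlim : Filter.Tendsto (fun n => (f n).2.2.2) Filter.atTop (nhds w) := by
    rw [tendsto_iff_dist_tendsto_zero]
    refine squeeze_zero (fun n => dist_nonneg) hfw ?_
    simpa using (tendsto_pow_atTop_nhds_zero_of_lt_one hθ0 hθ1).const_mul r''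
  have hGr₁ : (xlim, ylim) ∈ {q : X × Y | q.2 ∈ F₁ q.1} ∩ Metric.closedBall (x₀, y₀) r₁ := by
    refine hc₁.mem_of_tendsto (hxlim.prodMk_nhds hylim) (Filter.Eventually.of_forall fun n => ?_)
    obtain ⟨hx, hy', hz', hw'⟩ := hbounds n (f n) (hfA n)
    refine ⟨(hfA' n).1, ?_⟩
    rw [mem_closedBall, Prod.dist_eq]
    exact max_le (by linarith) (by linarith)
  have hGr₂ : (xlim, zlim) ∈ {q : X × Z | q.2 ∈ F₂ q.1} ∩ Metric.closedBall (x₀, z₀) r₂ := by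
    refine hc₂.mem_of_tendsto (hxlim.prodMk_nhds hzlim) (Filter.Eventually.of_forall fun n => ?_)
    obtain ⟨hx, hy', hz', hw'⟩ := hbounds n (f n) (hfA n)
    refine ⟨(hfA' n).2.1, ?_⟩
    rw [mem_closedBall, Prod.dist_eq]
    exact max_le (by linarith) (by linarith)
  have hGrG : ((ylim, zlim), w) ∈
      {q : (Y × Z) × W | q.2 ∈ G q.1.1 q.1.2} ∩ Metric.closedBall ((y₀, z₀), w₀) r₃ := by
    refine hc₃.mem_of_tendsto ((hylim.prodMk_nhds hzlim).prodMk_nhds hwlim)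
      (Filter.Eventually.of_forall fun n => ?_)
    obtain ⟨hx, hy', hz', hw'⟩ := hbounds n (f n) (hfA n)
    refine ⟨(hfA' n).2.2.1, ?_⟩
    rw [mem_closedBall, Prod.dist_eq, Prod.dist_eq]
    exact max_le (max_le (by linarith) (by linarith)) (by linarith)
  have hxlimK : xlim ∈ Metric.closedBall x₀ K := by
    refine isClosed_closedBall.mem_of_tendsto hxlim (Filter.Eventually.of_forall fun n => ?_)
    exact mem_closedBall.2 (hbounds n (f n) (hfA n)).1
  have hxlimρ : xlim ∈ ball x₀ ρ := mem_ball.2 (lt_of_le_of_lt (mem_closedBall.1 hxlimK) hKρ)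
  simp only [Set.mem_iUnion]
  exact ⟨xlim, hxlimρ, ylim, hGr₁.1, zlim, hGr₂.1, hGrG.1⟩
end

section
/- Under the assumptions of the composition openness theorem (F₁ L-open around (x̄,ȳ), F₂ M-Lipschitz-like around (x̄,z̄), G C-open in y uniformly in z and D-Lipschitz-like in z uniformly in y around ((ȳ,z̄),w̄), graphs locally closed, LC − MD > 0), there exists ε > 0 such that for every ρ ∈ (0, ε/2) and every (x,y,z,w) ∈ B(x̄,ε/2) × B(ȳ,ε/2) × B(z̄,ε/2) × B(w̄,ε/2) with y ∈ F₁(x), z ∈ F₂(x), and w ∈ G(y,z), one has B(w, (LC−MD)ρ) ⊆ H(B(x,ρ)), where H(x) := G(F₁(x), F₂(x)). -/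
open Set Metric Pointwise Filter

/-- Choice of the geometric ratio `q` and initial step `σ` for the iteration. -/
lemma exists_q_sigma (L C M D ρ t : ℝ) (hLC : 0 < L * C) (hMD : 0 ≤ M * D)
    (hρ : 0 < ρ) (ht0 : 0 ≤ t) (ht : t < (L * C - M * D) * ρ) :
    ∃ q σ : ℝ, 0 < q ∧ q < 1 ∧ M * D < L * C * q ∧ 0 < σ ∧ t < L * C * σ ∧
      σ < (1 - q) * ρ := by
  have h2 : (0:ℝ) < 2 * (L * C) * ρ := by positivity
  set q := (M * D * ρ + L * C * ρ - t) / (2 * (L * C) * ρ) with hqdef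
  have hqm : q * (2 * (L * C) * ρ) = M * D * ρ + L * C * ρ - t :=
    div_mul_cancel₀ _ (ne_of_gt h2)
  have hq0 : 0 < q := by
    rw [hqdef, lt_div_iff₀ h2]; nlinarith
  have hq1 : q < 1 := by
    rw [hqdef, div_lt_one h2]; nlinarith
  have hq2 : M * D < L * C * q := by
    nlinarith [mul_pos hρ hLC]
  have hq3 : L * C * ((1 - q) * ρ) > t := by nlinarith
  refine ⟨q, ((1 - q) * ρ + t / (L * C)) / 2, hq0, hq1, hq2, ?_, ?_, ?_⟩
  · have : 0 < (1 - q) * ρ := by nlinarith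
    positivity
  · have : L * C * (t / (L * C)) = t := by field_simp; exact mul_div_cancel_left₀ t (ne_of_gt hLC)
    nlinarith [hq3, this]
  · have : L * C * (t / (L * C)) = t := by field_simp; exact mul_div_cancel_left₀ t (ne_of_gt hLC)
    nlinarith

set_option maxHeartbeats 4000000 in
/-- Openness at a linear rate of the composition `H(x) = G(F₁(x), F₂(x))` at points of
`Gr H` whose intermediate points lie near the reference point. -/
theorem openness_of_composition_near_point
    {X Y Z W : Type*} [NormedAddCommGroup X] [NormedSpace ℝ X] [CompleteSpace X]
    [NormedAddCommGroup Y] [NormedSpace ℝ Y] [CompleteSpace Y]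
    [NormedAddCommGroup Z] [NormedSpace ℝ Z] [CompleteSpace Z]
    [NormedAddCommGroup W] [NormedSpace ℝ W] [CompleteSpace W]
    (F₁ : X → Set Y) (F₂ : X → Set Z) (G : Y → Z → Set W)
    (x₀ : X) (y₀ : Y) (z₀ : Z) (w₀ : W)
    (hy : y₀ ∈ F₁ x₀) (hz : z₀ ∈ F₂ x₀) (hw : w₀ ∈ G y₀ z₀)
    (L M C D : ℝ) (hL : 0 < L) (hM : 0 < M) (hC : 0 < C) (hD : 0 ≤ D)
    -- (i) local closedness of the three graphs
    (hcl₁ : ∃ r > 0, IsClosed ({q : X × Y | q.2 ∈ F₁ q.1} ∩ Metric.closedBall (x₀, y₀) r))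
    (hcl₂ : ∃ r > 0, IsClosed ({q : X × Z | q.2 ∈ F₂ q.1} ∩ Metric.closedBall (x₀, z₀) r))
    (hclG : ∃ r > 0, IsClosed ({q : (Y × Z) × W | q.2 ∈ G q.1.1 q.1.2} ∩
      Metric.closedBall ((y₀, z₀), w₀) r))
    -- (ii) F₁ is L-open around (x₀, y₀)
    (hF₁ : ∃ ε > 0, ∃ U ∈ nhds x₀, ∃ V ∈ nhds y₀,
      ∀ ρ ∈ Ioo (0:ℝ) ε, ∀ x ∈ U, ∀ y ∈ V, y ∈ F₁ x →
        ball y (ρ * L) ⊆ ⋃ x' ∈ ball x ρ, F₁ x')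
    -- (iii) F₂ is M-Lipschitz-like around (x₀, z₀)
    (hF₂ : ∃ U ∈ nhds x₀, ∃ V ∈ nhds z₀, ∀ x ∈ U, ∀ u ∈ U,
      F₂ x ∩ V ⊆ F₂ u + (M * ‖x - u‖) • Metric.closedBall (0:Z) 1)
    -- (iv) G is C-open w.r.t. y uniformly in z around ((y₀,z₀),w₀)
    (hGo : ∃ ε > 0, ∃ V ∈ nhds y₀, ∃ V' ∈ nhds z₀, ∃ V'' ∈ nhds w₀,
      ∀ ρ ∈ Ioo (0:ℝ) ε, ∀ z ∈ V', ∀ y ∈ V, ∀ w ∈ V'', w ∈ G y z →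
        ball w (ρ * C) ⊆ ⋃ y' ∈ ball y ρ, G y' z)
    -- (v) G is D-Lipschitz-like w.r.t. z uniformly in y around ((y₀,z₀),w₀)
    (hGl : ∃ V ∈ nhds y₀, ∃ V' ∈ nhds z₀, ∃ V'' ∈ nhds w₀,
      ∀ y ∈ V, ∀ z ∈ V', ∀ z' ∈ V',
        G y z ∩ V'' ⊆ G y z' + (D * ‖z - z'‖) • Metric.closedBall (0:W) 1)
    -- (vi)
    (hrate : 0 < L * C - M * D) :
    ∃ ε > 0, ∀ ρ ∈ Ioo (0:ℝ) (ε / 2),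
      ∀ x ∈ ball x₀ (ε / 2), ∀ y ∈ ball y₀ (ε / 2), ∀ z ∈ ball z₀ (ε / 2),
        ∀ w ∈ ball w₀ (ε / 2), y ∈ F₁ x → z ∈ F₂ x → w ∈ G y z →
          ball w ((L * C - M * D) * ρ) ⊆
            ⋃ x' ∈ ball x ρ, ⋃ y' ∈ F₁ x', ⋃ z' ∈ F₂ x', G y' z' := by
  classical
  obtain ⟨r₁, hr₁pos, hcl₁⟩ := hcl₁
  obtain ⟨r₂, hr₂pos, hcl₂⟩ := hcl₂
  obtain ⟨rG, hrGpos, hclG⟩ := hclG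
  obtain ⟨εF, hεF, U₁, hU₁, V₁, hV₁, hopen₁⟩ := hF₁
  obtain ⟨U₂, hU₂, V₂, hV₂, hlip₂⟩ := hF₂
  obtain ⟨εG, hεG, Vy, hVy, Vz, hVz, Vw, hVw, hopenG⟩ := hGo
  obtain ⟨Wy, hWy, Wz, hWz, Ww, hWw, hlipG⟩ := hGl
  obtain ⟨d₁, hd₁, hd₁s⟩ := Metric.mem_nhds_iff.mp hU₁
  obtain ⟨d₂, hd₂, hd₂s⟩ := Metric.mem_nhds_iff.mp hV₁
  obtain ⟨d₃, hd₃, hd₃s⟩ := Metric.mem_nhds_iff.mp hU₂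
  obtain ⟨d₄, hd₄, hd₄s⟩ := Metric.mem_nhds_iff.mp hV₂
  obtain ⟨d₅, hd₅, hd₅s⟩ := Metric.mem_nhds_iff.mp hVy
  obtain ⟨d₆, hd₆, hd₆s⟩ := Metric.mem_nhds_iff.mp hVz
  obtain ⟨d₇, hd₇, hd₇s⟩ := Metric.mem_nhds_iff.mp hVw
  obtain ⟨d₈, hd₈, hd₈s⟩ := Metric.mem_nhds_iff.mp hWy
  obtain ⟨d₉, hd₉, hd₉s⟩ := Metric.mem_nhds_iff.mp hWz
  obtain ⟨d₁₀, hd₁₀, hd₁₀s⟩ := Metric.mem_nhds_iff.mp hWw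
  obtain ⟨B, hB1, hB0, hLB, hMB, hLCB⟩ :
      ∃ B : ℝ, (1:ℝ) ≤ B ∧ (0:ℝ) < B ∧ L ≤ B ∧ M ≤ B ∧ 2 * (L * C) ≤ B :=
    ⟨1 + L + M + 2 * (L * C), by nlinarith only [hL, hM, mul_pos hL hC],
      by nlinarith only [hL, hM, mul_pos hL hC], by nlinarith only [hM, mul_pos hL hC],
      by nlinarith only [hL, mul_pos hL hC], by nlinarith only [hL, hM]⟩
  obtain ⟨m, hm0, hm_εF, hm_εG, hm_r₁, hm_r₂, hm_rG, hm_d₁, hm_d₂, hm_d₃, hm_d₄,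
      hm_d₅, hm_d₆, hm_d₇, hm_d₈, hm_d₉, hm_d₁₀⟩ :
      ∃ m : ℝ, 0 < m ∧ m ≤ εF ∧ m ≤ εG ∧ m ≤ r₁ ∧ m ≤ r₂ ∧ m ≤ rG ∧ m ≤ d₁ ∧ m ≤ d₂ ∧ m ≤ d₃ ∧ m ≤ d₄ ∧ m ≤ d₅ ∧ m ≤ d₆ ∧ m ≤ d₇ ∧ m ≤ d₈ ∧ m ≤ d₉ ∧ m ≤ d₁₀ := by
    refine ⟨min εF (min εG (min r₁ (min r₂ (min rG (min d₁ (min d₂ (min d₃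
      (min d₄ (min d₅ (min d₆ (min d₇ (min d₈ (min d₉ d₁₀))))))))))))),
      ?_, ?_, ?_, ?_, ?_, ?_, ?_, ?_, ?_, ?_, ?_, ?_, ?_, ?_, ?_, ?_⟩
    · simp only [lt_min_iff]
      exact ⟨hεF, hεG, hr₁pos, hr₂pos, hrGpos, hd₁, hd₂, hd₃, hd₄, hd₅, hd₆, hd₇, hd₈, hd₉, hd₁₀⟩
    · exact (min_le_left _ _)
    · exact ((min_le_right _ _).trans (min_le_left _ _))
    · exact ((min_le_right _ _).trans ((min_le_right _ _).trans (min_le_left _ _)))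
    · exact ((min_le_right _ _).trans ((min_le_right _ _).trans ((min_le_right _ _).trans (min_le_left _ _))))
    · exact ((min_le_right _ _).trans ((min_le_right _ _).trans ((min_le_right _ _).trans ((min_le_right _ _).trans (min_le_left _ _)))))
    · exact ((min_le_right _ _).trans ((min_le_right _ _).trans ((min_le_right _ _).trans ((min_le_right _ _).trans ((min_le_right _ _).trans (min_le_left _ _))))))
    · exact ((min_le_right _ _).trans ((min_le_right _ _).trans ((min_le_right _ _).trans ((min_le_right _ _).trans ((min_le_right _ _).trans ((min_le_right _ _).trans (min_le_left _ _)))))))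
    · exact ((min_le_right _ _).trans ((min_le_right _ _).trans ((min_le_right _ _).trans ((min_le_right _ _).trans ((min_le_right _ _).trans ((min_le_right _ _).trans ((min_le_right _ _).trans (min_le_left _ _))))))))
    · exact ((min_le_right _ _).trans ((min_le_right _ _).trans ((min_le_right _ _).trans ((min_le_right _ _).trans ((min_le_right _ _).trans ((min_le_right _ _).trans ((min_le_right _ _).trans ((min_le_right _ _).trans (min_le_left _ _)))))))))
    · exact ((min_le_right _ _).trans ((min_le_right _ _).trans ((min_le_right _ _).trans ((min_le_right _ _).trans ((min_le_right _ _).trans ((min_le_right _ _).trans ((min_le_right _ _).trans ((min_le_right _ _).trans ((min_le_right _ _).trans (min_le_left _ _))))))))))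
    · exact ((min_le_right _ _).trans ((min_le_right _ _).trans ((min_le_right _ _).trans ((min_le_right _ _).trans ((min_le_right _ _).trans ((min_le_right _ _).trans ((min_le_right _ _).trans ((min_le_right _ _).trans ((min_le_right _ _).trans ((min_le_right _ _).trans (min_le_left _ _)))))))))))
    · exact ((min_le_right _ _).trans ((min_le_right _ _).trans ((min_le_right _ _).trans ((min_le_right _ _).trans ((min_le_right _ _).trans ((min_le_right _ _).trans ((min_le_right _ _).trans ((min_le_right _ _).trans ((min_le_right _ _).trans ((min_le_right _ _).trans ((min_le_right _ _).trans (min_le_left _ _))))))))))))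
    · exact ((min_le_right _ _).trans ((min_le_right _ _).trans ((min_le_right _ _).trans ((min_le_right _ _).trans ((min_le_right _ _).trans ((min_le_right _ _).trans ((min_le_right _ _).trans ((min_le_right _ _).trans ((min_le_right _ _).trans ((min_le_right _ _).trans ((min_le_right _ _).trans ((min_le_right _ _).trans (min_le_left _ _)))))))))))))
    · exact ((min_le_right _ _).trans ((min_le_right _ _).trans ((min_le_right _ _).trans ((min_le_right _ _).trans ((min_le_right _ _).trans ((min_le_right _ _).trans ((min_le_right _ _).trans ((min_le_right _ _).trans ((min_le_right _ _).trans ((min_le_right _ _).trans ((min_le_right _ _).trans ((min_le_right _ _).trans ((min_le_right _ _).trans (min_le_left _ _))))))))))))))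
    · exact ((min_le_right _ _).trans ((min_le_right _ _).trans ((min_le_right _ _).trans ((min_le_right _ _).trans ((min_le_right _ _).trans ((min_le_right _ _).trans ((min_le_right _ _).trans ((min_le_right _ _).trans ((min_le_right _ _).trans ((min_le_right _ _).trans ((min_le_right _ _).trans ((min_le_right _ _).trans ((min_le_right _ _).trans (min_le_right _ _))))))))))))))
  refine ⟨m / B, by positivity, ?_⟩
  intro ρ hρ x hx y hy' z hz' w hw' hyF hzF hwG
  have hρ0 : 0 < ρ := hρ.1
  have hρε : ρ < m / B / 2 := hρ.2
  have hxd : dist x x₀ < m / B / 2 := mem_ball.mp hx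
  have hyd : dist y y₀ < m / B / 2 := mem_ball.mp hy'
  have hzd : dist z z₀ < m / B / 2 := mem_ball.mp hz'
  have hwd : dist w w₀ < m / B / 2 := mem_ball.mp hw'
  have hε0 : 0 < m / B := by positivity
  have hBε : B * (m / B) = m := by field_simp
  have hem : m / B ≤ m := div_le_self hm0.le hB1
  have hεnn : (0:ℝ) ≤ m / B := hε0.le
  have hLe : L * (m / B) ≤ m := by
    linarith only [mul_le_mul_of_nonneg_right hLB hεnn, hBε]
  have hMe : M * (m / B) ≤ m := by
    linarith only [mul_le_mul_of_nonneg_right hMB hεnn, hBε]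
  have hLCe : 2 * (L * C) * (m / B) ≤ m := by
    linarith only [mul_le_mul_of_nonneg_right hLCB hεnn, hBε]
  -- bounds that guarantee the iterates stay in all the prescribed neighbourhoods
  have hX : ∀ a : X, dist a x < ρ → dist a x₀ < m := by
    intro a ha
    have h := dist_triangle a x x₀
    linarith only [h, ha, hxd, hρε, hem]
  have hY : ∀ b : Y, dist b y < L * ρ → dist b y₀ < m := by
    intro b hb
    have h := dist_triangle b y y₀
    have h2 : L * ρ < L * (m / B / 2) := mul_lt_mul_of_pos_left hρε hL
    linarith only [h, hb, h2, hyd, hLe, hem]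
  have hZ : ∀ c : Z, dist c z < M * ρ → dist c z₀ < m := by
    intro c hc
    have h := dist_triangle c z z₀
    have h2 : M * ρ < M * (m / B / 2) := mul_lt_mul_of_pos_left hρε hM
    linarith only [h, hc, h2, hzd, hMe, hem]
  have hW : ∀ d : W, dist d w < 2 * (L * C) * ρ → dist d w₀ < m := by
    intro d hd
    have h := dist_triangle d w w₀
    have h2 : 2 * (L * C) * ρ < 2 * (L * C) * (m / B / 2) :=
      mul_lt_mul_of_pos_left hρε (by positivity)
    linarith only [h, hd, h2, hwd, hLCe, hem]
  have hLρm : L * ρ < m / 2 := by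
    have h2 : L * ρ < L * (m / B / 2) := mul_lt_mul_of_pos_left hρε hL
    linarith only [h2, hLe]
  intro w' hw'b
  have ht : dist w' w < (L * C - M * D) * ρ := mem_ball.mp hw'b
  obtain ⟨q, σ, hq0, hq1, hqMD, hσ0, htσ, hσρ⟩ :=
    exists_q_sigma L C M D ρ (dist w' w) (by positivity) (by positivity) hρ0 dist_nonneg ht
  have hq1' : 0 < 1 - q := by linarith only [hq1]
  have hσρ2 : σ / (1 - q) < ρ := by
    rw [div_lt_iff₀ hq1']; linarith only [hσρ]
  have hσltρ : σ < ρ := by linarith only [hσρ, mul_nonneg hq0.le hρ0.le]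
  set s : ℕ → ℝ := fun n => σ * (1 - q ^ n) / (1 - q) with hsdef
  have hs0 : s 0 = 0 := by simp [hsdef]
  have hssucc : ∀ n, s (n + 1) = s n + σ * q ^ n := by
    intro n
    simp only [hsdef]
    field_simp
    ring
  have hqn0 : ∀ n, 0 < q ^ n := fun n => pow_pos hq0 n
  have hqn1 : ∀ n, q ^ n ≤ 1 := fun n => pow_le_one₀ hq0.le hq1.le
  have hsle : ∀ n, s n ≤ σ / (1 - q) := by
    intro n
    simp only [hsdef]
    rw [div_le_div_iff_of_pos_right hq1']
    linarith only [mul_pos hσ0 (hqn0 n)]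
  have hsρ : ∀ n, s n < ρ := fun n => lt_of_le_of_lt (hsle n) hσρ2
  -- the invariant carried along the iteration
  let Q : ℕ → X × Y × Z × W → Prop := fun n p =>
    p.2.1 ∈ F₁ p.1 ∧ p.2.2.1 ∈ F₂ p.1 ∧ p.2.2.2 ∈ G p.2.1 p.2.2.1 ∧
      dist p.1 x ≤ s n ∧ dist p.2.1 y ≤ L * s n ∧ dist p.2.2.1 z ≤ M * s n ∧
      dist w' p.2.2.2 < L * C * σ * q ^ n
  -- one step of the iteration
  have step : ∀ n (p : X × Y × Z × W), Q n p → ∃ p', Q (n + 1) p' ∧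
      dist p'.1 p.1 ≤ σ * q ^ n ∧ dist p'.2.1 p.2.1 ≤ L * σ * q ^ n ∧
      dist p'.2.2.1 p.2.2.1 ≤ M * σ * q ^ n := by
    rintro n ⟨a, b, c, d⟩ hp
    obtain ⟨hb, hc, hd, hax, hby, hcz, hdw⟩ := hp
    simp only at hb hc hd hax hby hcz hdw
    have hτ0 : 0 < σ * q ^ n := by positivity
    have hτσ : σ * q ^ n ≤ σ := by
      linarith only [mul_le_mul_of_nonneg_left (hqn1 n) hσ0.le]
    have hτρ : σ * q ^ n < ρ := lt_of_le_of_lt hτσ hσltρ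
    have haxρ : dist a x < ρ := lt_of_le_of_lt hax (hsρ n)
    have hbyρ : dist b y < L * ρ :=
      lt_of_le_of_lt hby (mul_lt_mul_of_pos_left (hsρ n) hL)
    have hczρ : dist c z < M * ρ :=
      lt_of_le_of_lt hcz (mul_lt_mul_of_pos_left (hsρ n) hM)
    have hdwρ : dist d w < 2 * (L * C) * ρ := by
      have h1 := dist_triangle d w' w
      have h2 : dist d w' < L * C * σ := by
        rw [dist_comm]
        calc dist w' d < L * C * σ * q ^ n := hdw
          _ ≤ L * C * σ * 1 :=
            mul_le_mul_of_nonneg_left (hqn1 n) (by positivity : (0:ℝ) ≤ L * C * σ)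
          _ = L * C * σ := by ring
      have h3 : L * C * σ < L * C * ρ := mul_lt_mul_of_pos_left hσltρ (by positivity)
      have h4 : (L * C - M * D) * ρ ≤ L * C * ρ := by
        linarith only [mul_nonneg (mul_nonneg hM.le hD) hρ0.le]
      linarith only [h1, h2, h3, h4, ht]
    have hax₀ := hX a haxρ
    have hby₀ := hY b hbyρ
    have hcz₀ := hZ c hczρ
    have hdw₀ := hW d hdwρ
    -- (1) apply the openness of G with respect to y
    have hLτεG : L * (σ * q ^ n) < εG := by
      have h2 : L * (σ * q ^ n) < L * ρ := mul_lt_mul_of_pos_left hτρ hL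
      linarith only [h2, hLρm, hm_εG, hm0]
    have hGball : ball d (L * (σ * q ^ n) * C) ⊆ ⋃ y' ∈ ball b (L * (σ * q ^ n)), G y' c :=
      hopenG (L * (σ * q ^ n)) ⟨by positivity, hLτεG⟩ c
        (hd₆s (mem_ball.mpr (lt_of_lt_of_le hcz₀ hm_d₆))) b
        (hd₅s (mem_ball.mpr (lt_of_lt_of_le hby₀ hm_d₅))) d
        (hd₇s (mem_ball.mpr (lt_of_lt_of_le hdw₀ hm_d₇))) hd
    have hw'mem : w' ∈ ball d (L * (σ * q ^ n) * C) :=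
      mem_ball.mpr (lt_of_lt_of_eq hdw (by ring))
    obtain ⟨b', hb'ball, hb'G⟩ : ∃ b', b' ∈ ball b (L * (σ * q ^ n)) ∧ w' ∈ G b' c := by
      have h := hGball hw'mem
      simpa only [Set.mem_iUnion, exists_prop] using h
    have hb'b : dist b' b < L * (σ * q ^ n) := mem_ball.mp hb'ball
    -- (2) apply the openness of F₁
    have hτεF : σ * q ^ n < εF := by linarith only [hτρ, hρε, hem, hm_εF, hm0]
    have hFball : ball b ((σ * q ^ n) * L) ⊆ ⋃ x' ∈ ball a (σ * q ^ n), F₁ x' :=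
      hopen₁ (σ * q ^ n) ⟨hτ0, hτεF⟩ a
        (hd₁s (mem_ball.mpr (lt_of_lt_of_le hax₀ hm_d₁))) b
        (hd₂s (mem_ball.mpr (lt_of_lt_of_le hby₀ hm_d₂))) hb
    obtain ⟨a', ha'ball, hb'F⟩ : ∃ a', a' ∈ ball a (σ * q ^ n) ∧ b' ∈ F₁ a' := by
      have h := hFball (mem_ball.mpr (lt_of_lt_of_eq hb'b (by ring)))
      simpa only [Set.mem_iUnion, exists_prop] using h
    have ha'a : dist a' a < σ * q ^ n := mem_ball.mp ha'ball
    have ha'xs : dist a' x ≤ s (n + 1) := by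
      have h := dist_triangle a' a x
      have h2 := hssucc n
      linarith only [h, h2, ha'a, hax]
    have ha'x : dist a' x < ρ := lt_of_le_of_lt ha'xs (hsρ (n + 1))
    have ha'₀ := hX a' ha'x
    -- (3) apply the Lipschitz-likeness of F₂
    have hkey := hlip₂ a (hd₃s (mem_ball.mpr (lt_of_lt_of_le hax₀ hm_d₃))) a'
      (hd₃s (mem_ball.mpr (lt_of_lt_of_le ha'₀ hm_d₃)))
      ⟨hc, hd₄s (mem_ball.mpr (lt_of_lt_of_le hcz₀ hm_d₄))⟩
    obtain ⟨c', hc'F, u, hu, hcu⟩ := Set.mem_add.mp hkey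
    obtain ⟨v, hv, hvu⟩ := Set.mem_smul_set.mp hu
    have hc'c : dist c' c ≤ M * (σ * q ^ n) := by
      have h1 : ‖u‖ ≤ M * ‖a - a'‖ := by
        rw [← hvu, norm_smul, Real.norm_eq_abs,
          abs_of_nonneg (by positivity : (0:ℝ) ≤ M * ‖a - a'‖)]
        have h5 := mem_closedBall_zero_iff.mp hv
        linarith only [mul_le_mul_of_nonneg_left h5 (by positivity : (0:ℝ) ≤ M * ‖a - a'‖)]
      have h2 : ‖a - a'‖ < σ * q ^ n := by
        rw [← dist_eq_norm, dist_comm]; exact ha'a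
      have h3 : dist c' c = ‖u‖ := by
        have h4 : c' - c = -u := by rw [← hcu]; abel
        rw [dist_eq_norm, h4, norm_neg]
      rw [h3]
      linarith only [h1, mul_le_mul_of_nonneg_left h2.le hM.le]
    -- (4) apply the Lipschitz-likeness of G with respect to z
    have hb'y : dist b' y < L * ρ := by
      have h := dist_triangle b' b y
      have h2 : L * s (n + 1) = L * s n + L * (σ * q ^ n) := by rw [hssucc n]; ring
      have h3 : L * s (n + 1) < L * ρ := mul_lt_mul_of_pos_left (hsρ (n + 1)) hL
      linarith only [h, h2, h3, hb'b, hby]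
    have hb'₀ := hY b' hb'y
    have hc'z : dist c' z < M * ρ := by
      have h := dist_triangle c' c z
      have h2 : M * s (n + 1) = M * s n + M * (σ * q ^ n) := by rw [hssucc n]; ring
      have h3 : M * s (n + 1) < M * ρ := mul_lt_mul_of_pos_left (hsρ (n + 1)) hM
      linarith only [h, h2, h3, hc'c, hcz]
    have hc'₀ := hZ c' hc'z
    have hw'w₀ : dist w' w₀ < m := by
      apply hW
      have h4 : (L * C - M * D) * ρ ≤ L * C * ρ := by
        linarith only [mul_nonneg (mul_nonneg hM.le hD) hρ0.le]
      have h5 : 0 < L * C * ρ := by positivity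
      linarith only [ht, h4, h5]
    have hkey2 := hlipG b' (hd₈s (mem_ball.mpr (lt_of_lt_of_le hb'₀ hm_d₈))) c
      (hd₉s (mem_ball.mpr (lt_of_lt_of_le hcz₀ hm_d₉))) c'
      (hd₉s (mem_ball.mpr (lt_of_lt_of_le hc'₀ hm_d₉)))
      ⟨hb'G, hd₁₀s (mem_ball.mpr (lt_of_lt_of_le hw'w₀ hm_d₁₀))⟩
    obtain ⟨d', hd'G, u2, hu2, hdu⟩ := Set.mem_add.mp hkey2
    obtain ⟨v2, hv2, hv2u⟩ := Set.mem_smul_set.mp hu2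
    have hw'd' : dist w' d' < L * C * σ * q ^ (n + 1) := by
      have h1 : ‖u2‖ ≤ D * ‖c - c'‖ := by
        rw [← hv2u, norm_smul, Real.norm_eq_abs,
          abs_of_nonneg (by positivity : (0:ℝ) ≤ D * ‖c - c'‖)]
        have h5 := mem_closedBall_zero_iff.mp hv2
        linarith only [mul_le_mul_of_nonneg_left h5 (by positivity : (0:ℝ) ≤ D * ‖c - c'‖)]
      have h2 : ‖c - c'‖ ≤ M * (σ * q ^ n) := by
        rw [← dist_eq_norm, dist_comm]; exact hc'c
      have h3 : dist w' d' = ‖u2‖ := by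
        have h4 : w' - d' = u2 := by rw [← hdu]; abel
        rw [dist_eq_norm, h4]
      have h6 : D * ‖c - c'‖ ≤ D * (M * (σ * q ^ n)) :=
        mul_le_mul_of_nonneg_left h2 hD
      have h7 : D * (M * (σ * q ^ n)) < L * C * σ * q ^ (n + 1) := by
        rw [pow_succ]
        have hτ0' : 0 < σ * q ^ n := by positivity
        linarith only [mul_pos (show (0:ℝ) < L * C * q - M * D by
          linarith only [hqMD]) hτ0']
      rw [h3]
      linarith only [h1, h6, h7]
    refine ⟨(a', b', c', d'), ⟨hb'F, hc'F, hd'G, ha'xs, ?_, ?_, hw'd'⟩,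
      le_of_lt ha'a, le_of_lt (lt_of_lt_of_eq hb'b (by ring)),
      le_trans hc'c (le_of_eq (by ring))⟩
    · have h := dist_triangle b' b y
      have h2 : L * s (n + 1) = L * s n + L * (σ * q ^ n) := by rw [hssucc n]; ring
      simp only
      linarith only [h, h2, hb'b, hby]
    · have h := dist_triangle c' c z
      have h2 : M * s (n + 1) = M * s n + M * (σ * q ^ n) := by rw [hssucc n]; ring
      simp only
      linarith only [h, h2, hc'c, hcz]
  -- build the iteration sequence
  choose! Φ hΦ using step
  let f : ℕ → X × Y × Z × W := fun n => Nat.rec (x, y, z, w) (fun k p => Φ k p) n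
  have hfsucc : ∀ n, f (n + 1) = Φ n (f n) := fun _ => rfl
  have hQ : ∀ n, Q n (f n) := by
    intro n
    induction n with
    | zero =>
      refine ⟨hyF, hzF, hwG, ?_, ?_, ?_, ?_⟩ <;> simp only [f, hs0]
      · simp
      · simp
      · simp
      · simpa using htσ
    | succ k ih => exact (hΦ k (f k) ih).1
  have hstepd : ∀ n, dist (f (n + 1)).1 (f n).1 ≤ σ * q ^ n ∧
      dist (f (n + 1)).2.1 (f n).2.1 ≤ L * σ * q ^ n ∧
      dist (f (n + 1)).2.2.1 (f n).2.2.1 ≤ M * σ * q ^ n :=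
    fun n => (hΦ n (f n) (hQ n)).2
  -- Cauchy sequences and limits
  have hcx : CauchySeq (fun n => (f n).1) :=
    cauchySeq_of_le_geometric q σ hq1 (fun n => by rw [dist_comm]; exact (hstepd n).1)
  have hcy : CauchySeq (fun n => (f n).2.1) :=
    cauchySeq_of_le_geometric q (L * σ) hq1
      (fun n => by rw [dist_comm]; exact (hstepd n).2.1)
  have hcz' : CauchySeq (fun n => (f n).2.2.1) :=
    cauchySeq_of_le_geometric q (M * σ) hq1
      (fun n => by rw [dist_comm]; exact (hstepd n).2.2)
  obtain ⟨alim, halim⟩ := cauchySeq_tendsto_of_complete hcx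
  obtain ⟨blim, hblim⟩ := cauchySeq_tendsto_of_complete hcy
  obtain ⟨clim, hclim⟩ := cauchySeq_tendsto_of_complete hcz'
  have hwlim : Tendsto (fun n => (f n).2.2.2) atTop (nhds w') := by
    rw [tendsto_iff_dist_tendsto_zero]
    apply squeeze_zero (fun n => dist_nonneg)
      (g := fun n => L * C * σ * q ^ n)
      (fun n => by rw [dist_comm]; exact le_of_lt (hQ n).2.2.2.2.2.2)
    have h := (tendsto_pow_atTop_nhds_zero_of_lt_one hq0.le hq1).const_mul (L * C * σ)
    simpa using h
  -- pass to the limit in the three graphs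
  have hmem₁ : ∀ n, ((f n).1, (f n).2.1) ∈
      {p : X × Y | p.2 ∈ F₁ p.1} ∩ Metric.closedBall (x₀, y₀) r₁ := by
    intro n
    refine ⟨(hQ n).1, ?_⟩
    rw [Metric.mem_closedBall, Prod.dist_eq]
    apply max_le
    · have h1 : dist (f n).1 x < ρ := lt_of_le_of_lt (hQ n).2.2.2.1 (hsρ n)
      linarith only [hX _ h1, hm_r₁]
    · have h2 : dist (f n).2.1 y < L * ρ :=
        lt_of_le_of_lt (hQ n).2.2.2.2.1 (mul_lt_mul_of_pos_left (hsρ n) hL)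
      linarith only [hY _ h2, hm_r₁]
  have hmem₂ : ∀ n, ((f n).1, (f n).2.2.1) ∈
      {p : X × Z | p.2 ∈ F₂ p.1} ∩ Metric.closedBall (x₀, z₀) r₂ := by
    intro n
    refine ⟨(hQ n).2.1, ?_⟩
    rw [Metric.mem_closedBall, Prod.dist_eq]
    apply max_le
    · have h1 : dist (f n).1 x < ρ := lt_of_le_of_lt (hQ n).2.2.2.1 (hsρ n)
      linarith only [hX _ h1, hm_r₂]
    · have h2 : dist (f n).2.2.1 z < M * ρ :=
        lt_of_le_of_lt (hQ n).2.2.2.2.2.1 (mul_lt_mul_of_pos_left (hsρ n) hM)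
      linarith only [hZ _ h2, hm_r₂]
  have hdwρn : ∀ n, dist (f n).2.2.2 w < 2 * (L * C) * ρ := by
    intro n
    have hdw := (hQ n).2.2.2.2.2.2
    have h1 := dist_triangle (f n).2.2.2 w' w
    have h2 : dist (f n).2.2.2 w' < L * C * σ := by
      rw [dist_comm]
      calc dist w' (f n).2.2.2 < L * C * σ * q ^ n := hdw
        _ ≤ L * C * σ * 1 :=
          mul_le_mul_of_nonneg_left (hqn1 n) (by positivity : (0:ℝ) ≤ L * C * σ)
        _ = L * C * σ := by ring
    have h3 : L * C * σ < L * C * ρ := mul_lt_mul_of_pos_left hσltρ (by positivity)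
    have h4 : (L * C - M * D) * ρ ≤ L * C * ρ := by
      linarith only [mul_nonneg (mul_nonneg hM.le hD) hρ0.le]
    linarith only [h1, h2, h3, h4, ht]
  have hmemG : ∀ n, (((f n).2.1, (f n).2.2.1), (f n).2.2.2) ∈
      {p : (Y × Z) × W | p.2 ∈ G p.1.1 p.1.2} ∩ Metric.closedBall ((y₀, z₀), w₀) rG := by
    intro n
    refine ⟨(hQ n).2.2.1, ?_⟩
    rw [Metric.mem_closedBall, Prod.dist_eq]
    apply max_le
    · rw [Prod.dist_eq]
      apply max_le
      · have h2 : dist (f n).2.1 y < L * ρ :=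
          lt_of_le_of_lt (hQ n).2.2.2.2.1 (mul_lt_mul_of_pos_left (hsρ n) hL)
        linarith only [hY _ h2, hm_rG]
      · have h2 : dist (f n).2.2.1 z < M * ρ :=
          lt_of_le_of_lt (hQ n).2.2.2.2.2.1 (mul_lt_mul_of_pos_left (hsρ n) hM)
        linarith only [hZ _ h2, hm_rG]
    · linarith only [hW _ (hdwρn n), hm_rG]
  have hF₁lim : blim ∈ F₁ alim :=
    (hcl₁.mem_of_tendsto (halim.prodMk_nhds hblim) (Filter.Eventually.of_forall hmem₁)).1
  have hF₂lim : clim ∈ F₂ alim :=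
    (hcl₂.mem_of_tendsto (halim.prodMk_nhds hclim) (Filter.Eventually.of_forall hmem₂)).1
  have hGlim : w' ∈ G blim clim :=
    (hclG.mem_of_tendsto ((hblim.prodMk_nhds hclim).prodMk_nhds hwlim)
      (Filter.Eventually.of_forall hmemG)).1
  have halimx : dist alim x < ρ := by
    have h2 : Tendsto (fun n => dist (f n).1 x) atTop (nhds (dist alim x)) :=
      halim.dist tendsto_const_nhds
    have h3 := le_of_tendsto h2 (Filter.Eventually.of_forall
      (fun n => le_trans (hQ n).2.2.2.1 (hsle n)))
    linarith only [h3, hσρ2]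
  exact Set.mem_iUnion₂.mpr ⟨alim, mem_ball.mpr halimx,
    Set.mem_iUnion₂.mpr ⟨blim, hF₁lim, Set.mem_iUnion₂.mpr ⟨clim, hF₂lim, hGlim⟩⟩⟩
end

section
/- Under the assumptions of the previous statement (G D-Lipschitz-like in x uniformly in y, G C-open in y uniformly in x, F L-open around (x̄,ȳ), LC − D > 0, graphs locally closed), if in addition there exists ε > 0 such that for every x ∈ B(x̄,ε), G(x,y) ∩ G(x,y') = ∅ whenever y ≠ y', then there exists ε' > 0 such that for every ρ ∈ (0,ε') and every (x,z) ∈ Gr Φ ∩ (B(x̄,ε') × B(z̄,ε')), B(z, (LC−D)ρ) ⊆ Φ(B(x,ρ)); i.e., Φ is open at linear rate LC−D around (x̄,z̄). -/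
open Set Metric Pointwise

section AuxIteration
open Filter
set_option maxHeartbeats 2000000

lemma mem_add_smul_cball {Z : Type*} [NormedAddCommGroup Z] [NormedSpace ℝ Z]
    {A : Set Z} {z : Z} {r : ℝ} (hr : 0 ≤ r)
    (h : z ∈ A + r • Metric.closedBall (0:Z) 1) : ∃ w ∈ A, ‖z - w‖ ≤ r := by
  rcases Set.mem_add.1 h with ⟨w, hw, b, hb, hzb⟩
  rcases Set.mem_smul_set.1 hb with ⟨c, hc, rfl⟩
  refine ⟨w, hw, ?_⟩
  have : z - w = r • c := by rw [← hzb]; abel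
  rw [this, norm_smul, Real.norm_eq_abs, abs_of_nonneg hr]
  have hc1 : ‖c‖ ≤ 1 := by simpa using hc
  nlinarith [norm_nonneg c]

set_option maxHeartbeats 2000000 in
theorem iterate_aux {X Y Z : Type*}
    [NormedAddCommGroup X] [NormedSpace ℝ X] [CompleteSpace X]
    [NormedAddCommGroup Y] [NormedSpace ℝ Y] [CompleteSpace Y]
    [NormedAddCommGroup Z] [NormedSpace ℝ Z]
    (F : X → Set Y) (G : X → Y → Set Z)
    (L C D q' E₀ εG εF : ℝ) (hL : 0 < L) (hC : 0 < C) (hD : 0 ≤ D)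
    (hq'0 : 0 < q') (hq'1 : q' < 1) (hDq' : D ≤ q' * (L * C)) (hE₀ : 0 < E₀)
    (WX : Set X) (WY : Set Y) (WZ : Set Z)
    (SF : Set (X × Y)) (SG : Set ((X × Y) × Z))
    (hSFc : IsClosed SF) (hSGc : IsClosed SG)
    (x : X) (y : Y) (z z₁ : Z)
    (hWX : ∀ x', ‖x' - x‖ ≤ E₀ / (L * C * (1 - q')) → x' ∈ WX)
    (hWY : ∀ y', ‖y' - y‖ ≤ L * (E₀ / (L * C * (1 - q'))) → y' ∈ WY)
    (hWZ : ∀ w, ‖z₁ - w‖ ≤ E₀ → w ∈ WZ)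
    (hSF : ∀ x' ∈ WX, ∀ y' ∈ WY, y' ∈ F x' → (x', y') ∈ SF)
    (hSF' : ∀ p ∈ SF, p.2 ∈ F p.1)
    (hSG : ∀ x' ∈ WX, ∀ y' ∈ WY, ∀ w ∈ WZ, w ∈ G x' y' → ((x', y'), w) ∈ SG)
    (hSG' : ∀ p ∈ SG, p.2 ∈ G p.1.1 p.1.2)
    (hGo : ∀ ρ ∈ Set.Ioo (0:ℝ) εG, ∀ x' ∈ WX, ∀ y' ∈ WY, ∀ w ∈ WZ, w ∈ G x' y' →
      ball w (ρ * C) ⊆ ⋃ y'' ∈ ball y' ρ, G x' y'')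
    (hF : ∀ ρ ∈ Set.Ioo (0:ℝ) εF, ∀ x' ∈ WX, ∀ y' ∈ WY, y' ∈ F x' →
      ball y' (ρ * L) ⊆ ⋃ x'' ∈ ball x' ρ, F x'')
    (hGl : ∀ y' ∈ WY, ∀ x' ∈ WX, ∀ x'' ∈ WX,
      G x' y' ∩ WZ ⊆ G x'' y' + (D * ‖x' - x''‖) • Metric.closedBall (0:Z) 1)
    (hsG : E₀ / C < εG) (htF : E₀ / (L * C) < εF)
    (hyF : y ∈ F x) (hzG : z ∈ G x y) (he0 : ‖z₁ - z‖ < E₀) :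
    ∃ x' y', ‖x' - x‖ ≤ E₀ / (L * C * (1 - q')) ∧ y' ∈ F x' ∧ z₁ ∈ G x' y' := by
  set T : ℝ := E₀ / (L * C * (1 - q')) with hTdef
  have hq'I : 0 < 1 - q' := by linarith
  have hLC : 0 < L * C := mul_pos hL hC
  have hT0 : 0 < T := by positivity
  clear_value T
  have hE₀T : E₀ = T * (1 - q') * (L * C) := by
    rw [hTdef, div_mul_eq_mul_div, div_mul_eq_mul_div, eq_div_iff (mul_pos hLC hq'I).ne']; ring
  -- the invariant
  set Inv : ℕ → X × Y × Z → Prop := fun n p =>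
    p.2.1 ∈ F p.1 ∧ p.2.2 ∈ G p.1 p.2.1 ∧ ‖z₁ - p.2.2‖ < E₀ * q' ^ n ∧
      ‖p.1 - x‖ ≤ T * (1 - q' ^ n) ∧ ‖p.2.1 - y‖ ≤ L * T * (1 - q' ^ n) with hInvdef
  have hz₁WZ : z₁ ∈ WZ := hWZ z₁ (by simp; positivity)
  -- one step of the iteration
  have step : ∀ n (p : X × Y × Z), Inv n p → ∃ p', Inv (n+1) p' ∧
      ‖p'.1 - p.1‖ ≤ T * (1 - q') * q' ^ n ∧
      ‖p'.2.1 - p.2.1‖ ≤ L * (T * (1 - q') * q' ^ n) := by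
    rintro n ⟨a, b, w⟩ ⟨h1, h2, h3, h4, h5⟩
    simp only at h1 h2 h3 h4 h5
    have hqn0 : 0 < q' ^ n := pow_pos hq'0 n
    have hqn1 : q' ^ n ≤ 1 := pow_le_one₀ hq'0.le hq'1.le
    have hqs0 : 0 < q' ^ (n+1) := pow_pos hq'0 (n+1)
    have hqs1 : q' ^ (n+1) ≤ 1 := pow_le_one₀ hq'0.le hq'1.le
    set t : ℝ := T * (1 - q') * q' ^ n with htdef
    have ht0 : 0 < t := by positivity
    have hEq : E₀ * q' ^ n = (L * t) * C := by rw [hE₀T]; ring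
    have haWX : a ∈ WX := hWX a (h4.trans (by nlinarith [mul_nonneg hT0.le hqn0.le]))
    have hbWY : b ∈ WY := hWY b (h5.trans (by nlinarith [mul_nonneg (mul_nonneg hL.le hT0.le) hqn0.le]))
    have hwWZ : w ∈ WZ := hWZ w (h3.le.trans (mul_le_of_le_one_right hE₀.le hqn1))
    -- openness of G in y
    have hsIoo : L * t ∈ Set.Ioo (0:ℝ) εG := by
      constructor
      · positivity
      · have : (L * t) * C ≤ E₀ := by
          rw [← hEq]; exact mul_le_of_le_one_right hE₀.le hqn1
        calc L * t = ((L*t)*C)/C := by field_simp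
        _ ≤ E₀ / C := by gcongr
        _ < εG := hsG
    have hz₁ball : z₁ ∈ ball w ((L * t) * C) := by
      rw [mem_ball, dist_eq_norm]
      rw [← hEq]; exact h3
    obtain ⟨b', hb'ball, hz₁G⟩ := Set.mem_iUnion₂.1 (hGo (L*t) hsIoo a haWX b hbWY w hwWZ h2 hz₁ball)
    have hb'b : ‖b' - b‖ < L * t := by
      rw [mem_ball, dist_eq_norm] at hb'ball; exact hb'ball
    -- new y-invariant
    have hb'y : ‖b' - y‖ ≤ L * T * (1 - q' ^ (n+1)) := by
      calc ‖b' - y‖ ≤ ‖b' - b‖ + ‖b - y‖ := norm_sub_le_norm_sub_add_norm_sub _ _ _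
      _ ≤ L * t + L * T * (1 - q' ^ n) := by linarith
      _ = L * T * (1 - q' ^ (n+1)) := by rw [htdef, pow_succ]; ring
    have hb'WY : b' ∈ WY := hWY b' (hb'y.trans (by nlinarith [mul_nonneg (mul_nonneg hL.le hT0.le) hqs0.le]))
    -- openness of F
    have htIoo : t ∈ Set.Ioo (0:ℝ) εF := by
      constructor
      · exact ht0
      · have : t * (L * C) ≤ E₀ := by
          rw [show t * (L * C) = (L * t) * C by ring, ← hEq]
          exact mul_le_of_le_one_right hE₀.le hqn1
        calc t = (t * (L*C))/(L*C) := by field_simp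
        _ ≤ E₀ / (L*C) := by gcongr
        _ < εF := htF
    have hb'ball2 : b' ∈ ball b (t * L) := by
      rw [mem_ball, dist_eq_norm, mul_comm t L]; exact hb'b
    obtain ⟨a', ha'ball, hb'F⟩ := Set.mem_iUnion₂.1 (hF t htIoo a haWX b hbWY h1 hb'ball2)
    have ha'a : ‖a' - a‖ < t := by rw [mem_ball, dist_eq_norm] at ha'ball; exact ha'ball
    have ha'x : ‖a' - x‖ ≤ T * (1 - q' ^ (n+1)) := by
      calc ‖a' - x‖ ≤ ‖a' - a‖ + ‖a - x‖ := norm_sub_le_norm_sub_add_norm_sub _ _ _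
      _ ≤ t + T * (1 - q' ^ n) := by linarith
      _ = T * (1 - q' ^ (n+1)) := by rw [htdef, pow_succ]; ring
    have ha'WX : a' ∈ WX := hWX a' (ha'x.trans (by nlinarith [mul_nonneg hT0.le hqs0.le]))
    -- Lipschitz transport of G in x
    have := hGl b' hb'WY a haWX a' ha'WX ⟨hz₁G, hz₁WZ⟩
    obtain ⟨w', hw'G, hw'd⟩ := mem_add_smul_cball (by positivity) this
    have haa' : ‖a - a'‖ < t := by rw [norm_sub_rev]; exact ha'a
    have hw'new : ‖z₁ - w'‖ < E₀ * q' ^ (n+1) := by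
      have hEq1 : E₀ * q' ^ (n+1) = q' * (L * C) * t := by rw [hE₀T, pow_succ]; ring
      rcases eq_or_lt_of_le hD with hD0 | hD0
      · have : ‖z₁ - w'‖ ≤ 0 := hw'd.trans (by rw [← hD0]; simp)
        have h1 : (0:ℝ) < E₀ * q' ^ (n+1) := by positivity
        linarith
      · calc ‖z₁ - w'‖ ≤ D * ‖a - a'‖ := hw'd
        _ < D * t := by exact mul_lt_mul_of_pos_left haa' hD0
        _ ≤ q' * (L * C) * t := mul_le_mul_of_nonneg_right hDq' ht0.le
        _ = E₀ * q' ^ (n+1) := hEq1.symm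
    refine ⟨(a', b', w'), ⟨hb'F, hw'G, hw'new, ha'x, hb'y⟩, ?_, ?_⟩
    · simpa using ha'a.le
    · simpa [htdef] using hb'b.le
  choose P hP using step
  have hInv0 : Inv 0 (x, y, z) := by
    refine ⟨hyF, hzG, by simpa using he0, by simp, by simp⟩
  let f : ∀ n : ℕ, {p : X × Y × Z // Inv n p} :=
    fun n => Nat.rec ⟨(x, y, z), hInv0⟩ (fun k ih => ⟨P k ih.1 ih.2, (hP k ih.1 ih.2).1⟩) n
  have hInv : ∀ n, Inv n (f n).1 := fun n => (f n).2
  have hcons : ∀ n, ‖(f (n+1)).1.1 - (f n).1.1‖ ≤ T * (1 - q') * q' ^ n ∧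
      ‖(f (n+1)).1.2.1 - (f n).1.2.1‖ ≤ L * (T * (1 - q') * q' ^ n) :=
    fun n => ⟨(hP n (f n).1 (f n).2).2.1, (hP n (f n).1 (f n).2).2.2⟩
  -- Cauchy sequences
  have hcx : CauchySeq (fun n => (f n).1.1) := by
    apply cauchySeq_of_le_geometric q' (T * (1 - q')) hq'1
    intro n
    rw [dist_eq_norm, norm_sub_rev]
    exact (hcons n).1
  have hcy : CauchySeq (fun n => (f n).1.2.1) := by
    apply cauchySeq_of_le_geometric q' (L * (T * (1 - q'))) hq'1
    intro n
    rw [dist_eq_norm, norm_sub_rev]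
    calc ‖(f (n+1)).1.2.1 - (f n).1.2.1‖ ≤ L * (T * (1 - q') * q' ^ n) := (hcons n).2
    _ = L * (T * (1-q')) * q' ^ n := by ring
  obtain ⟨xl, hxl⟩ := cauchySeq_tendsto_of_complete hcx
  obtain ⟨yl, hyl⟩ := cauchySeq_tendsto_of_complete hcy
  have hwz : Tendsto (fun n => (f n).1.2.2) atTop (nhds z₁) := by
    rw [tendsto_iff_dist_tendsto_zero]
    apply squeeze_zero (fun n => dist_nonneg) (g := fun n => E₀ * q' ^ n)
    · intro n
      rw [dist_eq_norm, norm_sub_rev]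
      exact (hInv n).2.2.1.le
    · have := (tendsto_pow_atTop_nhds_zero_of_lt_one hq'0.le hq'1).const_mul E₀
      simpa using this
  have hbx : ∀ n, ‖(f n).1.1 - x‖ ≤ T := fun n => (hInv n).2.2.2.1.trans
    (by nlinarith [mul_nonneg hT0.le (pow_pos hq'0 n).le])
  have hby : ∀ n, ‖(f n).1.2.1 - y‖ ≤ L * T := fun n => (hInv n).2.2.2.2.trans
    (by nlinarith [mul_nonneg (mul_nonneg hL.le hT0.le) (pow_pos hq'0 n).le])
  have hbz : ∀ n, ‖z₁ - (f n).1.2.2‖ ≤ E₀ := fun n => (hInv n).2.2.1.le.trans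
    (mul_le_of_le_one_right hE₀.le (pow_le_one₀ hq'0.le hq'1.le))
  -- limit memberships
  have hSFlim : (xl, yl) ∈ SF := by
    apply hSFc.mem_of_tendsto (hxl.prodMk_nhds hyl)
    exact Filter.Eventually.of_forall fun n =>
      hSF _ (hWX _ (hbx n)) _ (hWY _ (hby n)) (hInv n).1
  have hSGlim : ((xl, yl), z₁) ∈ SG := by
    apply hSGc.mem_of_tendsto ((hxl.prodMk_nhds hyl).prodMk_nhds hwz)
    exact Filter.Eventually.of_forall fun n =>
      hSG _ (hWX _ (hbx n)) _ (hWY _ (hby n)) _ (hWZ _ (hbz n)) (hInv n).2.1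
  refine ⟨xl, yl, ?_, hSF' _ hSFlim, hSG' _ hSGlim⟩
  have : Tendsto (fun n => ‖(f n).1.1 - x‖) atTop (nhds ‖xl - x‖) :=
    ((hxl.sub tendsto_const_nhds).norm)
  exact le_of_tendsto this (Filter.Eventually.of_forall hbx)


open Set Metric Pointwise Filter


end AuxIteration

set_option maxHeartbeats 2000000

/-- Under the disjointness condition on the values of `G`, the composition
`Φ(x) := G(x, F(x))` is open at linear rate `L*C − D` around `(x₀, z₀)`. -/
theorem openness_of_composition_A_disjoint
    {X Y Z : Type*} [NormedAddCommGroup X] [NormedSpace ℝ X] [CompleteSpace X]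
    [NormedAddCommGroup Y] [NormedSpace ℝ Y] [CompleteSpace Y]
    [NormedAddCommGroup Z] [NormedSpace ℝ Z] [CompleteSpace Z]
    (F : X → Set Y) (G : X → Y → Set Z)
    (x₀ : X) (y₀ : Y) (z₀ : Z) (hy : y₀ ∈ F x₀) (hz : z₀ ∈ G x₀ y₀)
    (L C D : ℝ) (hL : 0 < L) (hC : 0 < C) (hD : 0 ≤ D)
    (hclF : ∃ r > 0, IsClosed ({q : X × Y | q.2 ∈ F q.1} ∩ Metric.closedBall (x₀, y₀) r))
    (hclG : ∃ r > 0, IsClosed ({q : (X × Y) × Z | q.2 ∈ G q.1.1 q.1.2} ∩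
      Metric.closedBall ((x₀, y₀), z₀) r))
    -- (i) G is D-Lipschitz-like w.r.t. x uniformly in y around ((x₀,y₀),z₀)
    (hGl : ∃ U ∈ nhds x₀, ∃ V ∈ nhds y₀, ∃ V' ∈ nhds z₀,
      ∀ y ∈ V, ∀ x ∈ U, ∀ x' ∈ U,
        G x y ∩ V' ⊆ G x' y + (D * ‖x - x'‖) • Metric.closedBall (0:Z) 1)
    -- (ii) G is C-open w.r.t. y uniformly in x around ((x₀,y₀),z₀)
    (hGo : ∃ ε > 0, ∃ U ∈ nhds x₀, ∃ V ∈ nhds y₀, ∃ V' ∈ nhds z₀,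
      ∀ ρ ∈ Ioo (0:ℝ) ε, ∀ x ∈ U, ∀ y ∈ V, ∀ z ∈ V', z ∈ G x y →
        ball z (ρ * C) ⊆ ⋃ y' ∈ ball y ρ, G x y')
    -- (iii) F is L-open around (x₀,y₀)
    (hF : ∃ ε > 0, ∃ U ∈ nhds x₀, ∃ V ∈ nhds y₀,
      ∀ ρ ∈ Ioo (0:ℝ) ε, ∀ x ∈ U, ∀ y ∈ V, y ∈ F x →
        ball y (ρ * L) ⊆ ⋃ x' ∈ ball x ρ, F x')
    -- (iv)
    (hrate : 0 < L * C - D)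
    -- the disjointness condition
    (hdisj : ∃ ε > 0, ∀ x ∈ ball x₀ ε, ∀ y y' : Y, y ≠ y' → G x y ∩ G x y' = ∅) :
    ∃ ε' > 0, ∀ ρ ∈ Ioo (0:ℝ) ε', ∀ x ∈ ball x₀ ε', ∀ z ∈ ball z₀ ε',
      z ∈ ⋃ y ∈ F x, G x y →
        ball z ((L * C - D) * ρ) ⊆ ⋃ x' ∈ ball x ρ, ⋃ y' ∈ F x', G x' y' := by
  obtain ⟨rF, hrF0, hclF⟩ := hclF
  obtain ⟨rG, hrG0, hclG⟩ := hclG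
  obtain ⟨UL, hUL, VL, hVL, V'L, hV'L, PGl⟩ := hGl
  obtain ⟨εG, hεG0, UG, hUG, VG, hVG, V'G, hV'G, PGo⟩ := hGo
  obtain ⟨εF, hεF0, UF, hUF, VF, hVF, PF⟩ := hF
  obtain ⟨εd, hεd0, Pd⟩ := hdisj
  obtain ⟨rUL, hrUL0, hULb⟩ := Metric.mem_nhds_iff.1 hUL
  obtain ⟨rVL, hrVL0, hVLb⟩ := Metric.mem_nhds_iff.1 hVL
  obtain ⟨rV'L, hrV'L0, hV'Lb⟩ := Metric.mem_nhds_iff.1 hV'L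
  obtain ⟨rUG, hrUG0, hUGb⟩ := Metric.mem_nhds_iff.1 hUG
  obtain ⟨rVG, hrVG0, hVGb⟩ := Metric.mem_nhds_iff.1 hVG
  obtain ⟨rV'G, hrV'G0, hV'Gb⟩ := Metric.mem_nhds_iff.1 hV'G
  obtain ⟨rUF, hrUF0, hUFb⟩ := Metric.mem_nhds_iff.1 hUF
  obtain ⟨rVF, hrVF0, hVFb⟩ := Metric.mem_nhds_iff.1 hVF
  obtain ⟨a, ha0, haUL, haVL, haV'L, haUG, haVG, haV'G, haUF, haVF, haεd, harF, harG⟩ :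
      ∃ a > 0, a ≤ rUL ∧ a ≤ rVL ∧ a ≤ rV'L ∧ a ≤ rUG ∧ a ≤ rVG ∧ a ≤ rV'G ∧
        a ≤ rUF ∧ a ≤ rVF ∧ a ≤ εd ∧ a ≤ rF ∧ a ≤ rG := by
    refine ⟨min rUL (min rVL (min rV'L (min rUG (min rVG (min rV'G (min rUF (min rVF
      (min εd (min rF rG))))))))), by positivity, ?_, ?_, ?_, ?_, ?_, ?_, ?_, ?_, ?_, ?_, ?_⟩
    · exact min_le_left _ _
    · exact le_trans (min_le_right _ _) (min_le_left _ _)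
    · exact le_trans (min_le_right _ _) (le_trans (min_le_right _ _) (min_le_left _ _))
    · exact le_trans (min_le_right _ _) (le_trans (min_le_right _ _) (le_trans (min_le_right _ _) (min_le_left _ _)))
    · exact le_trans (min_le_right _ _) (le_trans (min_le_right _ _) (le_trans (min_le_right _ _) (le_trans (min_le_right _ _) (min_le_left _ _))))
    · exact le_trans (min_le_right _ _) (le_trans (min_le_right _ _) (le_trans (min_le_right _ _) (le_trans (min_le_right _ _) (le_trans (min_le_right _ _) (min_le_left _ _)))))
    · exact le_trans (min_le_right _ _) (le_trans (min_le_right _ _) (le_trans (min_le_right _ _) (le_trans (min_le_right _ _) (le_trans (min_le_right _ _) (le_trans (min_le_right _ _) (min_le_left _ _))))))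
    · exact le_trans (min_le_right _ _) (le_trans (min_le_right _ _) (le_trans (min_le_right _ _) (le_trans (min_le_right _ _) (le_trans (min_le_right _ _) (le_trans (min_le_right _ _) (le_trans (min_le_right _ _) (min_le_left _ _)))))))
    · exact le_trans (min_le_right _ _) (le_trans (min_le_right _ _) (le_trans (min_le_right _ _) (le_trans (min_le_right _ _) (le_trans (min_le_right _ _) (le_trans (min_le_right _ _) (le_trans (min_le_right _ _) (le_trans (min_le_right _ _) (min_le_left _ _))))))))
    · exact le_trans (min_le_right _ _) (le_trans (min_le_right _ _) (le_trans (min_le_right _ _) (le_trans (min_le_right _ _) (le_trans (min_le_right _ _) (le_trans (min_le_right _ _) (le_trans (min_le_right _ _) (le_trans (min_le_right _ _) (le_trans (min_le_right _ _) (min_le_left _ _)))))))))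
    · exact le_trans (min_le_right _ _) (le_trans (min_le_right _ _) (le_trans (min_le_right _ _) (le_trans (min_le_right _ _) (le_trans (min_le_right _ _) (le_trans (min_le_right _ _) (le_trans (min_le_right _ _) (le_trans (min_le_right _ _) (le_trans (min_le_right _ _) (min_le_right _ _)))))))))
  -- useful ball-to-window inclusions
  have hXwin : ∀ x', ‖x' - x₀‖ < a → x' ∈ UL ∧ x' ∈ UG ∧ x' ∈ UF := by
    intro x' h
    refine ⟨hULb ?_, hUGb ?_, hUFb ?_⟩ <;> rw [mem_ball, dist_eq_norm] <;> linarith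
  have hYwin : ∀ y', ‖y' - y₀‖ < a → y' ∈ VL ∧ y' ∈ VG ∧ y' ∈ VF := by
    intro y' h
    refine ⟨hVLb ?_, hVGb ?_, hVFb ?_⟩ <;> rw [mem_ball, dist_eq_norm] <;> linarith
  have hZwin : ∀ w, ‖w - z₀‖ < a → w ∈ V'L ∧ w ∈ V'G := by
    intro w h
    refine ⟨hV'Lb ?_, hV'Gb ?_⟩ <;> rw [mem_ball, dist_eq_norm] <;> linarith
  set M : ℝ := (1 + D) + (1 + D)/C + L + 2*(L*C - D) + 4 with hMdef
  have hM4 : 4 ≤ M := by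
    rw [hMdef]
    have h1 : 0 ≤ (1+D)/C := by positivity
    linarith
  have hM0 : 0 < M := by linarith
  set ε' : ℝ := min (a / M) (min (C * εG / (2 * M)) εF) with hε'def
  have hε'0 : 0 < ε' := by positivity
  have hε'M : M * ε' ≤ a := by
    have : ε' ≤ a / M := min_le_left _ _
    calc M * ε' ≤ M * (a / M) := mul_le_mul_of_nonneg_left this hM0.le
    _ = a := by field_simp
  have hε'G : M * ε' ≤ C * εG / 2 := by
    have h1 : ε' ≤ C * εG / (2 * M) := le_trans (min_le_right _ _) (min_le_left _ _)
    calc M * ε' ≤ M * (C * εG / (2*M)) := mul_le_mul_of_nonneg_left h1 hM0.le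
    _ = C * εG / 2 := by field_simp
  have hε'F : ε' ≤ εF := le_trans (min_le_right _ _) (min_le_right _ _)
  have hε'a : ε' ≤ a := by
    have h1 : 1 * ε' ≤ M * ε' := mul_le_mul_of_nonneg_right (by linarith) hε'0.le
    linarith
  clear_value M ε'
  refine ⟨ε', hε'0, ?_⟩
  rintro ρ ⟨hρ0, hρε⟩ x hx z hzb hzmem
  rw [mem_ball, dist_eq_norm] at hx hzb
  simp only [Set.mem_iUnion] at hzmem
  obtain ⟨y, hyF, hzG⟩ := hzmem
  intro z₁ hz₁
  rw [mem_ball, dist_eq_norm] at hz₁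
  -- Step 1: by the disjointness condition, y is close to y₀.
  have hyy₀ : ‖y - y₀‖ < (1 + D) * ε' / C := by
    have hx₀win : x₀ ∈ UL := hULb (mem_ball_self hrUL0)
    have hxUL : x ∈ UL := (hXwin x (by linarith)).1
    have hy₀VL : y₀ ∈ VL := hVLb (mem_ball_self hrVL0)
    have hz₀V'L : z₀ ∈ V'L := hV'Lb (mem_ball_self hrV'L0)
    have := PGl y₀ hy₀VL x₀ hx₀win x hxUL ⟨hz, hz₀V'L⟩
    obtain ⟨w₀, hw₀G, hw₀d⟩ := mem_add_smul_cball (by positivity) this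
    have hx₀x : ‖x₀ - x‖ ≤ ε' := by rw [norm_sub_rev]; linarith
    have hw₀z₀ : ‖z₀ - w₀‖ ≤ D * ε' := hw₀d.trans (mul_le_mul_of_nonneg_left hx₀x hD)
    set s : ℝ := (1 + D) * ε' / C with hsdef
    have hs0 : 0 < s := by positivity
    clear_value s
    have h1DM : (1:ℝ) + D ≤ M := by
      rw [hMdef]
      have h1 : 0 ≤ (1+D)/C := by positivity
      linarith
    have h1Dε' : (1 + D) * ε' ≤ M * ε' := mul_le_mul_of_nonneg_right h1DM hε'0.le
    have hCεG : 0 < C * εG := mul_pos hC hεG0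
    have hsεG : s < εG := by
      rw [hsdef, div_lt_iff₀ hC]
      linarith
    have hxUG : x ∈ UG := (hXwin x (by linarith)).2.1
    have hy₀VG : y₀ ∈ VG := hVGb (mem_ball_self hrVG0)
    have hw₀V'G : w₀ ∈ V'G := by
      apply hV'Gb
      rw [mem_ball, dist_eq_norm, norm_sub_rev]
      have : D * ε' < (1 + D) * ε' := by
        have := mul_lt_mul_of_pos_right (show D < 1 + D by linarith) hε'0
        linarith
      linarith
    have hzball : z ∈ ball w₀ (s * C) := by
      rw [mem_ball, dist_eq_norm]
      have : ‖z - w₀‖ ≤ ‖z - z₀‖ + ‖z₀ - w₀‖ := norm_sub_le_norm_sub_add_norm_sub _ _ _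
      have hsC : s * C = (1 + D) * ε' := by rw [hsdef]; field_simp
      linarith
    obtain ⟨yt, hytball, hzGyt⟩ := Set.mem_iUnion₂.1
      (PGo s ⟨hs0, hsεG⟩ x hxUG y₀ hy₀VG w₀ hw₀V'G hw₀G hzball)
    have : y = yt := by
      by_contra hne
      have hxd : x ∈ ball x₀ εd := by
        rw [mem_ball, dist_eq_norm]; linarith
      have := Pd x hxd y yt hne
      have hmem : z ∈ G x y ∩ G x yt := ⟨hzG, hzGyt⟩; rw [this] at hmem; exact absurd hmem (Set.notMem_empty z)
    rw [this]
    rw [mem_ball, dist_eq_norm] at hytball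
    exact hytball
  -- Step 2: the iteration.
  set c₀ : ℝ := ‖z₁ - z‖ / (L * C - D) with hc₀def
  have hc₀0 : 0 ≤ c₀ := by positivity
  have hc₀ρ : c₀ < ρ := by rw [hc₀def, div_lt_iff₀ hrate]; linarith
  set ρ' : ℝ := (c₀ + ρ) / 2 with hρ'def
  have hρ'1 : c₀ < ρ' := by rw [hρ'def]; linarith
  have hρ'2 : ρ' < ρ := by rw [hρ'def]; linarith
  have hρ'0 : 0 < ρ' := by rw [hρ'def]; linarith
  clear_value c₀ ρ'
  have hLC : 0 < L * C := mul_pos hL hC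
  set q : ℝ := D / (L * C) with hqdef
  have hq0 : 0 ≤ q := by positivity
  have hq1 : q < 1 := by rw [hqdef, div_lt_one hLC]; linarith
  have hqD : q * (L * C) = D := by rw [hqdef]; field_simp
  clear_value q
  set B : ℝ := 1 - (1 - q) * ρ' / ρ with hBdef
  have hqB : q < B := by
    rw [hBdef]
    have h1 : (1 - q) * ρ' / ρ < (1 - q) := by
      rw [div_lt_iff₀ hρ0]
      have := mul_lt_mul_of_pos_left hρ'2 (show (0:ℝ) < 1 - q by linarith)
      linarith
    linarith
  have hB1 : B < 1 := by
    rw [hBdef]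
    have : 0 < (1 - q) * ρ' / ρ := div_pos (mul_pos (by linarith) hρ'0) hρ0
    linarith
  clear_value B
  set q' : ℝ := (q + B) / 2 with hq'def
  have hq'0 : 0 < q' := by rw [hq'def]; linarith
  have hqq' : q < q' := by rw [hq'def]; linarith
  have hq'B : q' < B := by rw [hq'def]; linarith
  clear_value q'
  have hq'1 : q' < 1 := by linarith
  have hq'I : 0 < 1 - q' := by linarith
  have hDq' : D ≤ q' * (L * C) := by
    rw [← hqD]; exact mul_le_mul_of_nonneg_right hqq'.le hLC.le
  set E₀ : ℝ := (L * C - D) * ρ' with hE₀def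
  have hE₀0 : 0 < E₀ := by positivity
  clear_value E₀
  have he0 : ‖z₁ - z‖ < E₀ := by
    rw [hE₀def]
    have h1 : ‖z₁ - z‖ = (L * C - D) * c₀ := by rw [hc₀def]; field_simp
    rw [h1]
    exact mul_lt_mul_of_pos_left hρ'1 hrate
  set T : ℝ := E₀ / (L * C * (1 - q')) with hTdef
  have hT0 : 0 < T := by positivity
  clear_value T
  have hTρ : T < ρ := by
    rw [hTdef, div_lt_iff₀ (by positivity)]
    have hE₀q : E₀ = (1 - q) * ρ' * (L * C) := by
      rw [hE₀def, ← hqD]; ring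
    have h1 : 1 - B < 1 - q' := by linarith
    have h2 : 1 - B = (1 - q) * ρ' / ρ := by rw [hBdef]; ring
    have h3 : (1 - q) * ρ' < ρ * (1 - q') := by
      rw [← div_lt_iff₀' hρ0, ← h2]; linarith
    rw [hE₀q]
    have := mul_lt_mul_of_pos_right h3 hLC
    linarith
  -- instantiate the iteration lemma with the windows `ball _ a`
  have key := iterate_aux F G L C D q' E₀ εG εF hL hC hD hq'0 hq'1 hDq' hE₀0
    (ball x₀ a) (ball y₀ a) (ball z₀ a)
    ({q : X × Y | q.2 ∈ F q.1} ∩ Metric.closedBall (x₀, y₀) rF)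
    ({q : (X × Y) × Z | q.2 ∈ G q.1.1 q.1.2} ∩ Metric.closedBall ((x₀, y₀), z₀) rG)
    hclF hclG x y z z₁
    ?_ ?_ ?_ ?_ ?_ ?_ ?_ ?_ ?_ ?_ ?_ ?_ hyF hzG he0
  · obtain ⟨x', y', hx'd, hy'F, hz₁G⟩ := key
    rw [← hTdef] at hx'd
    simp only [Set.mem_iUnion]
    refine ⟨x', ?_, y', hy'F, hz₁G⟩
    rw [mem_ball, dist_eq_norm]
    calc ‖x' - x‖ ≤ T := hx'd
    _ < ρ := hTρ
  -- hWX
  · intro x' h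
    rw [← hTdef] at h
    rw [mem_ball, dist_eq_norm]
    have : ‖x' - x₀‖ ≤ ‖x' - x‖ + ‖x - x₀‖ := norm_sub_le_norm_sub_add_norm_sub _ _ _
    have h2 : (2:ℝ) * ε' ≤ M * ε' := mul_le_mul_of_nonneg_right (by linarith) hε'0.le
    linarith
  -- hWY
  · intro y' h
    rw [← hTdef] at h
    rw [mem_ball, dist_eq_norm]
    have h1 : ‖y' - y₀‖ ≤ ‖y' - y‖ + ‖y - y₀‖ := norm_sub_le_norm_sub_add_norm_sub _ _ _
    have h2 : L * T < L * ε' := mul_lt_mul_of_pos_left (by linarith) hL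
    have h3 : (L + (1 + D)/C) * ε' ≤ M * ε' := by
      refine mul_le_mul_of_nonneg_right ?_ hε'0.le
      rw [hMdef]
      linarith
    have h4 : (1 + D) * ε' / C = ((1 + D)/C) * ε' := by ring
    linarith
  -- hWZ
  · intro w h
    rw [mem_ball, dist_eq_norm]
    have h1 : ‖w - z₀‖ ≤ ‖w - z₁‖ + ‖z₁ - z‖ + ‖z - z₀‖ := by
      calc ‖w - z₀‖ ≤ ‖w - z‖ + ‖z - z₀‖ := norm_sub_le_norm_sub_add_norm_sub _ _ _
      _ ≤ (‖w - z₁‖ + ‖z₁ - z‖) + ‖z - z₀‖ := by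
          have := norm_sub_le_norm_sub_add_norm_sub w z₁ z
          linarith
    have h2 : ‖w - z₁‖ = ‖z₁ - w‖ := norm_sub_rev _ _
    have h3 : E₀ < (L*C - D) * ε' := by
      rw [hE₀def]
      exact mul_lt_mul_of_pos_left (by linarith) hrate
    have h4 : ‖z₁ - z‖ < (L*C - D) * ε' := by linarith
    have h5 : (2*(L*C - D) + 1) * ε' ≤ M * ε' := by
      refine mul_le_mul_of_nonneg_right ?_ hε'0.le
      rw [hMdef]
      have h6 : 0 ≤ (1+D)/C := by positivity
      linarith
    linarith
  -- hSF
  · intro x' hx' y' hy' hmem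
    refine ⟨hmem, ?_⟩
    rw [Metric.mem_closedBall, Prod.dist_eq]
    rw [mem_ball] at hx' hy'
    exact max_le (by linarith) (by linarith)
  · exact fun p hp => hp.1
  -- hSG
  · intro x' hx' y' hy' w hw hmem
    refine ⟨hmem, ?_⟩
    rw [Metric.mem_closedBall, Prod.dist_eq, Prod.dist_eq]
    rw [mem_ball] at hx' hy' hw
    exact max_le (max_le (by linarith) (by linarith)) (by linarith)
  · exact fun p hp => hp.1
  -- hGo restricted
  · intro ρ'' hρ'' x' hx' y' hy' w hw hmem
    rw [mem_ball, dist_eq_norm] at hx' hy' hw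
    exact PGo ρ'' hρ'' x' (hXwin x' hx').2.1 y' (hYwin y' hy').2.1 w (hZwin w hw).2 hmem
  -- hF restricted
  · intro ρ'' hρ'' x' hx' y' hy' hmem
    rw [mem_ball, dist_eq_norm] at hx' hy'
    exact PF ρ'' hρ'' x' (hXwin x' hx').2.2 y' (hYwin y' hy').2.2 hmem
  -- hGl restricted
  · intro y' hy' x' hx' x'' hx''
    rw [mem_ball, dist_eq_norm] at hx' hx'' hy'
    rintro w ⟨hw1, hw2⟩
    rw [mem_ball, dist_eq_norm] at hw2
    exact PGl y' (hYwin y' hy').1 x' (hXwin x' hx').1 x'' (hXwin x'' hx'').1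
      ⟨hw1, (hZwin w hw2).1⟩
  -- size: E₀ / C < εG
  · rw [div_lt_iff₀ hC]
    have h1 : E₀ < (L*C - D) * ε' := by
      rw [hE₀def]
      exact mul_lt_mul_of_pos_left (by linarith) hrate
    have h2 : (L*C - D) * ε' ≤ M * ε' := by
      refine mul_le_mul_of_nonneg_right ?_ hε'0.le
      rw [hMdef]
      have h6 : 0 ≤ (1+D)/C := by positivity
      linarith
    have hCεG : 0 < C * εG := mul_pos hC hεG0
    linarith
  -- size: E₀ / (L*C) < εF
  · rw [div_lt_iff₀ hLC]
    have h1 : E₀ ≤ ρ' * (L * C) := by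
      rw [hE₀def]
      have := mul_le_mul_of_nonneg_right (show L*C - D ≤ L*C by linarith) hρ'0.le
      linarith
    have h2 : ρ' * (L*C) < εF * (L*C) :=
      mul_lt_mul_of_pos_right (by linarith) hLC
    linarith
end

section
/- Let X, Y, Z be Banach spaces, F : X ⇉ Y and G : X × Y ⇉ Z with ȳ ∈ F(x̄), z̄ ∈ G(x̄,ȳ), graphs locally closed, Φ(x) := G(x, F(x)). Assume G is open at linear rate C > 0 with respect to x uniformly in y around ((x̄,ȳ),z̄), G is Lipschitz-like with respect to y uniformly in x with constant D ≥ 0, F is Lipschitz-like around (x̄,ȳ) with constant M > 0, and C − MD > 0. Then there exists ε > 0 such that for every ρ ∈ (0,ε) and every (x,y,z) ∈ B(x̄,ε) × B(ȳ,ε) × B(z̄,ε) with y ∈ F(x) and z ∈ G(x,y), B(z, (C−MD)ρ) ⊆ Φ(B(x,ρ)). -/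
open Set Metric Pointwise

set_option maxHeartbeats 1000000

/-- Openness at linear rate `C − M*D` of `Φ(x) := G(x, F(x))` at points with
intermediate points near the reference point (part (B) of the theorem). -/
theorem openness_of_composition_B
    {X Y Z : Type*} [NormedAddCommGroup X] [NormedSpace ℝ X] [CompleteSpace X]
    [NormedAddCommGroup Y] [NormedSpace ℝ Y] [CompleteSpace Y]
    [NormedAddCommGroup Z] [NormedSpace ℝ Z] [CompleteSpace Z]
    (F : X → Set Y) (G : X → Y → Set Z)
    (x₀ : X) (y₀ : Y) (z₀ : Z) (hy : y₀ ∈ F x₀) (hz : z₀ ∈ G x₀ y₀)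
    (M C D : ℝ) (hM : 0 < M) (hC : 0 < C) (hD : 0 ≤ D)
    (hclF : ∃ r > 0, IsClosed ({q : X × Y | q.2 ∈ F q.1} ∩ Metric.closedBall (x₀, y₀) r))
    (hclG : ∃ r > 0, IsClosed ({q : (X × Y) × Z | q.2 ∈ G q.1.1 q.1.2} ∩
      Metric.closedBall ((x₀, y₀), z₀) r))
    -- (i) G is C-open w.r.t. x uniformly in y around ((x₀,y₀),z₀)
    (hGo : ∃ ε > 0, ∃ U ∈ nhds x₀, ∃ V ∈ nhds y₀, ∃ V' ∈ nhds z₀,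
      ∀ ρ ∈ Ioo (0:ℝ) ε, ∀ y ∈ V, ∀ x ∈ U, ∀ z ∈ V', z ∈ G x y →
        ball z (ρ * C) ⊆ ⋃ x' ∈ ball x ρ, G x' y)
    -- (ii) G is D-Lipschitz-like w.r.t. y uniformly in x around ((x₀,y₀),z₀)
    (hGl : ∃ U ∈ nhds x₀, ∃ V ∈ nhds y₀, ∃ V' ∈ nhds z₀,
      ∀ x ∈ U, ∀ y ∈ V, ∀ y' ∈ V,
        G x y ∩ V' ⊆ G x y' + (D * ‖y - y'‖) • Metric.closedBall (0:Z) 1)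
    -- (iii) F is M-Lipschitz-like around (x₀,y₀)
    (hF : ∃ U ∈ nhds x₀, ∃ V ∈ nhds y₀, ∀ x ∈ U, ∀ u ∈ U,
      F x ∩ V ⊆ F u + (M * ‖x - u‖) • Metric.closedBall (0:Y) 1)
    -- (iv)
    (hrate : 0 < C - M * D) :
    ∃ ε > 0, ∀ ρ ∈ Ioo (0:ℝ) ε,
      ∀ x ∈ ball x₀ ε, ∀ y ∈ ball y₀ ε, ∀ z ∈ ball z₀ ε,
        y ∈ F x → z ∈ G x y →
          ball z ((C - M * D) * ρ) ⊆ ⋃ x' ∈ ball x ρ, ⋃ y' ∈ F x', G x' y' := by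
  obtain ⟨rF, hrF, hclF⟩ := hclF
  obtain ⟨rG, hrG, hclG⟩ := hclG
  obtain ⟨ε₁, hε₁, U₁, hU₁, V₁, hV₁, W₁, hW₁, hopen⟩ := hGo
  obtain ⟨U₂, hU₂, V₂, hV₂, W₂, hW₂, hlip⟩ := hGl
  obtain ⟨U₃, hU₃, V₃, hV₃, hlipF⟩ := hF
  obtain ⟨δX, hδX, hUX⟩ :=
    Metric.mem_nhds_iff.1 (Filter.inter_mem hU₁ (Filter.inter_mem hU₂ hU₃))
  obtain ⟨δY, hδY, hVY⟩ :=
    Metric.mem_nhds_iff.1 (Filter.inter_mem hV₁ (Filter.inter_mem hV₂ hV₃))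
  obtain ⟨δZ, hδZ, hWZ⟩ := Metric.mem_nhds_iff.1 (Filter.inter_mem hW₁ hW₂)
  obtain ⟨δ, hδdef⟩ : ∃ δ : ℝ, δ = min (min δX δY) (min δZ (min rF rG)) := ⟨_, rfl⟩
  have hδ : 0 < δ := by
    rw [hδdef]; exact lt_min (lt_min hδX hδY) (lt_min hδZ (lt_min hrF hrG))
  obtain ⟨ε, hεdef⟩ : ∃ ε : ℝ, ε = min ε₁ (δ / (M + 3*C + 3)) := ⟨_, rfl⟩
  have hK : (0:ℝ) < M + 3*C + 3 := by positivity
  have hε : 0 < ε := by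
    rw [hεdef]; exact lt_min hε₁ (div_pos hδ hK)
  have hεε₁ : ε ≤ ε₁ := by rw [hεdef]; exact min_le_left _ _
  have hεδ : ε * (M + 3*C + 3) ≤ δ := by
    have h1 : ε ≤ δ / (M + 3*C + 3) := by rw [hεdef]; exact min_le_right _ _
    have h2 := mul_le_mul_of_nonneg_right h1 hK.le
    have h3 : δ / (M + 3*C + 3) * (M + 3*C + 3) = δ := div_mul_cancel₀ _ hK.ne'
    linarith only [h2, h3]
  have hεM : 0 ≤ ε*M := by positivity
  have hεC : 0 ≤ ε*C := by positivity
  have hεKexp : ε * (M + 3*C + 3) = ε*M + 3*(ε*C) + 3*ε := by ring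
  have h2ε : 2*ε ≤ δ := by linarith only [hεδ, hεKexp, hεM, hεC, hε]
  have hMεδ : M*ε + ε ≤ δ := by linarith only [hεδ, hεKexp, hεM, hεC, hε, mul_comm M ε]
  have h2Cε : C*ε + C*ε + ε ≤ δ := by
    linarith only [hεδ, hεKexp, hεM, hεC, hε, mul_comm C ε]
  have hδδX : δ ≤ δX := by rw [hδdef]; exact (min_le_left _ _).trans (min_le_left _ _)
  have hδδY : δ ≤ δY := by rw [hδdef]; exact (min_le_left _ _).trans (min_le_right _ _)
  have hδδZ : δ ≤ δZ := by rw [hδdef]; exact (min_le_right _ _).trans (min_le_left _ _)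
  have hδrF : δ ≤ rF := by
    rw [hδdef]; exact (min_le_right _ _).trans ((min_le_right _ _).trans (min_le_left _ _))
  have hδrG : δ ≤ rG := by
    rw [hδdef]; exact (min_le_right _ _).trans ((min_le_right _ _).trans (min_le_right _ _))
  refine ⟨ε, hε, ?_⟩
  intro ρ hρ x hx y hy1 z hz1 hyF hzG w hw
  rw [Metric.mem_ball] at hx hy1 hz1 hw
  obtain ⟨hρpos, hρε⟩ := hρ
  have he₀0 : 0 ≤ dist w z := dist_nonneg
  have hwz : dist w z < (C - M*D)*ρ := hw
  -- choose parameters ρ', a, η, θ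
  have hq : dist w z / (C - M*D) < ρ :=
    (div_lt_iff₀ hrate).2 (by linarith only [hwz, mul_comm ρ (C - M*D)])
  obtain ⟨ρ', hρ'def⟩ : ∃ r : ℝ, r = (dist w z/(C - M*D) + ρ)/2 := ⟨_, rfl⟩
  have hρ'ρ : ρ' < ρ := by rw [hρ'def]; linarith only [hq]
  have hρ'pos : 0 < ρ' := by
    have h1 : 0 ≤ dist w z/(C - M*D) := div_nonneg he₀0 hrate.le
    rw [hρ'def]; linarith only [h1, hρpos]
  have he₀ρ' : dist w z < (C - M*D)*ρ' := by
    have h1 : dist w z / (C - M*D) < ρ' := by rw [hρ'def]; linarith only [hq]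
    have h2 := (div_lt_iff₀ hrate).1 h1
    linarith only [h2, mul_comm ρ' (C - M*D)]
  obtain ⟨a, ha1, ha2⟩ : ∃ a : ℝ, dist w z < a ∧ a < (C - M*D)*ρ' :=
    ⟨(dist w z + (C - M*D)*ρ')/2, by linarith only [he₀ρ'], by linarith only [he₀ρ']⟩
  have hapos : 0 < a := lt_of_le_of_lt he₀0 ha1
  obtain ⟨η, θ, hηpos, hθ0, hθ1, hθL, hθB⟩ :
      ∃ η θ : ℝ, 0 < η ∧ 0 < θ ∧ θ < 1 ∧ M*D*(a+η) ≤ a*θ*C ∧ C*ρ'*(1-θ) = a + η := by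
    obtain ⟨B, hBdef⟩ : ∃ B : ℝ, B = C*ρ' := ⟨_, rfl⟩
    obtain ⟨T, hTdef⟩ : ∃ T : ℝ, T = M*D*ρ' := ⟨_, rfl⟩
    have hB : 0 < B := by rw [hBdef]; positivity
    have hT : 0 ≤ T := by rw [hTdef]; positivity
    have haB : a + T < B := by
      have h : (C - M*D)*ρ' = B - T := by rw [hBdef, hTdef]; ring
      linarith only [ha2, h]
    have hTa : 0 < T + a := by linarith only [hT, hapos]
    obtain ⟨η, hηdef⟩ : ∃ η : ℝ, η = (a*B - a*(T+a))/(2*(T+a)) := ⟨_, rfl⟩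
    have hηpos : 0 < η := by
      rw [hηdef]
      apply div_pos _ (by linarith only [hTa])
      have h1 := mul_pos hapos (show (0:ℝ) < B - (T+a) by linarith only [haB])
      linarith only [h1]
    have hsum : a + η = (a*(T+a) + a*B)/(2*(T+a)) := by
      rw [hηdef]; field_simp; ring
    have hηB : a + η < B := by
      rw [hsum, div_lt_iff₀ (by linarith only [hTa])]
      have f1 := mul_lt_mul_of_pos_right (show a < B by linarith only [haB, hT]) hTa
      have f2 := mul_le_mul_of_nonneg_right (show a ≤ T + a by linarith only [hT]) hB.le
      linarith only [f1, f2]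
    obtain ⟨θ, hθdef⟩ : ∃ θ : ℝ, θ = 1 - (a+η)/B := ⟨_, rfl⟩
    have hθ0 : 0 < θ := by
      have h1 : (a+η)/B < 1 := (div_lt_one hB).2 hηB
      rw [hθdef]; linarith only [h1]
    have hθ1 : θ < 1 := by
      have h1 : 0 < (a+η)/B := div_pos (by linarith only [hapos, hηpos]) hB
      rw [hθdef]; linarith only [h1]
    have h1 : (a+η)*(T+a) = (a*(T+a) + a*B)/2 := by
      rw [hsum]; field_simp
    have h2 : (a+η)*(T+a) ≤ a*B := by
      rw [h1]
      have f1 := mul_lt_mul_of_pos_left (show T + a < B by linarith only [haB]) hapos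
      linarith only [f1]
    have hML : M*D*(a+η) ≤ a*θ*C := by
      have hθexp : a*θ*C*B = a*C*B - a*C*(a+η) := by
        rw [hθdef]; field_simp
      have hl : M*D*(a+η)*B = C*(T*(a+η)) := by rw [hBdef, hTdef]; ring
      have h3 := mul_le_mul_of_nonneg_left h2 hC.le
      have hgoalB : M*D*(a+η)*B ≤ a*θ*C*B := by
        rw [hθexp, hl]; linarith only [h3]
      exact le_of_mul_le_mul_right hgoalB hB
    have hfin : C*ρ'*(1-θ) = a + η := by
      rw [hθdef, ← hBdef]; field_simp; ring
    exact ⟨η, θ, hηpos, hθ0, hθ1, hML, hfin⟩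
  -- auxiliary smallness facts
  have haε : a < C*ε := by
    have f1 : 0 ≤ M*D*ρ' := by positivity
    have f2 : C*ρ' < C*ε := mul_lt_mul_of_pos_left (by linarith only [hρ'ρ, hρε]) hC
    linarith only [ha2, f1, f2]
  have he₀ε : dist w z < C*ε := by
    have f1 : 0 ≤ M*D*ρ := by positivity
    have f2 : C*ρ < C*ε := mul_lt_mul_of_pos_left hρε hC
    linarith only [hwz, f1, f2]
  -- membership helpers
  have hmemx : ∀ u : X, dist u x ≤ ρ' → u ∈ U₁ ∧ u ∈ U₂ ∧ u ∈ U₃ := by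
    intro u hu
    have htri := dist_triangle u x x₀
    have h := hUX (show u ∈ ball x₀ δX by
      rw [Metric.mem_ball]
      linarith only [htri, hu, hx, hρ'ρ, hρε, h2ε, hδδX])
    exact ⟨h.1, h.2.1, h.2.2⟩
  have hmemy : ∀ v : Y, dist v y ≤ M*ρ' → v ∈ V₁ ∧ v ∈ V₂ ∧ v ∈ V₃ := by
    intro v hv
    have htri := dist_triangle v y y₀
    have hMρ' : M*ρ' < M*ε := mul_lt_mul_of_pos_left (by linarith only [hρ'ρ, hρε]) hM
    have h := hVY (show v ∈ ball y₀ δY by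
      rw [Metric.mem_ball]
      linarith only [htri, hv, hy1, hMρ', hMεδ, hδδY])
    exact ⟨h.1, h.2.1, h.2.2⟩
  have hmemz : ∀ s : Z, dist w s ≤ a → s ∈ W₁ ∧ s ∈ W₂ := by
    intro s hs
    have htri := dist_triangle s w z₀
    have htri2 := dist_triangle w z z₀
    have hcomm : dist s w = dist w s := dist_comm s w
    have h := hWZ (show s ∈ ball z₀ δZ by
      rw [Metric.mem_ball]
      linarith only [htri, htri2, hcomm, hs, haε, he₀ε, hz1, h2Cε, hδδZ])
    exact ⟨h.1, h.2⟩
  -- the inductive step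
  have hch : ∀ (n : ℕ) (p : X × Y × Z), ∃ q : X × Y × Z,
      (p.2.1 ∈ F p.1 ∧ p.2.2 ∈ G p.1 p.2.1 ∧ dist w p.2.2 ≤ a*θ^n ∧
        dist p.1 x ≤ ρ'*(1-θ^n) ∧ dist p.2.1 y ≤ M*(ρ'*(1-θ^n))) →
      ((q.2.1 ∈ F q.1 ∧ q.2.2 ∈ G q.1 q.2.1 ∧ dist w q.2.2 ≤ a*θ^(n+1) ∧
        dist q.1 x ≤ ρ'*(1-θ^(n+1)) ∧ dist q.2.1 y ≤ M*(ρ'*(1-θ^(n+1)))) ∧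
        dist p.1 q.1 ≤ ρ'*(1-θ)*θ^n ∧ dist p.2.1 q.2.1 ≤ M*(ρ'*(1-θ))*θ^n) := by
    intro n p
    by_cases hp : p.2.1 ∈ F p.1 ∧ p.2.2 ∈ G p.1 p.2.1 ∧ dist w p.2.2 ≤ a*θ^n ∧
        dist p.1 x ≤ ρ'*(1-θ^n) ∧ dist p.2.1 y ≤ M*(ρ'*(1-θ^n))
    swap
    · exact ⟨p, fun h => absurd h hp⟩
    obtain ⟨u, v, s⟩ := p
    obtain ⟨hvF, hsG, hws, hux, hvy⟩ := hp
    simp only at hvF hsG hws hux hvy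
    have hθn0 : (0:ℝ) < θ^n := pow_pos hθ0 n
    have hθn1 : θ^n ≤ 1 := pow_le_one₀ hθ0.le hθ1.le
    have hpow : θ^(n+1) = θ^n*θ := pow_succ θ n
    have hθsn0 : (0:ℝ) ≤ θ^(n+1) := (pow_pos hθ0 (n+1)).le
    have hηθn : 0 < η*θ^n := mul_pos hηpos hθn0
    obtain ⟨σ, hσdef⟩ : ∃ σ : ℝ, σ = (dist w s + η*θ^n)/C := ⟨_, rfl⟩
    have hwsnn : 0 ≤ dist w s := dist_nonneg
    have hσpos : 0 < σ := by
      rw [hσdef]; exact div_pos (by linarith only [hwsnn, hηθn]) hC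
    have hσC : σ * C = dist w s + η*θ^n := by
      rw [hσdef]; exact div_mul_cancel₀ _ hC.ne'
    have hσle : σ ≤ ρ'*(1-θ)*θ^n := by
      rw [hσdef, div_le_iff₀ hC]
      have f1 : C*ρ'*(1-θ)*θ^n = (a+η)*θ^n := by rw [hθB]
      have f2 := mul_le_mul_of_nonneg_right hws (le_of_lt hθn0)
      -- f2 : dist w s * θ^n ≤ a*θ^n*θ^n, not what we want; use hws directly
      linarith only [hws, f1]
    have hσρ' : σ ≤ ρ' := by
      have g : (1-θ)*θ^n ≤ 1 := mul_le_one₀ (by linarith only [hθ0]) hθn0.le hθn1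
      have g2 := mul_le_mul_of_nonneg_left g hρ'pos.le
      linarith only [hσle, g2]
    have hσε₁ : σ < ε₁ := by linarith only [hσρ', hρ'ρ, hρε, hεε₁]
    have hρθn : 0 ≤ ρ'*θ^n := mul_nonneg hρ'pos.le hθn0.le
    have huρ' : dist u x ≤ ρ' := by linarith only [hux, hρθn]
    obtain ⟨huU₁, huU₂, huU₃⟩ := hmemx u huρ'
    obtain ⟨hvV₁, hvV₂, hvV₃⟩ := hmemy v (by
      have g := mul_nonneg (mul_nonneg hM.le hρ'pos.le) hθn0.le
      linarith only [hvy, g])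
    obtain ⟨hsW₁, hsW₂⟩ := hmemz s (by
      have g := mul_le_mul_of_nonneg_left hθn1 hapos.le
      linarith only [hws, g])
    obtain ⟨hwW₁, hwW₂⟩ := hmemz w (by simpa using hapos.le)
    -- openness of G in x
    have hwball : w ∈ ball s (σ * C) := by
      rw [Metric.mem_ball, hσC]; linarith only [hηθn]
    have hbig := hopen σ (Set.mem_Ioo.2 ⟨hσpos, hσε₁⟩) v hvV₁ u huU₁ s hsW₁ hsG hwball
    rw [Set.mem_iUnion₂] at hbig
    obtain ⟨u', hu'b, hwG⟩ := hbig
    rw [Metric.mem_ball] at hu'b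
    have huu' : dist u u' ≤ σ := by rw [dist_comm]; exact hu'b.le
    have hu'x : dist u' x ≤ ρ'*(1-θ^(n+1)) := by
      have htri := dist_triangle u' u x
      have hpow' : ρ'*(1-θ^(n+1)) = ρ'*(1-θ)*θ^n + ρ'*(1-θ^n) := by ring
      linarith only [htri, hu'b, hσle, hux, hpow']
    obtain ⟨hu'U₁, hu'U₂, hu'U₃⟩ := hmemx u' (by
      have g : 0 ≤ ρ'*θ^(n+1) := mul_nonneg hρ'pos.le hθsn0
      linarith only [hu'x, g])
    -- Lipschitz-likeness of F
    have hvmem := hlipF u huU₃ u' hu'U₃ ⟨hvF, hvV₃⟩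
    rw [Set.mem_add] at hvmem
    obtain ⟨v', hv'F, qy, hqy, hvq⟩ := hvmem
    rw [Set.mem_smul_set] at hqy
    obtain ⟨b, hb, rfl⟩ := hqy
    have hbn : ‖b‖ ≤ 1 := by rwa [mem_closedBall_zero_iff] at hb
    have hvv' : dist v v' ≤ M * σ := by
      rw [dist_eq_norm]
      have hvmv' : v - v' = (M*‖u - u'‖) • b := by rw [← hvq]; abel
      rw [hvmv', norm_smul, Real.norm_eq_abs, abs_of_nonneg (by positivity)]
      have hn : ‖u - u'‖ ≤ σ := by rw [← dist_eq_norm]; exact huu'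
      have g1 : ‖u - u'‖ * ‖b‖ ≤ σ * 1 :=
        mul_le_mul hn hbn (norm_nonneg b) hσpos.le
      have g2 := mul_le_mul_of_nonneg_left g1 hM.le
      linarith only [g2]
    have hv'y : dist v' y ≤ M*(ρ'*(1-θ^(n+1))) := by
      have htri := dist_triangle v' v y
      have hcm : dist v' v = dist v v' := dist_comm v' v
      have g := mul_le_mul_of_nonneg_left hσle hM.le
      have hpow'' : M*(ρ'*(1-θ^(n+1))) = M*(ρ'*(1-θ)*θ^n) + M*(ρ'*(1-θ^n)) := by ring
      linarith only [htri, hcm, hvv', g, hvy, hpow'']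
    obtain ⟨hv'V₁, hv'V₂, hv'V₃⟩ := hmemy v' (by
      have g : 0 ≤ M*(ρ'*θ^(n+1)) := mul_nonneg hM.le (mul_nonneg hρ'pos.le hθsn0)
      linarith only [hv'y, g])
    -- Lipschitz-likeness of G in y
    have hwmem2 := hlip u' hu'U₂ v hvV₂ v' hv'V₂ ⟨hwG, hwW₂⟩
    rw [Set.mem_add] at hwmem2
    obtain ⟨s', hs'G, qz, hqz, hwq⟩ := hwmem2
    rw [Set.mem_smul_set] at hqz
    obtain ⟨b', hb', rfl⟩ := hqz
    have hb'n : ‖b'‖ ≤ 1 := by rwa [mem_closedBall_zero_iff] at hb'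
    have hws' : dist w s' ≤ a*θ^(n+1) := by
      have h1 : dist w s' ≤ D*(M*σ) := by
        rw [dist_eq_norm]
        have hwms' : w - s' = (D*‖v - v'‖) • b' := by rw [← hwq]; abel
        rw [hwms', norm_smul, Real.norm_eq_abs, abs_of_nonneg (by positivity)]
        have hn : ‖v - v'‖ ≤ M*σ := by rw [← dist_eq_norm]; exact hvv'
        have g1 : ‖v - v'‖ * ‖b'‖ ≤ (M*σ) * 1 :=
          mul_le_mul hn hb'n (norm_nonneg b') (by positivity)
        have g2 := mul_le_mul_of_nonneg_left g1 hD
        linarith only [g2]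
      have h2 : D*(M*σ) ≤ a*θ^(n+1) := by
        have heq : D*(M*σ) = (M*D*(dist w s + η*θ^n))/C := by rw [hσdef]; ring
        rw [heq, div_le_iff₀ hC, hpow]
        have hMD : 0 ≤ M*D := by positivity
        have g0 : dist w s + η*θ^n ≤ (a+η)*θ^n := by
          have : η*θ^n ≤ η := by
            have := mul_le_mul_of_nonneg_left hθn1 hηpos.le
            linarith only [this]
          linarith only [hws, hηpos, hθn1, mul_le_mul_of_nonneg_left hθn1 hηpos.le]
        have g1 := mul_le_mul_of_nonneg_left g0 hMD
        have g2 := mul_le_mul_of_nonneg_right hθL hθn0.le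
        linarith only [g1, g2]
      linarith only [h1, h2]
    refine ⟨(u', v', s'), fun _ => ⟨⟨hv'F, hs'G, hws', hu'x, hv'y⟩, ?_, ?_⟩⟩
    · exact huu'.trans hσle
    · have g := mul_le_mul_of_nonneg_left hσle hM.le
      simp only
      linarith only [hvv', g]
  choose f hf using hch
  obtain ⟨seq, hseq0, hseqS⟩ :
      ∃ seq : ℕ → X × Y × Z, seq 0 = (x, y, z) ∧ ∀ n, seq (n+1) = f n (seq n) :=
    ⟨fun n => Nat.rec (x, y, z) f n, rfl, fun n => rfl⟩
  have hInv : ∀ n, (seq n).2.1 ∈ F (seq n).1 ∧ (seq n).2.2 ∈ G (seq n).1 (seq n).2.1 ∧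
      dist w (seq n).2.2 ≤ a*θ^n ∧ dist (seq n).1 x ≤ ρ'*(1-θ^n) ∧
      dist (seq n).2.1 y ≤ M*(ρ'*(1-θ^n)) := by
    intro n
    induction n with
    | zero =>
      rw [hseq0]
      refine ⟨hyF, hzG, ?_, ?_, ?_⟩
      · simpa using ha1.le
      · simp
      · simp
    | succ n ih =>
      rw [hseqS]
      exact (hf n (seq n) ih).1
  have hstepu : ∀ n, dist ((fun n => (seq n).1) n) ((fun n => (seq n).1) (n+1)) ≤
      (ρ'*(1-θ)) * θ^n := by
    intro n
    have h := (hf n (seq n) (hInv n)).2.1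
    simp only [hseqS]
    exact h
  have hstepv : ∀ n, dist ((fun n => (seq n).2.1) n) ((fun n => (seq n).2.1) (n+1)) ≤
      (M*(ρ'*(1-θ))) * θ^n := by
    intro n
    have h := (hf n (seq n) (hInv n)).2.2
    simp only [hseqS]
    have e : M*(ρ'*(1-θ)) * θ^n = M*(ρ'*(1-θ)*θ^n) := by ring
    rw [e]
    have e2 : M*(ρ'*(1-θ))*θ^n = M*(ρ'*(1-θ)*θ^n) := by ring
    linarith only [h, e2]
  obtain ⟨x', hx'⟩ := cauchySeq_tendsto_of_complete
    (cauchySeq_of_le_geometric θ (ρ'*(1-θ)) hθ1 hstepu)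
  obtain ⟨y', hy'⟩ := cauchySeq_tendsto_of_complete
    (cauchySeq_of_le_geometric θ (M*(ρ'*(1-θ))) hθ1 hstepv)
  have hzw : Filter.Tendsto (fun n => (seq n).2.2) Filter.atTop (nhds w) := by
    rw [tendsto_iff_dist_tendsto_zero]
    apply squeeze_zero (g := fun n => a*θ^n) (fun n => dist_nonneg)
      (fun n => by rw [dist_comm]; exact (hInv n).2.2.1)
    have h := (tendsto_pow_atTop_nhds_zero_of_lt_one hθ0.le hθ1).const_mul a
    simpa using h
  have hθne : (1:ℝ) - θ ≠ 0 := by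
    intro h; rw [sub_eq_zero] at h; exact absurd h.symm hθ1.ne
  have hx'x : dist x x' ≤ ρ' := by
    have h := dist_le_of_le_geometric_of_tendsto₀ θ (ρ'*(1-θ)) hθ1 hstepu hx'
    have e : (seq 0).1 = x := by rw [hseq0]
    rw [e] at h
    have e2 : ρ'*(1-θ)/(1-θ) = ρ' := by field_simp
    linarith only [h, e2]
  -- bounds for graph membership of the limits
  have hFgr : y' ∈ F x' := by
    have hmem : ∀ n, ((seq n).1, (seq n).2.1) ∈
        {q : X × Y | q.2 ∈ F q.1} ∩ Metric.closedBall (x₀, y₀) rF := by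
      intro n
      obtain ⟨h1, _, _, h4, h5⟩ := hInv n
      have hθn0 : (0:ℝ) ≤ θ^n := (pow_pos hθ0 n).le
      refine ⟨h1, ?_⟩
      rw [Metric.mem_closedBall, Prod.dist_eq]
      apply max_le
      · have htri := dist_triangle (seq n).1 x x₀
        have g : 0 ≤ ρ'*θ^n := mul_nonneg hρ'pos.le hθn0
        simp only
        linarith only [htri, h4, hx, g, hρ'ρ, hρε, h2ε, hδrF]
      · have htri := dist_triangle (seq n).2.1 y y₀
        have g : 0 ≤ M*(ρ'*θ^n) := mul_nonneg hM.le (mul_nonneg hρ'pos.le hθn0)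
        have hMρ' : M*ρ' < M*ε := mul_lt_mul_of_pos_left (by linarith only [hρ'ρ, hρε]) hM
        simp only
        linarith only [htri, h5, hy1, g, hMρ', hMεδ, hδrF]
    have htend : Filter.Tendsto (fun n => ((seq n).1, (seq n).2.1)) Filter.atTop
        (nhds (x', y')) := hx'.prodMk_nhds hy'
    exact (hclF.mem_of_tendsto htend (Filter.Eventually.of_forall hmem)).1
  have hGgr : w ∈ G x' y' := by
    have hmem : ∀ n, (((seq n).1, (seq n).2.1), (seq n).2.2) ∈
        {q : (X × Y) × Z | q.2 ∈ G q.1.1 q.1.2} ∩ Metric.closedBall ((x₀, y₀), z₀) rG := by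
      intro n
      obtain ⟨_, h2, h3, h4, h5⟩ := hInv n
      have hθn0 : (0:ℝ) ≤ θ^n := (pow_pos hθ0 n).le
      have hθn1 : θ^n ≤ 1 := pow_le_one₀ hθ0.le hθ1.le
      refine ⟨h2, ?_⟩
      rw [Metric.mem_closedBall, Prod.dist_eq]
      apply max_le
      · rw [Prod.dist_eq]
        apply max_le
        · have htri := dist_triangle (seq n).1 x x₀
          have g : 0 ≤ ρ'*θ^n := mul_nonneg hρ'pos.le hθn0
          simp only
          linarith only [htri, h4, hx, g, hρ'ρ, hρε, h2ε, hδrG]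
        · have htri := dist_triangle (seq n).2.1 y y₀
          have g : 0 ≤ M*(ρ'*θ^n) := mul_nonneg hM.le (mul_nonneg hρ'pos.le hθn0)
          have hMρ' : M*ρ' < M*ε := mul_lt_mul_of_pos_left (by linarith only [hρ'ρ, hρε]) hM
          simp only
          linarith only [htri, h5, hy1, g, hMρ', hMεδ, hδrG]
      · have htri := dist_triangle (seq n).2.2 w z₀
        have htri2 := dist_triangle w z z₀
        have hcm : dist (seq n).2.2 w = dist w (seq n).2.2 := dist_comm _ _
        have g := mul_le_mul_of_nonneg_left hθn1 hapos.le
        simp only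
        linarith only [htri, htri2, hcm, h3, g, haε, he₀ε, hz1, h2Cε, hδrG]
    have htend : Filter.Tendsto (fun n => (((seq n).1, (seq n).2.1), (seq n).2.2))
        Filter.atTop (nhds ((x', y'), w)) := (hx'.prodMk_nhds hy').prodMk_nhds hzw
    exact (hclG.mem_of_tendsto htend (Filter.Eventually.of_forall hmem)).1
  have hx'ball : x' ∈ ball x ρ := by
    rw [Metric.mem_ball, dist_comm]
    linarith only [hx'x, hρ'ρ]
  exact Set.mem_iUnion₂.2 ⟨x', hx'ball, Set.mem_iUnion₂.2 ⟨y', hFgr, hGgr⟩⟩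
end

section
/- Let X, Y be Banach spaces, F₁, F₂ : X ⇉ Y with ȳ₁ ∈ F₁(x̄), ȳ₂ ∈ F₂(x̄), Gr F₁ and Gr F₂ locally closed around (x̄,ȳ₁) and (x̄,ȳ₂) respectively, F₁ metrically regular around (x̄,ȳ₁) with constant l > 0, F₂ Lipschitz-like around (x̄,ȳ₂) with constant m > 0, and lm < 1. Then there exists ε > 0 such that for every ρ ∈ (0,ε) and every (x,y,z) with y ∈ F₁(x), z ∈ F₂(x), x ∈ B(x̄,ε), y ∈ B(ȳ₁,ε), z ∈ B(ȳ₂,ε), one has B(y − z, (l⁻¹ − m)ρ) ⊆ (F₁ − F₂)(B(x,ρ)). -/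
open Set Metric Pointwise Filter

/-- Generic recursive sequence construction. -/
lemma exists_seq_of_step {α : Type*} (P : ℕ → α → Prop) (Q : ℕ → α → α → Prop)
    (a₀ : α) (h0 : P 0 a₀)
    (hstep : ∀ n a, P n a → ∃ b, P (n + 1) b ∧ Q n a b) :
    ∃ f : ℕ → α, f 0 = a₀ ∧ (∀ n, P n (f n)) ∧ ∀ n, Q n (f n) (f (n + 1)) := by
  choose! g hg1 hg2 using hstep
  refine ⟨fun n => Nat.rec a₀ (fun n a => g n a) n, rfl, ?_, ?_⟩
  · intro n
    induction n with
    | zero => exact h0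
    | succ n ih => exact hg1 n _ ih
  · intro n
    have hP : ∀ k, P k (Nat.rec a₀ (fun n a => g n a) k) := by
      intro k
      induction k with
      | zero => exact h0
      | succ k ih => exact hg1 k _ ih
    exact hg2 n _ (hP n)

lemma aux_one_sub_pow_mul_le {θ a : ℝ} (h0 : 0 ≤ θ) (n : ℕ) (ha : 0 ≤ a) :
    (1 - θ ^ n) * a ≤ a := by nlinarith [pow_nonneg h0 n]

set_option maxHeartbeats 1000000 in
/-- Openness at linear rate `l⁻¹ − m` of the difference `F₁ − F₂` at points of its
graph with intermediate points near the reference points. -/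
theorem openness_of_difference
    {X Y : Type*} [NormedAddCommGroup X] [NormedSpace ℝ X] [CompleteSpace X]
    [NormedAddCommGroup Y] [NormedSpace ℝ Y] [CompleteSpace Y]
    (F₁ F₂ : X → Set Y) (x₀ : X) (y₁ y₂ : Y)
    (hy₁ : y₁ ∈ F₁ x₀) (hy₂ : y₂ ∈ F₂ x₀)
    (l m : ℝ) (hl : 0 < l) (hm : 0 < m) (hlm : l * m < 1)
    (hcl₁ : ∃ r > 0, IsClosed ({q : X × Y | q.2 ∈ F₁ q.1} ∩ Metric.closedBall (x₀, y₁) r))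
    (hcl₂ : ∃ r > 0, IsClosed ({q : X × Y | q.2 ∈ F₂ q.1} ∩ Metric.closedBall (x₀, y₂) r))
    -- F₁ is l-metrically regular around (x₀, y₁)
    (hreg : ∃ U ∈ nhds x₀, ∃ V ∈ nhds y₁, ∀ x ∈ U, ∀ y ∈ V,
      EMetric.infEdist x {x' | y ∈ F₁ x'} ≤ ENNReal.ofReal l * EMetric.infEdist y (F₁ x))
    -- F₂ is m-Lipschitz-like around (x₀, y₂)
    (hlip : ∃ U ∈ nhds x₀, ∃ V ∈ nhds y₂, ∀ x ∈ U, ∀ u ∈ U,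
      F₂ x ∩ V ⊆ F₂ u + (m * ‖x - u‖) • Metric.closedBall (0:Y) 1) :
    ∃ ε > 0, ∀ ρ ∈ Ioo (0:ℝ) ε, ∀ x ∈ ball x₀ ε, ∀ y ∈ ball y₁ ε, ∀ z ∈ ball y₂ ε,
      y ∈ F₁ x → z ∈ F₂ x →
        ball (y - z) ((l⁻¹ - m) * ρ) ⊆ ⋃ x' ∈ ball x ρ, (F₁ x' - F₂ x') := by
  obtain ⟨r₁, hr₁, hc₁⟩ := hcl₁
  obtain ⟨r₂, hr₂, hc₂⟩ := hcl₂
  obtain ⟨U, hU, V, hV, hreg'⟩ := hreg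
  obtain ⟨U', hU', V', hV', hlip'⟩ := hlip
  obtain ⟨δ₁, hδ₁, hδ₁U⟩ := Metric.mem_nhds_iff.mp hU
  obtain ⟨δ₂, hδ₂, hδ₂V⟩ := Metric.mem_nhds_iff.mp hV
  obtain ⟨δ₃, hδ₃, hδ₃U⟩ := Metric.mem_nhds_iff.mp hU'
  obtain ⟨δ₄, hδ₄, hδ₄V⟩ := Metric.mem_nhds_iff.mp hV'
  obtain ⟨q, hqdef⟩ : ∃ q : ℝ, q = l⁻¹ - m := ⟨_, rfl⟩
  have hq0 : 0 < q := by
    have h1 : l⁻¹ - m = (1 - l * m) / l := by field_simp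
    rw [hqdef, h1]
    exact div_pos (by linarith) hl
  obtain ⟨K, hKdef⟩ : ∃ K : ℝ, K = 2 + q + 2 * m := ⟨_, rfl⟩
  have hK2 : 2 ≤ K := by rw [hKdef]; linarith
  have hK0 : 0 < K := by linarith
  obtain ⟨δ, hδdef⟩ : ∃ δ : ℝ, δ = min (min δ₁ δ₂) (min (min δ₃ δ₄) (min r₁ r₂)) := ⟨_, rfl⟩
  have hδ0 : 0 < δ := by
    simp only [hδdef, lt_min_iff]
    exact ⟨⟨hδ₁, hδ₂⟩, ⟨hδ₃, hδ₄⟩, hr₁, hr₂⟩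
  obtain ⟨ε, hεdef⟩ : ∃ ε : ℝ, ε = δ / (2 * K) := ⟨_, rfl⟩
  have hε0 : 0 < ε := by rw [hεdef]; exact div_pos hδ0 (by linarith)
  have hKε : K * ε = δ / 2 := by rw [hεdef]; field_simp
  have hKδ₁ : K * ε < δ₁ := by
    rw [hKε]
    have : δ ≤ δ₁ := hδdef ▸ le_trans (min_le_left _ _) (min_le_left _ _)
    linarith
  have hKδ₂ : K * ε < δ₂ := by
    rw [hKε]
    have : δ ≤ δ₂ := hδdef ▸ le_trans (min_le_left _ _) (min_le_right _ _)
    linarith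
  have hKδ₃ : K * ε < δ₃ := by
    rw [hKε]
    have : δ ≤ δ₃ := hδdef ▸ le_trans (min_le_right _ _) (le_trans (min_le_left _ _) (min_le_left _ _))
    linarith
  have hKδ₄ : K * ε < δ₄ := by
    rw [hKε]
    have : δ ≤ δ₄ := hδdef ▸ le_trans (min_le_right _ _) (le_trans (min_le_left _ _) (min_le_right _ _))
    linarith
  have hKr₁ : K * ε ≤ r₁ := by
    rw [hKε]
    have : δ ≤ r₁ := hδdef ▸ le_trans (min_le_right _ _) (le_trans (min_le_right _ _) (min_le_left _ _))
    linarith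
  have hKr₂ : K * ε ≤ r₂ := by
    rw [hKε]
    have : δ ≤ r₂ := hδdef ▸ le_trans (min_le_right _ _) (le_trans (min_le_right _ _) (min_le_right _ _))
    linarith
  have h2ε : 2 * ε ≤ K * ε := mul_le_mul_of_nonneg_right hK2 hε0.le
  refine ⟨ε, hε0, ?_⟩
  rintro ρ ⟨hρ0, hρε⟩ x hx y hy z hz hyF₁ hzF₂ w hw
  rw [mem_ball, dist_eq_norm] at hx hy hz hw
  rw [← hqdef] at hw
  obtain ⟨t₁, ht₁def⟩ : ∃ t : ℝ, t = ‖w - (y - z)‖ := ⟨_, rfl⟩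
  rw [← ht₁def] at hw
  by_cases ht0 : t₁ = 0
  · -- trivial case: w = y - z
    have hwyz : w = y - z := by
      rw [ht₁def] at ht0
      exact sub_eq_zero.mp (norm_eq_zero.mp ht0)
    refine mem_iUnion₂.mpr ⟨x, mem_ball_self hρ0, ?_⟩
    rw [hwyz]
    exact Set.sub_mem_sub hyF₁ hzF₂
  · have ht₁ : 0 < t₁ := by
      rw [ht₁def] at ht0 ⊢
      exact lt_of_le_of_ne (norm_nonneg _) (Ne.symm ht0)
    -- auxiliary constants
    have htq : t₁ / ρ < q := (div_lt_iff₀ hρ0).mpr hw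
    obtain ⟨c, hcdef⟩ : ∃ c : ℝ, c = (t₁ / ρ + q) / 2 := ⟨_, rfl⟩
    have htρ0 : 0 < t₁ / ρ := div_pos ht₁ hρ0
    have hc0 : 0 < c := by rw [hcdef]; linarith
    have hclt : t₁ / ρ < c := by rw [hcdef]; linarith
    have hcq : c < q := by rw [hcdef]; linarith
    have hqc : q / 2 ≤ c := by rw [hcdef]; linarith
    have ht₁c : t₁ < c * ρ := by
      have := (div_lt_iff₀ hρ0).mp hclt
      linarith
    have hmc : 0 < m + c := by linarith
    obtain ⟨l', hl'def⟩ : ∃ l' : ℝ, l' = (m + c)⁻¹ := ⟨_, rfl⟩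
    have hl'0 : 0 < l' := by rw [hl'def]; exact inv_pos.mpr hmc
    have hll' : l < l' := by
      have h1 : m + c < l⁻¹ := by rw [hqdef] at hcq; linarith
      have h2 := inv_strictAnti₀ hmc h1
      rw [hl'def]
      rwa [inv_inv] at h2
    obtain ⟨θ, hθdef⟩ : ∃ θ : ℝ, θ = m / (m + c) := ⟨_, rfl⟩
    have hθ0 : 0 < θ := by rw [hθdef]; exact div_pos hm hmc
    have hθ1 : θ < 1 := by rw [hθdef]; exact (div_lt_one hmc).mpr (by linarith)
    have hml' : m * l' = θ := by rw [hθdef, hl'def, div_eq_mul_inv]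
    obtain ⟨B, hBdef⟩ : ∃ B : ℝ, B = t₁ / c := ⟨_, rfl⟩
    have hB0 : 0 ≤ B := by rw [hBdef]; exact div_nonneg ht₁.le hc0.le
    have hBρ : B < ρ := by
      rw [hBdef, div_lt_iff₀ hc0]
      linarith [ht₁c]
    obtain ⟨C₂, hC₂def⟩ : ∃ C₂ : ℝ, C₂ = m * t₁ / c := ⟨_, rfl⟩
    have hC₂0 : 0 ≤ C₂ := by rw [hC₂def]; exact div_nonneg (by positivity) hc0.le
    have hid1 : l' * t₁ = (1 - θ) * B := by
      rw [hl'def, hθdef, hBdef]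
      field_simp
      ring
    have hid2 : t₁ * θ = (1 - θ) * C₂ := by
      rw [hθdef, hC₂def]
      field_simp
      ring
    have ht₁qε : t₁ < q * ε := lt_trans hw (mul_lt_mul_of_pos_left hρε hq0)
    have hC₂ε : C₂ ≤ 2 * m * ε := by
      rw [hC₂def, div_le_iff₀ hc0]
      have a1 : m * t₁ ≤ m * (q * ε) := mul_le_mul_of_nonneg_left ht₁qε.le hm.le
      have a2 : m * (q * ε) ≤ m * ((2 * c) * ε) :=
        mul_le_mul_of_nonneg_left
          (mul_le_mul_of_nonneg_right (by linarith [hqc] : q ≤ 2 * c) hε0.le) hm.le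
      linarith
    -- the recursive step
    have key : ∀ (n : ℕ) (p : X × Y × Y),
        (p.2.1 ∈ F₁ p.1 ∧ p.2.2 ∈ F₂ p.1 ∧ ‖w + p.2.2 - p.2.1‖ ≤ θ ^ n * t₁ ∧
          ‖p.1 - x‖ ≤ (1 - θ ^ n) * B ∧ ‖p.2.2 - z‖ ≤ (1 - θ ^ n) * C₂) →
        ∃ p' : X × Y × Y,
          (p'.2.1 ∈ F₁ p'.1 ∧ p'.2.2 ∈ F₂ p'.1 ∧ ‖w + p'.2.2 - p'.2.1‖ ≤ θ ^ (n+1) * t₁ ∧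
            ‖p'.1 - x‖ ≤ (1 - θ ^ (n+1)) * B ∧ ‖p'.2.2 - z‖ ≤ (1 - θ ^ (n+1)) * C₂) ∧
          (‖p'.1 - p.1‖ ≤ (l' * t₁) * θ ^ n ∧ ‖p'.2.2 - p.2.2‖ ≤ (t₁ * θ) * θ ^ n ∧
            p'.2.1 = w + p.2.2) := by
      rintro n ⟨xn, yn, zn⟩ ⟨hA, hB', hC, hD, hE⟩
      simp only at hA hB' hC hD hE
      have hθn0 : 0 ≤ θ ^ n := pow_nonneg hθ0.le n
      have hθn1 : θ ^ n ≤ 1 := pow_le_one₀ hθ0.le hθ1.le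
      have hxnx : ‖xn - x‖ ≤ B := le_trans hD (aux_one_sub_pow_mul_le hθ0.le n hB0)
      have hznz : ‖zn - z‖ ≤ C₂ := le_trans hE (aux_one_sub_pow_mul_le hθ0.le n hC₂0)
      have hxnx₀ : ‖xn - x₀‖ < 2 * ε := by
        have h1 : xn - x₀ = (xn - x) + (x - x₀) := (sub_add_sub_cancel _ _ _).symm
        calc ‖xn - x₀‖ = ‖(xn - x) + (x - x₀)‖ := by rw [h1]
          _ ≤ ‖xn - x‖ + ‖x - x₀‖ := norm_add_le _ _
          _ < 2 * ε := by linarith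
      have hxnU : xn ∈ U := hδ₁U (by rw [mem_ball, dist_eq_norm]; linarith)
      have hznz' : ‖zn - y₂‖ < (1 + 2 * m) * ε := by
        have h1 : zn - y₂ = (zn - z) + (z - y₂) := (sub_add_sub_cancel _ _ _).symm
        calc ‖zn - y₂‖ = ‖(zn - z) + (z - y₂)‖ := by rw [h1]
          _ ≤ ‖zn - z‖ + ‖z - y₂‖ := norm_add_le _ _
          _ < (1 + 2 * m) * ε := by linarith
      have hznV' : zn ∈ V' := by
        refine hδ₄V ?_
        rw [mem_ball, dist_eq_norm]
        have h6 : (1 + 2 * m) * ε ≤ K * ε :=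
          mul_le_mul_of_nonneg_right (by rw [hKdef]; linarith) hε0.le
        linarith
      have hwznV : w + zn ∈ V := by
        refine hδ₂V ?_
        rw [mem_ball, dist_eq_norm]
        have h1 : w + zn - y₁ = (w - (y - z)) + (y - y₁) + (zn - z) := by abel
        have h2 : ‖w + zn - y₁‖ ≤ ‖w - (y - z)‖ + ‖y - y₁‖ + ‖zn - z‖ := by
          rw [h1]
          exact le_trans (norm_add_le _ _) (by linarith [norm_add_le (w - (y - z)) (y - y₁)])
        have h3 : ‖w + zn - y₁‖ < q * ε + ε + 2 * m * ε := by
          rw [← ht₁def] at h2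
          linarith
        have h4 : q * ε + ε + 2 * m * ε = (K - 1) * ε := by rw [hKdef]; ring
        have h5 : (K - 1) * ε < K * ε := mul_lt_mul_of_pos_right (by linarith) hε0
        linarith
      -- apply metric regularity
      have hreg2 : EMetric.infEdist (w + zn) (F₁ xn) ≤ ENNReal.ofReal (θ ^ n * t₁) := by
        refine le_trans (EMetric.infEdist_le_edist_of_mem hA) ?_
        rw [edist_dist, dist_eq_norm]
        exact ENNReal.ofReal_le_ofReal hC
      have hreg3 : EMetric.infEdist xn {x' | w + zn ∈ F₁ x'} <
          ENNReal.ofReal ((l' * t₁) * θ ^ n) := by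
        have h5 := hreg' xn hxnU (w + zn) hwznV
        have h6 : ENNReal.ofReal l * EMetric.infEdist (w + zn) (F₁ xn) ≤
            ENNReal.ofReal (l * (θ ^ n * t₁)) := by
          rw [ENNReal.ofReal_mul hl.le]
          exact mul_le_mul_right hreg2 _
        refine lt_of_le_of_lt (h5.trans h6) ?_
        rw [ENNReal.ofReal_lt_ofReal_iff (by positivity)]
        have hp : 0 < θ ^ n * t₁ := by positivity
        have h7 := mul_lt_mul_of_pos_right hll' hp
        linarith [h7]
      obtain ⟨xn1, hxn1mem, hed⟩ := EMetric.infEdist_lt_iff.mp hreg3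
      have hxn1F : w + zn ∈ F₁ xn1 := hxn1mem
      have hstep1 : ‖xn1 - xn‖ ≤ (l' * t₁) * θ ^ n := by
        have := edist_lt_ofReal.mp hed
        rw [dist_eq_norm, norm_sub_rev] at this
        exact this.le
      -- new x-bound
      have hD' : ‖xn1 - x‖ ≤ (1 - θ ^ (n+1)) * B := by
        have h1 : xn1 - x = (xn1 - xn) + (xn - x) := (sub_add_sub_cancel _ _ _).symm
        calc ‖xn1 - x‖ = ‖(xn1 - xn) + (xn - x)‖ := by rw [h1]
          _ ≤ ‖xn1 - xn‖ + ‖xn - x‖ := norm_add_le _ _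
          _ ≤ (l' * t₁) * θ ^ n + (1 - θ ^ n) * B := by linarith
          _ = (1 - θ ^ (n+1)) * B := by rw [hid1, pow_succ]; ring
      have hxn1x : ‖xn1 - x‖ ≤ B := by
        exact le_trans hD' (aux_one_sub_pow_mul_le hθ0.le (n+1) hB0)
      have hxn1U' : xn1 ∈ U' := by
        refine hδ₃U ?_
        rw [mem_ball, dist_eq_norm]
        have h1 : xn1 - x₀ = (xn1 - x) + (x - x₀) := (sub_add_sub_cancel _ _ _).symm
        have h2 : ‖xn1 - x₀‖ ≤ ‖xn1 - x‖ + ‖x - x₀‖ := by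
          rw [h1]; exact norm_add_le _ _
        linarith
      have hxnU' : xn ∈ U' := by
        refine hδ₃U ?_
        rw [mem_ball, dist_eq_norm]
        linarith
      -- apply Lipschitz-likeness
      have hsub := hlip' xn hxnU' xn1 hxn1U' ⟨hB', hznV'⟩
      rw [Set.mem_add] at hsub
      obtain ⟨u, hu, b, hb, hub⟩ := hsub
      rw [Set.mem_smul_set] at hb
      obtain ⟨v, hv, hbv⟩ := hb
      have hv1 : ‖v‖ ≤ 1 := by
        rw [mem_closedBall_iff_norm, sub_zero] at hv
        exact hv
      have hbnorm : ‖b‖ ≤ m * ‖xn - xn1‖ := by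
        rw [← hbv, norm_smul]
        have h1 : |m * ‖xn - xn1‖| = m * ‖xn - xn1‖ := abs_of_nonneg (by positivity)
        rw [Real.norm_eq_abs, h1]
        have h8 := mul_le_mul_of_nonneg_left hv1 (mul_nonneg hm.le (norm_nonneg (xn - xn1)))
        linarith
      have hzstep : ‖u - zn‖ ≤ (t₁ * θ) * θ ^ n := by
        have h1 : u - zn = -b := by rw [← hub]; abel
        rw [h1, norm_neg]
        calc ‖b‖ ≤ m * ‖xn - xn1‖ := hbnorm
          _ = m * ‖xn1 - xn‖ := by rw [norm_sub_rev]
          _ ≤ m * ((l' * t₁) * θ ^ n) := by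
            have h9 : ‖xn1 - xn‖ ≤ (l' * t₁) * θ ^ n := hstep1
            exact mul_le_mul_of_nonneg_left h9 hm.le
          _ = (t₁ * θ) * θ ^ n := by rw [← hml']; ring
      refine ⟨(xn1, w + zn, u), ⟨hxn1F, hu, ?_, hD', ?_⟩, hstep1, hzstep, rfl⟩
      · have h1 : w + u - (w + zn) = u - zn := by abel
        simp only
        rw [h1]
        calc ‖u - zn‖ ≤ (t₁ * θ) * θ ^ n := hzstep
          _ = θ ^ (n+1) * t₁ := by rw [pow_succ]; ring
      · simp only
        have h1 : u - z = (u - zn) + (zn - z) := (sub_add_sub_cancel _ _ _).symm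
        calc ‖u - z‖ = ‖(u - zn) + (zn - z)‖ := by rw [h1]
          _ ≤ ‖u - zn‖ + ‖zn - z‖ := norm_add_le _ _
          _ ≤ (t₁ * θ) * θ ^ n + (1 - θ ^ n) * C₂ := by linarith
          _ = (1 - θ ^ (n+1)) * C₂ := by rw [hid2, pow_succ]; ring
    -- initial state
    have h0 : ((x, y, z) : X × Y × Y).2.1 ∈ F₁ (x, y, z).1 ∧
        ((x, y, z) : X × Y × Y).2.2 ∈ F₂ (x, y, z).1 ∧
        ‖w + ((x, y, z) : X × Y × Y).2.2 - (x, y, z).2.1‖ ≤ θ ^ 0 * t₁ ∧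
        ‖((x, y, z) : X × Y × Y).1 - x‖ ≤ (1 - θ ^ 0) * B ∧
        ‖((x, y, z) : X × Y × Y).2.2 - z‖ ≤ (1 - θ ^ 0) * C₂ := by
      refine ⟨hyF₁, hzF₂, ?_, by simp, by simp⟩
      simp only [pow_zero, one_mul]
      have h1 : w + z - y = w - (y - z) := by abel
      rw [h1, ht₁def]
    obtain ⟨f, hf0, hP, hQ⟩ := exists_seq_of_step
      (fun n p => p.2.1 ∈ F₁ p.1 ∧ p.2.2 ∈ F₂ p.1 ∧ ‖w + p.2.2 - p.2.1‖ ≤ θ ^ n * t₁ ∧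
        ‖p.1 - x‖ ≤ (1 - θ ^ n) * B ∧ ‖p.2.2 - z‖ ≤ (1 - θ ^ n) * C₂)
      (fun n p p' => ‖p'.1 - p.1‖ ≤ (l' * t₁) * θ ^ n ∧ ‖p'.2.2 - p.2.2‖ ≤ (t₁ * θ) * θ ^ n ∧
        p'.2.1 = w + p.2.2)
      (x, y, z) h0 key
    obtain ⟨xs, hxsdef⟩ : ∃ g : ℕ → X, g = fun n => (f n).1 := ⟨_, rfl⟩
    obtain ⟨zs, hzsdef⟩ : ∃ g : ℕ → Y, g = fun n => (f n).2.2 := ⟨_, rfl⟩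
    have hxseq : ∀ n, xs n = (f n).1 := fun n => by rw [hxsdef]
    have hzseq : ∀ n, zs n = (f n).2.2 := fun n => by rw [hzsdef]
    have hθn0 : ∀ n : ℕ, (0:ℝ) ≤ θ ^ n := fun n => pow_nonneg hθ0.le n
    have hθn1 : ∀ n : ℕ, θ ^ n ≤ 1 := fun n => pow_le_one₀ hθ0.le hθ1.le
    have hxsB : ∀ n, ‖xs n - x‖ ≤ B := fun n => by
      rw [hxseq]
      exact le_trans (hP n).2.2.2.1 (aux_one_sub_pow_mul_le hθ0.le n hB0)
    have hzsC : ∀ n, ‖zs n - z‖ ≤ C₂ := fun n => by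
      rw [hzseq]
      exact le_trans (hP n).2.2.2.2 (aux_one_sub_pow_mul_le hθ0.le n hC₂0)
    -- Cauchy sequences and limits
    have hcx : CauchySeq xs := by
      refine cauchySeq_of_le_geometric θ (l' * t₁) hθ1 (fun n => ?_)
      rw [hxseq, hxseq, dist_eq_norm, norm_sub_rev]
      exact (hQ n).1
    have hcz : CauchySeq zs := by
      refine cauchySeq_of_le_geometric θ (t₁ * θ) hθ1 (fun n => ?_)
      rw [hzseq, hzseq, dist_eq_norm, norm_sub_rev]
      exact (hQ n).2.1
    obtain ⟨x', hx'⟩ := cauchySeq_tendsto_of_complete hcx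
    obtain ⟨z', hz'⟩ := cauchySeq_tendsto_of_complete hcz
    have hx'B : ‖x' - x‖ ≤ B := by
      have h1 : Tendsto (fun n => ‖xs n - x‖) atTop (nhds ‖x' - x‖) :=
        ((hx'.sub_const x).norm)
      exact le_of_tendsto' h1 hxsB
    -- graph memberships of the sequences
    have hmem₂ : ∀ n, (xs n, zs n) ∈ {p : X × Y | p.2 ∈ F₂ p.1} ∩ closedBall (x₀, y₂) r₂ := by
      intro n
      refine ⟨by simpa [hxseq, hzseq] using (hP n).2.1, ?_⟩
      rw [mem_closedBall, Prod.dist_eq]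
      refine max_le ?_ ?_
      · rw [dist_eq_norm]
        have h1 : xs n - x₀ = (xs n - x) + (x - x₀) := (sub_add_sub_cancel _ _ _).symm
        have h2 : ‖xs n - x₀‖ ≤ ‖xs n - x‖ + ‖x - x₀‖ := by rw [h1]; exact norm_add_le _ _
        linarith [hxsB n]
      · rw [dist_eq_norm]
        have h1 : zs n - y₂ = (zs n - z) + (z - y₂) := (sub_add_sub_cancel _ _ _).symm
        have h2 : ‖zs n - y₂‖ ≤ ‖zs n - z‖ + ‖z - y₂‖ := by rw [h1]; exact norm_add_le _ _
        have h3 : (1 + 2 * m) * ε ≤ K * ε :=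
          mul_le_mul_of_nonneg_right (by rw [hKdef]; linarith) hε0.le
        linarith [hzsC n]
    have hmem₁ : ∀ n, (xs (n+1), w + zs n) ∈
        {p : X × Y | p.2 ∈ F₁ p.1} ∩ closedBall (x₀, y₁) r₁ := by
      intro n
      constructor
      · have h1 := (hP (n+1)).1
        have h2 := (hQ n).2.2
        rw [h2] at h1
        simpa [hxseq, hzseq] using h1
      · rw [mem_closedBall, Prod.dist_eq]
        refine max_le ?_ ?_
        · rw [dist_eq_norm]
          have h1 : xs (n+1) - x₀ = (xs (n+1) - x) + (x - x₀) := (sub_add_sub_cancel _ _ _).symm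
          have h2 : ‖xs (n+1) - x₀‖ ≤ ‖xs (n+1) - x‖ + ‖x - x₀‖ := by
            rw [h1]; exact norm_add_le _ _
          linarith [hxsB (n+1)]
        · rw [dist_eq_norm]
          have h1 : w + zs n - y₁ = (w - (y - z)) + (y - y₁) + (zs n - z) := by abel
          have h2 : ‖w + zs n - y₁‖ ≤ ‖w - (y - z)‖ + ‖y - y₁‖ + ‖zs n - z‖ := by
            rw [h1]
            exact le_trans (norm_add_le _ _) (by linarith [norm_add_le (w - (y - z)) (y - y₁)])
          rw [← ht₁def] at h2
          have h3 : q * ε + ε + 2 * m * ε = (K - 1) * ε := by rw [hKdef]; ring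
          have h5 : (K - 1) * ε ≤ K * ε := mul_le_mul_of_nonneg_right (by linarith) hε0.le
          linarith [hzsC n]
    -- pass to the limit
    have hz'F₂ : z' ∈ F₂ x' := by
      have hlim : Tendsto (fun n => ((xs n, zs n) : X × Y)) atTop (nhds (x', z')) :=
        hx'.prodMk_nhds hz'
      have := hc₂.mem_of_tendsto hlim (Filter.Eventually.of_forall hmem₂)
      exact this.1
    have hwz'F₁ : w + z' ∈ F₁ x' := by
      have hlimx : Tendsto (fun n => xs (n+1)) atTop (nhds x') :=
        hx'.comp (tendsto_add_atTop_nat 1)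
      have hlimz : Tendsto (fun n => w + zs n) atTop (nhds (w + z')) :=
        tendsto_const_nhds.add hz'
      have hlim : Tendsto (fun n => ((xs (n+1), w + zs n) : X × Y)) atTop
          (nhds (x', w + z')) := hlimx.prodMk_nhds hlimz
      have := hc₁.mem_of_tendsto hlim (Filter.Eventually.of_forall hmem₁)
      exact this.1
    refine mem_iUnion₂.mpr ⟨x', ?_, ?_⟩
    · rw [mem_ball, dist_eq_norm]
      linarith
    · have := Set.sub_mem_sub hwz'F₁ hz'F₂
      rwa [add_sub_cancel_right] at this
end
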